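/- arXiv:2305.19301 — 12 statements merged into one kernel-verified Lean document; each statement's English description precedes it below -/
import Mathlib

section
/- Let (Ω, F, P) be a probability space, G ⊆ F a sub-σ-algebra, and X : Ω → ℝ^d a square-integrable random vector with MMSE reconstruction X̃ := E[X | G]. Then for every G-measurable square-integrable random vector X̂ : Ω → ℝ^d whose law equals the law of X (the zero framewise-marginal perception condition P∘X̂⁻¹ = P∘X⁻¹), one has E‖X − X̂‖² ≥ E‖X − X̃‖² + W₂²(law of X̃, law of X). -/
open MeasureTheory ProbabilityTheory

/-- Squared Wasserstein-2 distance between two measures, as the infimum of the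
expected squared distance over all couplings. -/
noncomputable def W2sq {E : Type*} [NormedAddCommGroup E] [MeasurableSpace E]
    (μ ν : Measure E) : ℝ :=
  sInf { c : ℝ | ∃ π : Measure (E × E), IsProbabilityMeasure π ∧
    π.map Prod.fst = μ ∧ π.map Prod.snd = ν ∧ c = ∫ p, ‖p.1 - p.2‖ ^ 2 ∂π }

section aux

variable {Ω : Type*} {G F : MeasurableSpace Ω} {P : Measure Ω} {d : ℕ}

local notation "E" => EuclideanSpace ℝ (Fin d)

lemma norm_sq_L2 [IsProbabilityMeasure P] (h : Lp (EuclideanSpace ℝ (Fin d)) 2 P) :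
    ‖h‖ ^ 2 = ∫ ω, ‖h ω‖ ^ 2 ∂P := by
  rw [← real_inner_self_eq_norm_sq, MeasureTheory.L2.inner_def]
  exact integral_congr_ae (Filter.Eventually.of_forall fun ω => real_inner_self_eq_norm_sq _)

end aux

/-- For a fixed encoder (sub-σ-algebra `G`) with MMSE reconstruction `X̃ = E[X|G]`,
any `G`-measurable square-integrable reconstruction `X̂` with the same law as the source `X`
(zero framewise-marginal perception loss) has distortion at least
`E‖X − X̃‖² + W₂²(law X̃, law X)`. -/
theorem statement0 {Ω : Type*} {G F : MeasurableSpace Ω} (hG : G ≤ F)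
    (P : Measure Ω) [IsProbabilityMeasure P] {d : ℕ}
    (X : Ω → EuclideanSpace ℝ (Fin d)) (hX : MemLp X 2 P)
    (Xhat : Ω → EuclideanSpace ℝ (Fin d))
    (hXhat_meas : Measurable[G] Xhat) (hXhat : MemLp Xhat 2 P)
    (hlaw : P.map Xhat = P.map X) :
    ∫ ω, ‖X ω - Xhat ω‖ ^ 2 ∂P ≥
      (∫ ω, ‖X ω - (P[X|G]) ω‖ ^ 2 ∂P) + W2sq (P.map (P[X|G])) (P.map X) := by
  set f : Lp (EuclideanSpace ℝ (Fin d)) 2 P := hX.toLp X with hf_def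
  set g : Lp (EuclideanSpace ℝ (Fin d)) 2 P := hXhat.toLp Xhat with hg_def
  set ft : Lp (EuclideanSpace ℝ (Fin d)) 2 P := (condExpL2 (EuclideanSpace ℝ (Fin d)) ℝ hG f : Lp (EuclideanSpace ℝ (Fin d)) 2 P) with hft_def
  -- condexp equals condexpL2
  have hXt_eq : (P[X|G]) =ᵐ[P] ft := by
    refine (ae_eq_condExp_of_forall_setIntegral_eq hG (hX.integrable one_le_two)
      (fun s _ _ => ((Lp.memLp ft).integrable one_le_two).integrableOn)
      (fun s hs hμs => ?_) ?_).symm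
    · rw [integral_condExpL2_eq hG f hs hμs.ne]
      exact setIntegral_congr_ae (hG s hs) ((hX.coeFn_toLp).mono fun x hx _ => hx)
    · exact aestronglyMeasurable_condExpL2 hG f
  -- g is G-measurable a.e.
  have hg_meas : AEStronglyMeasurable[G] (g : Ω → (EuclideanSpace ℝ (Fin d))) P :=
    AEStronglyMeasurable.congr
      ((hXhat_meas.stronglyMeasurable).aestronglyMeasurable) (hXhat.coeFn_toLp).symm
  -- cross term zero
  have hw : AEStronglyMeasurable[G] ((ft - g : Lp (EuclideanSpace ℝ (Fin d)) 2 P) : Ω → (EuclideanSpace ℝ (Fin d))) P := by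
    refine AEStronglyMeasurable.congr ?_ (Lp.coeFn_sub ft g).symm
    exact AEStronglyMeasurable.sub (aestronglyMeasurable_condExpL2 hG f) hg_meas
  have hcross : (inner ℝ (f - ft) (ft - g) : ℝ) = 0 := by
    have h1 : (inner ℝ ft (ft - g) : ℝ) = inner ℝ f (ft - g) :=
      inner_condExpL2_eq_inner_fun hG f (ft - g) hw
    rw [inner_sub_left, h1, sub_self]
  -- Pythagoras
  have hpyth : ‖f - g‖ ^ 2 = ‖f - ft‖ ^ 2 + ‖ft - g‖ ^ 2 := by
    have hdecomp : f - g = (f - ft) + (ft - g) := by abel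
    rw [hdecomp, norm_add_sq_real, hcross]
    ring
  -- integral identities
  have hI1 : ∫ ω, ‖X ω - Xhat ω‖ ^ 2 ∂P = ‖f - g‖ ^ 2 := by
    rw [norm_sq_L2]
    refine integral_congr_ae ?_
    filter_upwards [hX.coeFn_toLp, hXhat.coeFn_toLp, Lp.coeFn_sub f g] with ω h1 h2 h3
    rw [h3, Pi.sub_apply, h1, h2]
  have hI2 : ∫ ω, ‖X ω - (P[X|G]) ω‖ ^ 2 ∂P = ‖f - ft‖ ^ 2 := by
    rw [norm_sq_L2]
    refine integral_congr_ae ?_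
    filter_upwards [hX.coeFn_toLp, hXt_eq, Lp.coeFn_sub f ft] with ω h1 h2 h3
    rw [h3, Pi.sub_apply, h1, h2]
  have hI3 : ∫ ω, ‖(P[X|G]) ω - Xhat ω‖ ^ 2 ∂P = ‖ft - g‖ ^ 2 := by
    rw [norm_sq_L2]
    refine integral_congr_ae ?_
    filter_upwards [hXhat.coeFn_toLp, hXt_eq, Lp.coeFn_sub ft g] with ω h1 h2 h3
    rw [h3, Pi.sub_apply, h1, h2]
  -- W2 bound
  have hXt_m : Measurable[F] (P[X|G]) :=
    (stronglyMeasurable_condExp.measurable).mono hG le_rfl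
  have hXhat_m : Measurable[F] Xhat := hXhat_meas.mono hG le_rfl
  have hpair : Measurable fun ω => ((P[X|G]) ω, Xhat ω) := hXt_m.prodMk hXhat_m
  have hW2 : W2sq (P.map (P[X|G])) (P.map X) ≤ ∫ ω, ‖(P[X|G]) ω - Xhat ω‖ ^ 2 ∂P := by
    apply csInf_le
    · refine ⟨0, fun c hc => ?_⟩
      obtain ⟨π, _, _, _, rfl⟩ := hc
      exact integral_nonneg fun p => by positivity
    · refine ⟨P.map (fun ω => ((P[X|G]) ω, Xhat ω)), Measure.isProbabilityMeasure_map hpair.aemeasurable,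
        ?_, ?_, ?_⟩
      · rw [Measure.map_map measurable_fst hpair]; rfl
      · rw [Measure.map_map measurable_snd hpair]; exact hlaw
      · rw [integral_map hpair.aemeasurable
          (Continuous.aestronglyMeasurable (by fun_prop))]
  rw [hI1, hI2, hpyth]
  have := hI3 ▸ hW2
  linarith
end

section
/- Let (Ω, F, P) be a probability space, G ⊆ F a sub-σ-algebra, and X : Ω → ℝ^d a square-integrable random vector with MMSE reconstruction X̃ := E[X | G]. Then for every δ > 0 there exists a Markov kernel κ from ℝ^d to ℝ^d such that (i) (P∘X̃⁻¹).bind κ = P∘X⁻¹ (so a reconstruction drawn as X̂ ~ κ(X̃) has exactly the law of X, i.e. zero framewise-marginal perception loss), and (ii) ∫_Ω ∫_{ℝ^d} ‖X(ω) − y‖² κ(X̃(ω))(dy) P(dω) ≤ E‖X − X̃‖² + W₂²(law of X̃, law of X) + δ. -/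
open MeasureTheory ProbabilityTheory

/-- Abbreviation used in the proof below. -/
abbrev Euc (d : ℕ) := EuclideanSpace ℝ (Fin d)

section Aux

variable {Ω : Type*} {G F : MeasurableSpace Ω}

/-- The conditional expectation of an `L²` real function is in `L²`. -/
lemma condexp_memLp_two (hG : G ≤ F) (P : Measure Ω) [IsProbabilityMeasure P]
    {f : Ω → ℝ} (hf : MemLp f 2 P) : MemLp (P[f|G]) 2 P := by
  haveI : SigmaFinite (P.trim hG) := inferInstance
  set fL : Lp ℝ 2 P := hf.toLp f with hfL
  have hae : (((condExpL2 ℝ ℝ hG) fL : Lp ℝ 2 P) : Ω → ℝ) =ᵐ[P] P[f|G] := by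
    refine ae_eq_condExp_of_forall_setIntegral_eq hG (hf.integrable one_le_two) ?_ ?_ ?_
    · intro s _ _
      exact ((Lp.memLp _).integrable one_le_two).integrableOn
    · intro s hs hμs
      rw [integral_condExpL2_eq_of_fin_meas_real fL hs hμs.ne]
      exact setIntegral_congr_ae (hG s hs) ((hf.coeFn_toLp).mono fun x hx _ => hx)
    · exact lpMeas.aestronglyMeasurable _
  exact (Lp.memLp _).ae_eq hae

/-- Conditional expectation commutes with coordinates of a Euclidean-space-valued function. -/
lemma condexp_euclid_coord (hG : G ≤ F) (P : Measure Ω) [IsProbabilityMeasure P] {d : ℕ}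
    {X : Ω → EuclideanSpace ℝ (Fin d)} (hX : Integrable X P) (i : Fin d) :
    (fun ω => (P[X|G]) ω i) =ᵐ[P] P[fun ω => X ω i|G] := by
  haveI : SigmaFinite (P.trim hG) := inferInstance
  refine ae_eq_condExp_of_forall_setIntegral_eq hG
    ((EuclideanSpace.proj i : EuclideanSpace ℝ (Fin d) →L[ℝ] ℝ).integrable_comp hX)
    (fun s _ _ => ((EuclideanSpace.proj i :
      EuclideanSpace ℝ (Fin d) →L[ℝ] ℝ).integrable_comp integrable_condExp).integrableOn)
    (fun s hs hμs => ?_) ?_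
  · calc ∫ ω in s, (P[X|G]) ω i ∂P
        = ∫ ω in s, (EuclideanSpace.proj i : EuclideanSpace ℝ (Fin d) →L[ℝ] ℝ)
            ((P[X|G]) ω) ∂P := rfl
      _ = (EuclideanSpace.proj i : EuclideanSpace ℝ (Fin d) →L[ℝ] ℝ)
            (∫ ω in s, (P[X|G]) ω ∂P) :=
          ContinuousLinearMap.integral_comp_comm _ integrable_condExp.integrableOn
      _ = (EuclideanSpace.proj i : EuclideanSpace ℝ (Fin d) →L[ℝ] ℝ)
            (∫ ω in s, X ω ∂P) := by rw [setIntegral_condExp hG hX hs]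
      _ = ∫ ω in s, (EuclideanSpace.proj i : EuclideanSpace ℝ (Fin d) →L[ℝ] ℝ) (X ω) ∂P :=
          (ContinuousLinearMap.integral_comp_comm _ hX.integrableOn).symm
      _ = ∫ ω in s, X ω i ∂P := rfl
  · exact ⟨fun ω => (EuclideanSpace.proj i : EuclideanSpace ℝ (Fin d) →L[ℝ] ℝ) ((P[X|G]) ω),
      (EuclideanSpace.proj i :
        EuclideanSpace ℝ (Fin d) →L[ℝ] ℝ).continuous.comp_stronglyMeasurable
        stronglyMeasurable_condExp, Filter.EventuallyEq.rfl⟩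

/-- coordinate bound -/
lemma euclid_abs_coord_le {d : ℕ} (x : EuclideanSpace ℝ (Fin d)) (i : Fin d) : |x i| ≤ ‖x‖ := by
  have h1 : (x i) ^ 2 ≤ ‖x‖ ^ 2 := by
    rw [PiLp.norm_sq_eq_of_L2]
    simpa [Real.norm_eq_abs, sq_abs] using
      Finset.single_le_sum (f := fun j => (x j) ^ 2) (fun j _ => sq_nonneg _) (Finset.mem_univ i)
  calc |x i| = Real.sqrt ((x i) ^ 2) := (Real.sqrt_sq_eq_abs _).symm
    _ ≤ Real.sqrt (‖x‖ ^ 2) := Real.sqrt_le_sqrt h1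
    _ = ‖x‖ := Real.sqrt_sq (norm_nonneg _)

/-- Jensen: the square of the integral is at most the integral of the square. -/
lemma sq_integral_le_integral_sq {α : Type*} [MeasurableSpace α] (m : Measure α)
    [IsProbabilityMeasure m] {f : α → ℝ} (hf : MemLp f 2 m) :
    (∫ x, f x ∂m) ^ 2 ≤ ∫ x, (f x) ^ 2 ∂m := by
  have h1 := ProbabilityTheory.variance_nonneg f m
  have h2 := ProbabilityTheory.variance_eq_sub hf
  have h3 : ∫ x, (f ^ 2) x ∂m = ∫ x, (f x) ^ 2 ∂m := by
    simp [Pi.pow_apply]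
  rw [h2, h3] at h1
  linarith

end Aux

set_option maxHeartbeats 2000000

/-- For a fixed encoder (sub-σ-algebra `G`) with MMSE reconstruction `X̃ = E[X|G]`,
for every `δ > 0` there is a Markov kernel `κ` on `ℝ^d` such that feeding `X̃` into `κ`
yields exactly the law of `X` (zero framewise-marginal perception loss), with expected
distortion at most `E‖X − X̃‖² + W₂²(law X̃, law X) + δ`. -/
theorem statement1 {Ω : Type*} {G F : MeasurableSpace Ω} (hG : G ≤ F)
    (P : Measure Ω) [IsProbabilityMeasure P] {d : ℕ}
    (X : Ω → EuclideanSpace ℝ (Fin d)) (hX : MemLp X 2 P)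
    (δ : ℝ) (hδ : 0 < δ) :
    ∃ κ : Kernel (EuclideanSpace ℝ (Fin d)) (EuclideanSpace ℝ (Fin d)),
      IsMarkovKernel κ ∧
      (P.map (P[X|G])).bind (fun x => κ x) = P.map X ∧
      ∫ ω, ∫ y, ‖X ω - y‖ ^ 2 ∂(κ ((P[X|G]) ω)) ∂P ≤
        (∫ ω, ‖X ω - (P[X|G]) ω‖ ^ 2 ∂P) + W2sq (P.map (P[X|G])) (P.map X) + δ := by
  classical
  haveI : SigmaFinite (P.trim hG) := inferInstance
  set T : Ω → Euc d := P[X|G] with hTdef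
  have hTsm : StronglyMeasurable[G] T := stronglyMeasurable_condExp
  have hT : Measurable T := (hTsm.mono hG).measurable
  have hTG : Measurable[G] T := hTsm.measurable
  have hXint : Integrable X P := hX.integrable one_le_two
  have hXaem : AEMeasurable X P := hX.aestronglyMeasurable.aemeasurable
  -- coordinates
  have hXi_mem : ∀ i : Fin d, MemLp (fun ω => X ω i) 2 P := by
    intro i
    exact (EuclideanSpace.proj i : Euc d →L[ℝ] ℝ).comp_memLp' hX
  have hcond : ∀ i : Fin d, (fun ω => T ω i) =ᵐ[P] P[fun ω => X ω i|G] :=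
    fun i => condexp_euclid_coord hG P hXint i
  have hTi_mem : ∀ i : Fin d, MemLp (fun ω => T ω i) 2 P :=
    fun i => (condexp_memLp_two hG P (hXi_mem i)).ae_eq (hcond i).symm
  have hT2 : MemLp T 2 P := by
    rw [memLp_two_iff_integrable_sq_norm (hTsm.mono hG).aestronglyMeasurable]
    have heq : (fun ω => ‖T ω‖ ^ 2) = fun ω => ∑ i, (T ω i) ^ 2 := by
      funext ω
      rw [PiLp.norm_sq_eq_of_L2]
      simp [Real.norm_eq_abs, sq_abs]
    rw [heq]
    exact integrable_finset_sum _ fun i _ => (hTi_mem i).integrable_sq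
  have hXnormsq : Integrable (fun ω => ‖X ω‖ ^ 2) P := hX.norm.integrable_sq
  have hTnormsq : Integrable (fun ω => ‖T ω‖ ^ 2) P := hT2.norm.integrable_sq
  have hA : Integrable (fun ω => ‖X ω - T ω‖ ^ 2) P := by
    have := (hX.sub hT2).norm.integrable_sq
    simpa [Pi.sub_apply] using this
  -- the two laws
  haveI hμprob : IsProbabilityMeasure (P.map T) := Measure.isProbabilityMeasure_map hT.aemeasurable
  haveI hνprob : IsProbabilityMeasure (P.map X) := Measure.isProbabilityMeasure_map hXaem
  -- the set of coupling costs
  set S : Set ℝ := { c : ℝ | ∃ π : Measure (Euc d × Euc d), IsProbabilityMeasure π ∧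
    π.map Prod.fst = P.map T ∧ π.map Prod.snd = P.map X ∧
    c = ∫ p, ‖p.1 - p.2‖ ^ 2 ∂π } with hSdef
  have hWdef : W2sq (P.map T) (P.map X) = sInf S := rfl
  have hSne : S.Nonempty := by
    refine ⟨∫ p, ‖p.1 - p.2‖ ^ 2 ∂((P.map T).prod (P.map X)), (P.map T).prod (P.map X),
      inferInstance, ?_, ?_, rfl⟩
    · exact Measure.fst_prod
    · exact Measure.snd_prod
  obtain ⟨c, hcS, hclt⟩ := Real.lt_sInf_add_pos hSne hδ
  obtain ⟨π, hπprob, hπ1, hπ2, hceq⟩ := hcS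
  haveI := hπprob
  have hfst : π.fst = P.map T := hπ1
  set κ : Kernel (Euc d) (Euc d) := π.condKernel with hκdef
  have hdis : π.fst ⊗ₘ κ = π := π.disintegrate κ
  -- cost integrability
  have hm1 : MemLp (fun p : Euc d × Euc d => p.1) 2 π := by
    have h0 : MemLp (id : Euc d → Euc d) 2 (P.map T) :=
      (memLp_map_measure_iff aestronglyMeasurable_id hT.aemeasurable).mpr hT2
    rw [← hπ1] at h0
    exact (memLp_map_measure_iff aestronglyMeasurable_id measurable_fst.aemeasurable).mp h0
  have hm2 : MemLp (fun p : Euc d × Euc d => p.2) 2 π := by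
    have h0 : MemLp (id : Euc d → Euc d) 2 (P.map X) :=
      (memLp_map_measure_iff aestronglyMeasurable_id hXaem).mpr hX
    rw [← hπ2] at h0
    exact (memLp_map_measure_iff aestronglyMeasurable_id measurable_snd.aemeasurable).mp h0
  have hcost : Integrable (fun p : Euc d × Euc d => ‖p.1 - p.2‖ ^ 2) π := by
    have := (hm1.sub hm2).norm.integrable_sq
    simpa [Pi.sub_apply] using this
  have hcostπ' : Integrable (fun p : Euc d × Euc d => ‖p.1 - p.2‖ ^ 2) (π.fst ⊗ₘ κ) := by
    rw [hdis]; exact hcost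
  -- a.e. finiteness of second moments of the kernel
  have hcostmeas : Measurable (fun p : Euc d × Euc d => (‖p.1 - p.2‖₊ : ENNReal) ^ 2) :=
    ((measurable_fst.sub measurable_snd).nnnorm.coe_nnreal_ennreal).pow_const 2
  set gE : Euc d → ENNReal := fun x => ∫⁻ y, (‖x - y‖₊ : ENNReal) ^ 2 ∂κ x with hgEdef
  have hgEmeas : Measurable gE := Measurable.lintegral_kernel_prod_right' hcostmeas
  have hLfin : ∫⁻ p, (‖p.1 - p.2‖₊ : ENNReal) ^ 2 ∂π ≠ ⊤ := by
    have h := hcost.2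
    rw [HasFiniteIntegral] at h
    have heq : (fun p : Euc d × Euc d => (‖p.1 - p.2‖₊ : ENNReal) ^ 2)
        = fun p : Euc d × Euc d => ‖‖p.1 - p.2‖ ^ 2‖ₑ := by
      funext p
      simp [enorm_pow, enorm_norm]
      rfl
    rw [heq]
    exact h.ne
  have hfin : ∀ᵐ ω ∂P, gE (T ω) < ⊤ := by
    have h1 : ∫⁻ ω, gE (T ω) ∂P = ∫⁻ x, gE x ∂(P.map T) := (lintegral_map hgEmeas hT).symm
    have h2 : ∫⁻ x, gE x ∂π.fst = ∫⁻ p, (‖p.1 - p.2‖₊ : ENNReal) ^ 2 ∂π := by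
      conv_rhs => rw [← hdis]
      rw [Measure.lintegral_compProd hcostmeas]
    refine ae_lt_top (hgEmeas.comp hT) ?_
    rw [h1, ← hfst, h2]
    exact hLfin
  -- barycenter and the conditional-mean deviation
  set b : Euc d → Euc d := fun x => ∫ y, y ∂κ x with hbdef
  have hbsm : StronglyMeasurable b :=
    StronglyMeasurable.integral_kernel_prod_right' (measurable_snd.stronglyMeasurable)
  set fE : Euc d → ℝ := fun x => ∫ y, ‖x - y‖ ^ 2 ∂κ x with hfEdef
  have hfEsm : StronglyMeasurable fE :=
    StronglyMeasurable.integral_kernel_prod_right'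
      (((continuous_fst.sub continuous_snd).norm.pow 2).stronglyMeasurable)
  set Z : Ω → Euc d := fun ω => T ω - b (T ω) with hZdef
  have hZG : Measurable[G] Z := hTG.sub (hbsm.measurable.comp hTG)
  have hZ : Measurable Z := hZG.mono hG le_rfl
  set C : Ω → ℝ := fun ω => fE (T ω) with hCdef
  have hCsm : StronglyMeasurable C := hfEsm.comp_measurable hT
  -- Integrability of C
  have hfE_int : Integrable fE π.fst := by
    have h := (Measure.integrable_compProd_iff hcostπ'.aestronglyMeasurable).mp hcostπ'
    have h2 := h.2
    refine h2.congr (Filter.Eventually.of_forall fun x => ?_)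
    simp only [hfEdef]
    refine integral_congr_ae (Filter.Eventually.of_forall fun y => ?_)
    show ‖‖x - y‖ ^ 2‖ = ‖x - y‖ ^ 2
    exact Real.norm_of_nonneg (by positivity)
  have hCint : Integrable C P := by
    have h : Integrable fE (P.map T) := by rw [← hfst]; exact hfE_int
    exact (integrable_map_measure hfEsm.aestronglyMeasurable hT.aemeasurable).mp h
  -- the a.e. pointwise facts
  have hkey : ∀ᵐ ω ∂P,
      (∫ y, ‖X ω - y‖ ^ 2 ∂κ (T ω)
        = ‖X ω - T ω‖ ^ 2 + 2 * inner ℝ (X ω - T ω) (Z ω) + C ω)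
      ∧ ‖Z ω‖ ^ 2 ≤ C ω := by
    filter_upwards [hfin] with ω hω
    set m := κ (T ω) with hmdef
    haveI : IsProbabilityMeasure m := inferInstance
    have hsqint : Integrable (fun y => ‖T ω - y‖ ^ 2) m := by
      constructor
      · exact ((continuous_const.sub continuous_id).norm.pow 2).aestronglyMeasurable
      · rw [HasFiniteIntegral]
        have heq : (fun y : Euc d => ‖‖T ω - y‖ ^ 2‖ₑ)
            = fun y : Euc d => (‖T ω - y‖₊ : ENNReal) ^ 2 := by
          funext y
          simp [enorm_pow, enorm_norm]
          rfl
        rw [heq]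
        exact hω
    have hm2 : MemLp (fun y : Euc d => T ω - y) 2 m :=
      (memLp_two_iff_integrable_sq_norm
        ((continuous_const.sub continuous_id).aestronglyMeasurable)).mpr hsqint
    have hid_int : Integrable (fun y : Euc d => y) m := by
      have h := ((memLp_const (T ω)).sub hm2).integrable one_le_two
      refine h.congr (Filter.Eventually.of_forall fun y => ?_)
      simp
    have hbT : ∫ y, (T ω - y) ∂m = T ω - b (T ω) := by
      rw [integral_sub (integrable_const _) hid_int, integral_const]
      simp
      rfl
    constructor
    · have hexp : ∀ y : Euc d, ‖X ω - y‖ ^ 2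
          = ‖X ω - T ω‖ ^ 2 + 2 * inner ℝ (X ω - T ω) (T ω - y) + ‖T ω - y‖ ^ 2 := by
        intro y
        rw [← sub_add_sub_cancel (X ω) (T ω) y]
        exact norm_add_sq_real _ _
      have hinner_int : Integrable (fun y : Euc d => 2 * inner ℝ (X ω - T ω) (T ω - y) : Euc d → ℝ) m :=
        (Integrable.const_inner _ (hm2.integrable one_le_two)).const_mul 2
      calc ∫ y, ‖X ω - y‖ ^ 2 ∂m
          = ∫ y, (‖X ω - T ω‖ ^ 2 + 2 * inner ℝ (X ω - T ω) (T ω - y) + ‖T ω - y‖ ^ 2) ∂m := by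
            exact integral_congr_ae (Filter.Eventually.of_forall hexp)
        _ = (∫ _y, ‖X ω - T ω‖ ^ 2 ∂m) + (∫ y, 2 * inner ℝ (X ω - T ω) (T ω - y) ∂m)
            + ∫ y, ‖T ω - y‖ ^ 2 ∂m := by
            have h1 := integral_add ((integrable_const (‖X ω - T ω‖ ^ 2)).add hinner_int) hsqint
            have h2 := integral_add (integrable_const (‖X ω - T ω‖ ^ 2)) hinner_int
            simp only [Pi.add_apply] at h1 h2
            rw [h1, h2]
        _ = ‖X ω - T ω‖ ^ 2 + 2 * inner ℝ (X ω - T ω) (Z ω) + C ω := by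
            congr 1
            · congr 1
              · simp
              · rw [integral_const_mul, integral_inner (hm2.integrable one_le_two), hbT]
    · have hZeq : Z ω = ∫ y, (T ω - y) ∂m := hbT.symm
      have h1 : ‖Z ω‖ ≤ ∫ y, ‖T ω - y‖ ∂m := by
        rw [hZeq]
        exact norm_integral_le_integral_norm _
      have h2 : (∫ y, ‖T ω - y‖ ∂m) ^ 2 ≤ ∫ y, ‖T ω - y‖ ^ 2 ∂m :=
        sq_integral_le_integral_sq m hm2.norm
      calc ‖Z ω‖ ^ 2 ≤ (∫ y, ‖T ω - y‖ ∂m) ^ 2 :=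
            pow_le_pow_left₀ (norm_nonneg _) h1 2
        _ ≤ ∫ y, ‖T ω - y‖ ^ 2 ∂m := h2
        _ = C ω := rfl
  have hZsq_int : Integrable (fun ω => ‖Z ω‖ ^ 2) P := by
    refine Integrable.mono' hCint ((hZ.norm.pow_const 2).aestronglyMeasurable) ?_
    filter_upwards [hkey] with ω hω
    rw [Real.norm_of_nonneg (by positivity)]
    exact hω.2
  -- the cross term
  set B : Ω → ℝ := fun ω => 2 * inner ℝ (X ω - T ω) (Z ω) with hBdef
  have hBmeas : AEStronglyMeasurable B P := by
    refine AEStronglyMeasurable.const_mul ?_ 2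
    exact AEStronglyMeasurable.inner
      (hX.aestronglyMeasurable.sub (hTsm.mono hG).aestronglyMeasurable)
      hZ.aestronglyMeasurable
  have hBint : Integrable B P := by
    refine Integrable.mono' (hA.add hZsq_int) hBmeas ?_
    refine Filter.Eventually.of_forall fun ω => ?_
    have h1 : |(2 : ℝ) * inner ℝ (X ω - T ω) (Z ω)| ≤ 2 * (‖X ω - T ω‖ * ‖Z ω‖) := by
      rw [abs_mul, abs_two]
      exact mul_le_mul_of_nonneg_left (abs_real_inner_le_norm _ _) (by norm_num)
    have h2 : 2 * ‖X ω - T ω‖ * ‖Z ω‖ ≤ ‖X ω - T ω‖ ^ 2 + ‖Z ω‖ ^ 2 :=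
      two_mul_le_add_sq _ _
    simp only [hBdef, Real.norm_eq_abs]
    calc |(2 : ℝ) * inner ℝ (X ω - T ω) (Z ω)| ≤ 2 * (‖X ω - T ω‖ * ‖Z ω‖) := h1
      _ = 2 * ‖X ω - T ω‖ * ‖Z ω‖ := by ring
      _ ≤ ‖X ω - T ω‖ ^ 2 + ‖Z ω‖ ^ 2 := h2
  -- orthogonality : ∫ B = 0
  have hBzero : ∫ ω, B ω ∂P = 0 := by
    have hip : ∀ ω, B ω = ∑ i, 2 * ((X ω i - T ω i) * Z ω i) := by
      intro ω
      simp only [hBdef, PiLp.inner_apply, RCLike.inner_apply, conj_trivial,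
        PiLp.sub_apply, Finset.mul_sum]
      exact Finset.sum_congr rfl fun i _ => by ring
    have hZiG : ∀ i : Fin d, StronglyMeasurable[G] (fun ω => Z ω i) := by
      intro i
      have : Measurable[G] (fun ω => (EuclideanSpace.proj i : Euc d →L[ℝ] ℝ) (Z ω)) :=
        (EuclideanSpace.proj i : Euc d →L[ℝ] ℝ).continuous.measurable.comp hZG
      exact this.stronglyMeasurable
    have hZi : ∀ i : Fin d, Measurable (fun ω => Z ω i) :=
      fun i => ((hZiG i).mono hG).measurable
    have hmulXZ : ∀ i : Fin d, Integrable (fun ω => X ω i * Z ω i) P := by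
      intro i
      refine Integrable.mono' (hXnormsq.add hZsq_int)
        (((hXi_mem i).aestronglyMeasurable).mul (hZi i).aestronglyMeasurable) ?_
      refine Filter.Eventually.of_forall fun ω => ?_
      have h1 : |X ω i * Z ω i| ≤ ‖X ω‖ * ‖Z ω‖ := by
        rw [abs_mul]
        exact mul_le_mul (euclid_abs_coord_le _ _) (euclid_abs_coord_le _ _)
          (abs_nonneg _) (norm_nonneg _)
      have h2 : ‖X ω‖ * ‖Z ω‖ ≤ ‖X ω‖ ^ 2 + ‖Z ω‖ ^ 2 := by
        nlinarith [norm_nonneg (X ω), norm_nonneg (Z ω), sq_nonneg (‖X ω‖ - ‖Z ω‖)]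
      rw [Real.norm_eq_abs]
      exact h1.trans h2
    have hmulTZ : ∀ i : Fin d, Integrable (fun ω => T ω i * Z ω i) P := by
      intro i
      refine Integrable.mono' (hTnormsq.add hZsq_int)
        (((hTi_mem i).aestronglyMeasurable).mul (hZi i).aestronglyMeasurable) ?_
      refine Filter.Eventually.of_forall fun ω => ?_
      have h1 : |T ω i * Z ω i| ≤ ‖T ω‖ * ‖Z ω‖ := by
        rw [abs_mul]
        exact mul_le_mul (euclid_abs_coord_le _ _) (euclid_abs_coord_le _ _)
          (abs_nonneg _) (norm_nonneg _)
      have h2 : ‖T ω‖ * ‖Z ω‖ ≤ ‖T ω‖ ^ 2 + ‖Z ω‖ ^ 2 := by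
        nlinarith [norm_nonneg (T ω), norm_nonneg (Z ω), sq_nonneg (‖T ω‖ - ‖Z ω‖)]
      rw [Real.norm_eq_abs]
      exact h1.trans h2
    have hterm : ∀ i : Fin d, ∫ ω, (X ω i - T ω i) * Z ω i ∂P = 0 := by
      intro i
      have hZXi : Integrable ((fun ω => Z ω i) * fun ω => X ω i) P := by
        refine ((hmulXZ i).congr ?_)
        exact Filter.Eventually.of_forall fun ω => (mul_comm _ _)
      have hpull := condExp_mul_of_stronglyMeasurable_left (μ := P) (hZiG i) hZXi
        ((hXi_mem i).integrable one_le_two)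
      have e1 : ∫ ω, X ω i * Z ω i ∂P = ∫ ω, (P[fun ω => X ω i|G]) ω * Z ω i ∂P := by
        have i1 : ∫ ω, ((fun ω => Z ω i) * fun ω => X ω i) ω ∂P
            = ∫ ω, (P[(fun ω => Z ω i) * fun ω => X ω i|G]) ω ∂P :=
          (integral_condExp hG).symm
        have i2 : ∫ ω, (P[(fun ω => Z ω i) * fun ω => X ω i|G]) ω ∂P
            = ∫ ω, ((fun ω => Z ω i) * P[fun ω => X ω i|G]) ω ∂P :=
          integral_congr_ae hpull
        simp only [Pi.mul_apply] at i1 i2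
        calc ∫ ω, X ω i * Z ω i ∂P = ∫ ω, Z ω i * X ω i ∂P := by
              exact integral_congr_ae (Filter.Eventually.of_forall fun ω => mul_comm _ _)
          _ = ∫ ω, Z ω i * (P[fun ω => X ω i|G]) ω ∂P := i1.trans i2
          _ = ∫ ω, (P[fun ω => X ω i|G]) ω * Z ω i ∂P :=
              integral_congr_ae (Filter.Eventually.of_forall fun ω => mul_comm _ _)
      have e2 : ∫ ω, T ω i * Z ω i ∂P = ∫ ω, (P[fun ω => X ω i|G]) ω * Z ω i ∂P := by
        refine integral_congr_ae ?_
        filter_upwards [hcond i] with ω hω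
        rw [hω]
      have hsub : ∫ ω, (X ω i - T ω i) * Z ω i ∂P
          = (∫ ω, X ω i * Z ω i ∂P) - ∫ ω, T ω i * Z ω i ∂P := by
        rw [← integral_sub (hmulXZ i) (hmulTZ i)]
        refine integral_congr_ae (Filter.Eventually.of_forall fun ω => ?_)
        ring
      rw [hsub, e1, e2, sub_self]
    calc ∫ ω, B ω ∂P = ∫ ω, ∑ i, 2 * ((X ω i - T ω i) * Z ω i) ∂P :=
          integral_congr_ae (Filter.Eventually.of_forall hip)
      _ = ∑ i, ∫ ω, 2 * ((X ω i - T ω i) * Z ω i) ∂P := by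
          refine integral_finset_sum _ fun i _ => ?_
          have : Integrable (fun ω => (X ω i - T ω i) * Z ω i) P := by
            refine ((hmulXZ i).sub (hmulTZ i)).congr ?_
            exact Filter.Eventually.of_forall fun ω => by
              simp only [Pi.sub_apply]; ring
          exact this.const_mul 2
      _ = ∑ i, 2 * ∫ ω, (X ω i - T ω i) * Z ω i ∂P := by
          refine Finset.sum_congr rfl fun i _ => ?_
          exact integral_const_mul 2 _
      _ = 0 := by simp [hterm]
  -- value of ∫ C
  have hCeq : ∫ ω, C ω ∂P = c := by
    have h1 : ∫ ω, C ω ∂P = ∫ x, fE x ∂(P.map T) :=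
      (integral_map hT.aemeasurable hfEsm.aestronglyMeasurable).symm
    have h2 : ∫ p, ‖p.1 - p.2‖ ^ 2 ∂π = ∫ x, fE x ∂π.fst := by
      conv_lhs => rw [← hdis]
      exact Measure.integral_compProd hcostπ'
    rw [h1, ← hfst, ← h2, ← hceq]
  -- the distortion identity
  have hsplit : ∫ ω, ∫ y, ‖X ω - y‖ ^ 2 ∂κ (T ω) ∂P
      = (∫ ω, ‖X ω - T ω‖ ^ 2 ∂P) + (∫ ω, B ω ∂P) + ∫ ω, C ω ∂P := by
    have hae : (fun ω => ∫ y, ‖X ω - y‖ ^ 2 ∂κ (T ω))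
        =ᵐ[P] fun ω => ‖X ω - T ω‖ ^ 2 + B ω + C ω := by
      filter_upwards [hkey] with ω hω
      exact hω.1
    have h1 := integral_add (hA.add hBint) hCint
    have h2 := integral_add hA hBint
    simp only [Pi.add_apply] at h1 h2
    rw [integral_congr_ae hae, h1, h2]
  -- the bind property
  have hbind : (P.map T).bind (fun x => κ x) = P.map X := by
    rw [← hfst, ← hπ2]
    conv_rhs => rw [← hdis]
    ext s hs
    rw [Measure.bind_apply hs (Kernel.measurable κ).aemeasurable,
      Measure.map_apply measurable_snd hs, Measure.compProd_apply (measurable_snd hs)]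
    rfl
  refine ⟨κ, inferInstance, hbind, ?_⟩
  rw [hsplit, hBzero, hCeq, hWdef]
  have : c < sInf S + δ := hclt
  linarith
end

section
/- Let (Ω, F, P) be a probability space, A a random variable taking values in a finite set S, and Y, Ŷ : Ω → ℝ^d square-integrable random vectors. Then E‖Y − Ŷ‖² ≥ Σ_{s ∈ S, P(A = s) > 0} P(A = s) · W₂²(law of Y under the conditional measure P(· | A = s), law of Ŷ under P(· | A = s)). -/
open MeasureTheory ProbabilityTheory
open scoped Classical ENNReal

lemma W2sq_le_of_coupling {Ω : Type*} {F : MeasurableSpace Ω} (μ : Measure Ω)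
    [IsProbabilityMeasure μ] {d : ℕ} (Y Yhat : Ω → EuclideanSpace ℝ (Fin d))
    (hY : AEMeasurable Y μ) (hYhat : AEMeasurable Yhat μ) :
    W2sq (μ.map Y) (μ.map Yhat) ≤ ∫ ω, ‖Y ω - Yhat ω‖ ^ 2 ∂μ := by
  have hg : AEMeasurable (fun ω => (Y ω, Yhat ω)) μ := hY.prodMk hYhat
  apply csInf_le
  · refine ⟨0, ?_⟩
    rintro c ⟨π, hπ, -, -, rfl⟩
    exact integral_nonneg fun p => by positivity
  · refine ⟨μ.map (fun ω => (Y ω, Yhat ω)), Measure.isProbabilityMeasure_map hg, ?_, ?_, ?_⟩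
    · rw [AEMeasurable.map_map_of_aemeasurable measurable_fst.aemeasurable hg]; rfl
    · rw [AEMeasurable.map_map_of_aemeasurable measurable_snd.aemeasurable hg]; rfl
    · rw [integral_map hg]
      exact (Continuous.aestronglyMeasurable (by fun_prop))

/-- For a random variable `A` with values in a finite set and square-integrable
random vectors `Y, Ŷ`, the expected squared distance `E‖Y − Ŷ‖²` is at least the
average, over the values `s` of `A` of positive probability, of the squared
Wasserstein-2 distance between the conditional laws of `Y` and `Ŷ` given `A = s`. -/
theorem statement3 {Ω : Type*} {F : MeasurableSpace Ω} (P : Measure Ω) [IsProbabilityMeasure P]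
    {S : Type*} [Fintype S] [MeasurableSpace S] [MeasurableSingletonClass S]
    (A : Ω → S) (hA : Measurable A) {d : ℕ}
    (Y Yhat : Ω → EuclideanSpace ℝ (Fin d)) (hY : MemLp Y 2 P) (hYhat : MemLp Yhat 2 P) :
    ∫ ω, ‖Y ω - Yhat ω‖ ^ 2 ∂P ≥
      ∑ s ∈ Finset.univ.filter (fun s : S => 0 < P (A ⁻¹' {s})),
        (P (A ⁻¹' {s})).toReal *
          W2sq ((ProbabilityTheory.cond P (A ⁻¹' {s})).map Y)
            ((ProbabilityTheory.cond P (A ⁻¹' {s})).map Yhat) := by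
  set f : Ω → ℝ := fun ω => ‖Y ω - Yhat ω‖ ^ 2 with hf_def
  have hf : Integrable f P := by
    have h := (hY.sub hYhat).integrable_norm_rpow (by norm_num) (by norm_num)
    have : (fun x : Ω => ‖(Y - Yhat) x‖ ^ (2 : ℝ≥0∞).toReal) = f := by
      funext x
      simp only [Pi.sub_apply, ENNReal.toReal_ofNat, hf_def]
      rw [show (2 : ℝ) = ((2 : ℕ) : ℝ) by norm_num, Real.rpow_natCast]
    rwa [this] at h
  have hE : ∀ s : S, MeasurableSet (A ⁻¹' {s}) := fun s => hA (measurableSet_singleton s)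
  -- key estimate on each atom
  have key : ∀ s : S, 0 < P (A ⁻¹' {s}) →
      (P (A ⁻¹' {s})).toReal * W2sq ((P[|A ⁻¹' {s}]).map Y) ((P[|A ⁻¹' {s}]).map Yhat)
        ≤ ∫ ω in A ⁻¹' {s}, f ω ∂P := by
    intro s hs
    set E := A ⁻¹' {s}
    have hPE : P E ≠ 0 := hs.ne'
    haveI : IsProbabilityMeasure (P[|E]) := cond_isProbabilityMeasure hPE
    have hac : P[|E] ≪ P := cond_absolutelyContinuous
    have hYm : AEMeasurable Y (P[|E]) := hY.aestronglyMeasurable.aemeasurable.mono_ac hac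
    have hYhatm : AEMeasurable Yhat (P[|E]) := hYhat.aestronglyMeasurable.aemeasurable.mono_ac hac
    have h1 := W2sq_le_of_coupling (P[|E]) Y Yhat hYm hYhatm
    have h2 : ∫ ω, f ω ∂(P[|E]) = (P E).toReal⁻¹ * ∫ ω in E, f ω ∂P := by
      rw [ProbabilityTheory.cond, integral_smul_measure, smul_eq_mul, ENNReal.toReal_inv]
    have hPEtop : P E ≠ ⊤ := measure_ne_top P E
    have hPEr : (0 : ℝ) < (P E).toReal := ENNReal.toReal_pos hPE hPEtop
    calc (P E).toReal * W2sq ((P[|E]).map Y) ((P[|E]).map Yhat)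
        ≤ (P E).toReal * ∫ ω, f ω ∂(P[|E]) := by
          exact mul_le_mul_of_nonneg_left h1 hPEr.le
      _ = ∫ ω in E, f ω ∂P := by
          rw [h2, ← mul_assoc, mul_inv_cancel₀ hPEr.ne', one_mul]
  -- decompose the total integral
  have hdecomp : ∫ ω, f ω ∂P = ∑ s : S, ∫ ω in A ⁻¹' {s}, f ω ∂P := by
    have hu : (⋃ s : S, A ⁻¹' {s}) = Set.univ := by
      ext ω; simp
    rw [← setIntegral_univ, ← hu]
    exact integral_iUnion_fintype hE
      (fun a b hab => Set.disjoint_left.2 fun ω ha hb => hab (by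
        simp only [Set.mem_preimage, Set.mem_singleton_iff] at ha hb; rw [← ha, ← hb]))
      (fun s => hf.integrableOn)
  rw [ge_iff_le, hdecomp]
  calc ∑ s ∈ Finset.univ.filter (fun s : S => 0 < P (A ⁻¹' {s})),
        (P (A ⁻¹' {s})).toReal * W2sq ((P[|A ⁻¹' {s}]).map Y) ((P[|A ⁻¹' {s}]).map Yhat)
      ≤ ∑ s ∈ Finset.univ.filter (fun s : S => 0 < P (A ⁻¹' {s})),
          ∫ ω in A ⁻¹' {s}, f ω ∂P := by
        apply Finset.sum_le_sum
        intro s hs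
        exact key s (Finset.mem_filter.1 hs).2
    _ ≤ ∑ s : S, ∫ ω in A ⁻¹' {s}, f ω ∂P := by
        apply Finset.sum_le_sum_of_subset_of_nonneg (Finset.filter_subset _ _)
        intro s _ _
        exact setIntegral_nonneg (hE s) fun ω _ => by positivity
end

section
/- Let (Ω, F, P) be a probability space, X₁ a random variable taking values in a finite set S ⊆ ℝ^d, and X₂ : Ω → ℝ^d square-integrable. Let X̂₁, X̂₂ be random vectors on Ω such that the joint law of (X̂₁, X̂₂) equals the joint law of (X₁, X₂) (zero joint-distribution perception loss) and such that X̂₁ is independent of X₂. Then E‖X₂ − X̂₂‖² ≥ Σ_{s ∈ S, P(X₁ = s) > 0} P(X₁ = s) · W₂²(law of X₂, law of X₂ under P(· | X₁ = s)). In particular, even when X₂ itself is available at the decoder (so the MMSE distortion of the second frame is zero), the distortion under zero joint-distribution perception loss is bounded below by this positive quantity, so the factor-of-two bound fails for the joint-distribution perception loss. -/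
open MeasureTheory ProbabilityTheory
open scoped Classical

/-- Counterexample setting for the factor-of-two bound under the joint-distribution
perception loss: `X₁` takes finitely many values, the reconstruction pair `(X̂₁, X̂₂)` has
the same joint law as `(X₁, X₂)` (zero PLF-JD) and `X̂₁` is independent of `X₂` (the first
message carries no information).  Then the second-frame distortion is bounded below by the
average squared Wasserstein-2 distance between the unconditional law of `X₂` and its
conditional laws given `X₁ = s`, even though the MMSE distortion of the second frame is
zero when `X₂` itself is available at the decoder. -/
theorem statement4 {Ω : Type*} {F : MeasurableSpace Ω} (P : Measure Ω) [IsProbabilityMeasure P]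
    {d : ℕ}
    (X₁ : Ω → EuclideanSpace ℝ (Fin d)) (S : Finset (EuclideanSpace ℝ (Fin d)))
    (hX₁S : ∀ ω, X₁ ω ∈ S) (hX₁ : Measurable X₁)
    (X₂ : Ω → EuclideanSpace ℝ (Fin d)) (hX₂ : MemLp X₂ 2 P)
    (Xhat₁ Xhat₂ : Ω → EuclideanSpace ℝ (Fin d))
    (hXhat₁ : Measurable Xhat₁) (hXhat₂ : Measurable Xhat₂)
    (hjoint : P.map (fun ω => (Xhat₁ ω, Xhat₂ ω)) = P.map (fun ω => (X₁ ω, X₂ ω)))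
    (hindep : IndepFun Xhat₁ X₂ P) :
    ∫ ω, ‖X₂ ω - Xhat₂ ω‖ ^ 2 ∂P ≥
      ∑ s ∈ S.filter (fun s => 0 < P (X₁ ⁻¹' {s})),
        (P (X₁ ⁻¹' {s})).toReal *
          W2sq (P.map X₂) ((ProbabilityTheory.cond P (X₁ ⁻¹' {s})).map X₂) := by
  set f : Ω → ℝ := fun ω => ‖X₂ ω - Xhat₂ ω‖ ^ 2 with hf
  have hX₂m : AEMeasurable X₂ P := hX₂.aestronglyMeasurable.aemeasurable
  have hpairm : AEMeasurable (fun ω => (X₁ ω, X₂ ω)) P := hX₁.aemeasurable.prodMk hX₂m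
  have hpairhatm : Measurable (fun ω => (Xhat₁ ω, Xhat₂ ω)) := hXhat₁.prodMk hXhat₂
  -- equal marginals
  have hmap1 : P.map Xhat₁ = P.map X₁ := by
    have h1 : (P.map (fun ω => (Xhat₁ ω, Xhat₂ ω))).map Prod.fst = P.map Xhat₁ := by
      rw [Measure.map_map measurable_fst hpairhatm]; rfl
    have h2 : (P.map (fun ω => (X₁ ω, X₂ ω))).map Prod.fst = P.map X₁ := by
      rw [AEMeasurable.map_map_of_aemeasurable measurable_fst.aemeasurable hpairm]; rfl
    rw [← h1, ← h2, hjoint]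
  have hmap2 : P.map Xhat₂ = P.map X₂ := by
    have h1 : (P.map (fun ω => (Xhat₁ ω, Xhat₂ ω))).map Prod.snd = P.map Xhat₂ := by
      rw [Measure.map_map measurable_snd hpairhatm]; rfl
    have h2 : (P.map (fun ω => (X₁ ω, X₂ ω))).map Prod.snd = P.map X₂ := by
      rw [AEMeasurable.map_map_of_aemeasurable measurable_snd.aemeasurable hpairm]; rfl
    rw [← h1, ← h2, hjoint]
  have hEs : ∀ s : EuclideanSpace ℝ (Fin d), P (Xhat₁ ⁻¹' {s}) = P (X₁ ⁻¹' {s}) := by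
    intro s
    have h1 : P.map Xhat₁ {s} = P (Xhat₁ ⁻¹' {s}) :=
      Measure.map_apply hXhat₁ (measurableSet_singleton s)
    have h2 : P.map X₁ {s} = P (X₁ ⁻¹' {s}) :=
      Measure.map_apply hX₁ (measurableSet_singleton s)
    rw [← h1, ← h2, hmap1]
  -- integrability of f
  have hXhat₂mem : MemLp Xhat₂ 2 P := by
    have hid : MemLp (id : EuclideanSpace ℝ (Fin d) → EuclideanSpace ℝ (Fin d)) 2
        (P.map X₂) := (memLp_map_measure_iff aestronglyMeasurable_id hX₂m).2 hX₂
    rw [← hmap2] at hid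
    exact (memLp_map_measure_iff aestronglyMeasurable_id hXhat₂.aemeasurable).1 hid
  have hsubmem : MemLp (fun ω => X₂ ω - Xhat₂ ω) 2 P := hX₂.sub hXhat₂mem
  have hfint : Integrable f P := by
    have h := hsubmem.integrable_norm_rpow two_ne_zero ENNReal.ofNat_ne_top
    have : (fun ω => ‖X₂ ω - Xhat₂ ω‖ ^ ((2 : ENNReal).toReal)) = f := by
      funext ω
      rw [hf, ENNReal.toReal_ofNat]
      exact_mod_cast Real.rpow_natCast _ 2
    rwa [this] at h
  have hfnonneg : ∀ ω, 0 ≤ f ω := fun ω => sq_nonneg _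
  -- per-term bound
  have hterm : ∀ s ∈ S.filter (fun s => 0 < P (X₁ ⁻¹' {s})),
      (P (X₁ ⁻¹' {s})).toReal *
        W2sq (P.map X₂) ((ProbabilityTheory.cond P (X₁ ⁻¹' {s})).map X₂)
        ≤ ∫ ω in Xhat₁ ⁻¹' {s}, f ω ∂P := by
    intro s hs
    rw [Finset.mem_filter] at hs
    obtain ⟨-, hpos⟩ := hs
    set E := Xhat₁ ⁻¹' {s} with hE
    have hEmeas : MeasurableSet E := hXhat₁ (measurableSet_singleton s)
    have hPE : P E = P (X₁ ⁻¹' {s}) := hEs s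
    have hPE0 : P E ≠ 0 := by rw [hPE]; exact hpos.ne'
    have hPEtop : P E ≠ ⊤ := measure_ne_top P E
    have hprob : IsProbabilityMeasure (P[|E]) := cond_isProbabilityMeasure hPE0
    have hac : P[|E] ≪ P := cond_absolutelyContinuous
    have hX₂mE : AEMeasurable X₂ (P[|E]) := hX₂m.mono_ac hac
    have hpm : AEMeasurable (fun ω => (X₂ ω, Xhat₂ ω)) (P[|E]) :=
      hX₂mE.prodMk hXhat₂.aemeasurable
    set π : Measure (EuclideanSpace ℝ (Fin d) × EuclideanSpace ℝ (Fin d)) :=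
      (P[|E]).map (fun ω => (X₂ ω, Xhat₂ ω)) with hπ
    have hπprob : IsProbabilityMeasure π := Measure.isProbabilityMeasure_map hpm
    -- first marginal
    have hfst : π.map Prod.fst = P.map X₂ := by
      rw [hπ, AEMeasurable.map_map_of_aemeasurable measurable_fst.aemeasurable hpm]
      have : (Prod.fst ∘ fun ω => (X₂ ω, Xhat₂ ω)) = X₂ := rfl
      rw [this]
      ext A hA
      rw [Measure.map_apply_of_aemeasurable hX₂mE hA,
        Measure.map_apply_of_aemeasurable hX₂m hA,
        cond_apply hEmeas,
        hindep.measure_inter_preimage_eq_mul _ _ (measurableSet_singleton s) hA, ← hE,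
        ← mul_assoc, ENNReal.inv_mul_cancel hPE0 hPEtop, one_mul]
    -- second marginal
    have hsnd : π.map Prod.snd = (P[|X₁ ⁻¹' {s}]).map X₂ := by
      rw [hπ, AEMeasurable.map_map_of_aemeasurable measurable_snd.aemeasurable hpm]
      have : (Prod.snd ∘ fun ω => (X₂ ω, Xhat₂ ω)) = Xhat₂ := rfl
      rw [this]
      have hacX : P[|X₁ ⁻¹' {s}] ≪ P := cond_absolutelyContinuous
      ext A hA
      rw [Measure.map_apply hXhat₂ hA,
        Measure.map_apply_of_aemeasurable (hX₂m.mono_ac hacX) hA,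
        cond_apply hEmeas, cond_apply (hX₁ (measurableSet_singleton s)), hPE]
      congr 1
      have hkey : P (E ∩ Xhat₂ ⁻¹' A) = P (X₁ ⁻¹' {s} ∩ X₂ ⁻¹' A) := by
        have hprodmeas : MeasurableSet ({s} ×ˢ A :
            Set (EuclideanSpace ℝ (Fin d) × EuclideanSpace ℝ (Fin d))) :=
          (measurableSet_singleton s).prod hA
        have h1 : P.map (fun ω => (Xhat₁ ω, Xhat₂ ω)) ({s} ×ˢ A) = P (E ∩ Xhat₂ ⁻¹' A) := by
          rw [Measure.map_apply hpairhatm hprodmeas]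
          have hset : (fun ω => (Xhat₁ ω, Xhat₂ ω)) ⁻¹' ({s} ×ˢ A) = E ∩ Xhat₂ ⁻¹' A := by
            ext ω; simp only [Set.mem_preimage, Set.mem_prod, Set.mem_inter_iff, Set.mem_singleton_iff, hE]
          rw [hset]
        have h2 : P.map (fun ω => (X₁ ω, X₂ ω)) ({s} ×ˢ A) =
            P (X₁ ⁻¹' {s} ∩ X₂ ⁻¹' A) := by
          rw [Measure.map_apply_of_aemeasurable hpairm hprodmeas]
          have hset : (fun ω => (X₁ ω, X₂ ω)) ⁻¹' ({s} ×ˢ A) = X₁ ⁻¹' {s} ∩ X₂ ⁻¹' A := by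
            ext ω; simp only [Set.mem_preimage, Set.mem_prod, Set.mem_inter_iff, Set.mem_singleton_iff]
          rw [hset]
        rw [← h1, ← h2, hjoint]
      exact hkey
    -- the coupling value
    have hval : (∫ p, ‖p.1 - p.2‖ ^ 2 ∂π) = ∫ ω, f ω ∂(P[|E]) := by
      rw [hπ]
      exact integral_map hpm
        (((continuous_fst.sub continuous_snd).norm.pow 2).aestronglyMeasurable)
    have hW : W2sq (P.map X₂) ((P[|X₁ ⁻¹' {s}]).map X₂) ≤ ∫ ω, f ω ∂(P[|E]) := by
      apply csInf_le
      · refine ⟨0, ?_⟩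
        rintro c ⟨π', hπ', h1, h2, rfl⟩
        exact integral_nonneg fun p => sq_nonneg _
      · exact ⟨π, hπprob, hfst, hsnd, hval.symm⟩
    -- convert conditional integral to set integral
    have hcondint : (P E).toReal * ∫ ω, f ω ∂(P[|E]) = ∫ ω in E, f ω ∂P := by
      rw [show P[|E] = (P E)⁻¹ • P.restrict E from rfl, integral_smul_measure,
        ENNReal.toReal_inv, smul_eq_mul, ← mul_assoc,
        mul_inv_cancel₀ (by
          simp only [ne_eq, ENNReal.toReal_eq_zero_iff]
          push_neg
          exact ⟨hPE0, hPEtop⟩), one_mul]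
    calc (P (X₁ ⁻¹' {s})).toReal *
        W2sq (P.map X₂) ((P[|X₁ ⁻¹' {s}]).map X₂)
        ≤ (P (X₁ ⁻¹' {s})).toReal * ∫ ω, f ω ∂(P[|E]) := by
          exact mul_le_mul_of_nonneg_left hW ENNReal.toReal_nonneg
      _ = ∫ ω in E, f ω ∂P := by rw [← hPE]; exact hcondint
  -- sum up
  have hdisj : (↑(S.filter (fun s => 0 < P (X₁ ⁻¹' {s}))) : Set _).Pairwise
      (Function.onFun Disjoint fun s => Xhat₁ ⁻¹' {s}) := by
    intro a _ b _ hab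
    simp only [Function.onFun, Set.disjoint_left]
    intro ω ha hb
    exact hab (by rw [← ha, ← hb])
  have hmeas : ∀ s ∈ S.filter (fun s => 0 < P (X₁ ⁻¹' {s})),
      MeasurableSet (Xhat₁ ⁻¹' {s}) := fun s _ => hXhat₁ (measurableSet_singleton s)
  have hsum : ∑ s ∈ S.filter (fun s => 0 < P (X₁ ⁻¹' {s})), ∫ ω in Xhat₁ ⁻¹' {s}, f ω ∂P
      = ∫ ω in ⋃ s ∈ S.filter (fun s => 0 < P (X₁ ⁻¹' {s})), Xhat₁ ⁻¹' {s}, f ω ∂P :=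
    (integral_biUnion_finset _ hmeas hdisj fun s _ => hfint.integrableOn).symm
  rw [ge_iff_le]
  calc ∑ s ∈ S.filter (fun s => 0 < P (X₁ ⁻¹' {s})),
      (P (X₁ ⁻¹' {s})).toReal *
        W2sq (P.map X₂) ((P[|X₁ ⁻¹' {s}]).map X₂)
      ≤ ∑ s ∈ S.filter (fun s => 0 < P (X₁ ⁻¹' {s})), ∫ ω in Xhat₁ ⁻¹' {s}, f ω ∂P :=
        Finset.sum_le_sum hterm
    _ = ∫ ω in ⋃ s ∈ S.filter (fun s => 0 < P (X₁ ⁻¹' {s})), Xhat₁ ⁻¹' {s}, f ω ∂P := hsum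
    _ ≤ ∫ ω, f ω ∂P :=
        setIntegral_le_integral hfint (Filter.Eventually.of_forall hfnonneg)
end

section
/- Let (Ω, F, P) be a probability space, G ⊆ F a sub-σ-algebra, B > 0 and μ ∈ [0,1], and let X : Ω → ℝ^d satisfy the noisy-encoder condition with parameters (μ, B) relative to G. Set m := E[X] and X̃ := E[X | G]. Then (i) ‖X̃(ω) − m‖ ≤ 2Bμ for P-almost every ω, and (ii) 0 ≤ E‖X − m‖² − E‖X − X̃‖² ≤ 4B²μ². That is, when the encoder output is almost independent of the source, the MMSE reconstruction is within O(μ) of the source mean and the MMSE distortion is within O(μ²) of the source's total variance. -/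
open MeasureTheory ProbabilityTheory

/-- The noisy-encoder condition with parameters `(μpar, B)` relative to a sub-σ-algebra `G`:
there is a `G`-measurable family `ω ↦ Q ω` of Borel probability measures on `ℝ^d`, each
supported in the closed ball of radius `B` around the origin, such that for every Borel set
`A`, `E[1_A(X) | G] = (1 − μpar)·P(X ∈ A) + μpar·(Q ·)(A)` almost surely. -/
def NoisyEncoder {Ω : Type*} {G F : MeasurableSpace Ω} (P : Measure Ω) {d : ℕ}
    (X : Ω → EuclideanSpace ℝ (Fin d)) (μpar B : ℝ) : Prop :=
  ∃ Q : Ω → Measure (EuclideanSpace ℝ (Fin d)),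
    (∀ A : Set (EuclideanSpace ℝ (Fin d)), MeasurableSet A →
        Measurable[G] (fun ω => Q ω A)) ∧
    (∀ ω, IsProbabilityMeasure (Q ω)) ∧
    (∀ ω, Q ω (Metric.closedBall 0 B)ᶜ = 0) ∧
    (∀ A : Set (EuclideanSpace ℝ (Fin d)), MeasurableSet A →
      (P[(X ⁻¹' A).indicator (fun _ => (1 : ℝ)) | G]) =ᵐ[P]
        (fun ω => (1 - μpar) * (P (X ⁻¹' A)).toReal + μpar * (Q ω A).toReal))

/-- Under the noisy-encoder condition (encoder output almost independent of the source),
the MMSE reconstruction `X̃ = E[X|G]` is within `2Bμ` of the source mean `m = E[X]`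
almost surely, and the MMSE distortion is within `4B²μ²` of the total variance
`E‖X − m‖²` (from below). -/
theorem statement5 {Ω : Type*} {G F : MeasurableSpace Ω} (hG : G ≤ F)
    (P : Measure Ω) [IsProbabilityMeasure P] {d : ℕ}
    (B μpar : ℝ) (hB : 0 < B) (hμ : μpar ∈ Set.Icc (0 : ℝ) 1)
    (X : Ω → EuclideanSpace ℝ (Fin d)) (hXmeas : Measurable X)
    (hXbdd : ∀ᵐ ω ∂P, ‖X ω‖ ≤ B)
    (hne : NoisyEncoder (G := G) P X μpar B) :
    (∀ᵐ ω ∂P, ‖(P[X|G]) ω - ∫ ω', X ω' ∂P‖ ≤ 2 * B * μpar) ∧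
    (0 ≤ (∫ ω, ‖X ω - ∫ ω', X ω' ∂P‖ ^ 2 ∂P) - ∫ ω, ‖X ω - (P[X|G]) ω‖ ^ 2 ∂P) ∧
    ((∫ ω, ‖X ω - ∫ ω', X ω' ∂P‖ ^ 2 ∂P) - (∫ ω, ‖X ω - (P[X|G]) ω‖ ^ 2 ∂P)
      ≤ 4 * B ^ 2 * μpar ^ 2) := by
  classical
  obtain ⟨hμ0, hμ1⟩ := hμ
  obtain ⟨Q, hQmeas, hQprob, hQball, hQcond⟩ := hne
  haveI : IsFiniteMeasure (P.trim hG) := isFiniteMeasure_trim hG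
  have hXaesm : AEStronglyMeasurable X P := hXmeas.aestronglyMeasurable
  have hXint : Integrable X P := (integrable_const B).mono' hXaesm hXbdd
  set m : EuclideanSpace ℝ (Fin d) := ∫ ω', X ω' ∂P with hm_def
  have hmB : ‖m‖ ≤ B := by
    have h := norm_integral_le_of_norm_le_const (μ := P) hXbdd
    simpa using h
  have hQm : Measurable[G] Q := @Measure.measurable_of_measurable_coe _ _ _ G Q hQmeas
  have hQaeB : ∀ ω, ∀ᵐ x ∂(Q ω), ‖x‖ ≤ B := by
    intro ω
    rw [ae_iff]
    refine measure_mono_null (fun x hx => ?_) (hQball ω)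
    simpa [Metric.mem_closedBall, dist_zero_right] using hx
  set b : Ω → EuclideanSpace ℝ (Fin d) := fun ω => ∫ x, x ∂(Q ω) with hb_def
  have hbB : ∀ ω, ‖b ω‖ ≤ B := by
    intro ω
    haveI := hQprob ω
    have h := norm_integral_le_of_norm_le_const (μ := Q ω) (f := fun x => x) (hQaeB ω)
    simpa using h
  let κG : @Kernel Ω (EuclideanSpace ℝ (Fin d)) G _ := @Kernel.mk Ω (EuclideanSpace ℝ (Fin d)) G _ Q hQm
  haveI : @IsMarkovKernel Ω _ G _ κG := @IsMarkovKernel.mk _ _ _ _ κG (fun ω => hQprob ω)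
  let κF : Kernel Ω (EuclideanSpace ℝ (Fin d)) := ⟨Q, hQm.mono hG le_rfl⟩
  haveI : IsMarkovKernel κF := ⟨fun ω => hQprob ω⟩
  have hbSM : StronglyMeasurable[G] b := by
    rw [hb_def]
    exact MeasureTheory.StronglyMeasurable.integral_kernel_prod_right' (κ := κG)
      (f := fun p => p.2) (measurable_snd.stronglyMeasurable)
  set Y : Ω → EuclideanSpace ℝ (Fin d) := fun ω => (1 - μpar) • m + μpar • b ω with hY_def
  have hYSM : StronglyMeasurable[G] Y := (hbSM.const_smul μpar).const_add ((1 - μpar) • m)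
  have hYSMF : StronglyMeasurable Y := hYSM.mono hG
  have hYb : ∀ ω, ‖Y ω‖ ≤ B := by
    intro ω
    have h1 : ‖Y ω‖ ≤ ‖(1 - μpar) • m‖ + ‖μpar • b ω‖ := norm_add_le _ _
    rw [norm_smul, norm_smul, Real.norm_eq_abs, Real.norm_eq_abs,
      abs_of_nonneg (by linarith : (0:ℝ) ≤ 1 - μpar), abs_of_nonneg hμ0] at h1
    nlinarith [hmB, hbB ω, norm_nonneg (b ω), norm_nonneg m]
  have hYint : Integrable Y P :=
    (integrable_const B).mono' hYSMF.aestronglyMeasurable (Filter.Eventually.of_forall hYb)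
  have hbint : Integrable b P :=
    (integrable_const B).mono' (hbSM.mono hG).aestronglyMeasurable (Filter.Eventually.of_forall hbB)
  have hYnorm : ∀ ω, ‖Y ω - m‖ ≤ 2 * B * μpar := by
    intro ω
    have h1 : Y ω - m = μpar • (b ω - m) := by
      show ((1 - μpar) • m + μpar • b ω) - m = μpar • (b ω - m)
      rw [sub_smul, one_smul, smul_sub]; abel
    rw [h1, norm_smul, Real.norm_eq_abs, abs_of_nonneg hμ0]
    have h2 : ‖b ω - m‖ ≤ 2 * B := le_trans (norm_sub_le _ _) (by linarith [hbB ω, hmB])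
    nlinarith
  have hQA_le_one : ∀ ω (A : Set (EuclideanSpace ℝ (Fin d))), Q ω A ≤ 1 := fun ω A => by
    haveI := hQprob ω; exact prob_le_one
  have hsetInt : ∀ S : Set Ω, MeasurableSet[G] S →
      ∫ ω in S, Y ω ∂P = ∫ ω in S, X ω ∂P := by
    intro S hS
    have hSF : MeasurableSet S := hG S hS
    set ρ : Measure (Ω × EuclideanSpace ℝ (Fin d)) := (P.restrict S) ⊗ₘ κF with hρ_def
    set ν : Measure (EuclideanSpace ℝ (Fin d)) := ρ.map Prod.snd with hν_def
    have hν_apply : ∀ A : Set (EuclideanSpace ℝ (Fin d)), MeasurableSet A →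
        ν A = ∫⁻ ω in S, Q ω A ∂P := by
      intro A hA
      rw [hν_def, Measure.map_apply measurable_snd hA, hρ_def,
        Measure.compProd_apply (measurable_snd hA)]
      simp only [Set.preimage_preimage]
      rfl
    have hkey : (P.restrict S).map X
        = (ENNReal.ofReal (1 - μpar) * P S) • P.map X + ENNReal.ofReal μpar • ν := by
      refine Measure.ext fun A hA => ?_
      have hXA : MeasurableSet (X ⁻¹' A) := hXmeas hA
      have hind : Integrable ((X ⁻¹' A).indicator fun _ => (1:ℝ)) P :=
        (integrable_const (1:ℝ)).indicator hXA
      have hqmF : Measurable fun ω => (Q ω A).toReal :=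
        ((hQmeas A hA).mono hG le_rfl).ennreal_toReal
      have hqint : Integrable (fun ω => (Q ω A).toReal) P :=
        (integrable_const (1:ℝ)).mono' hqmF.aestronglyMeasurable
          (Filter.Eventually.of_forall fun ω => by
            rw [Real.norm_eq_abs, abs_of_nonneg ENNReal.toReal_nonneg]
            simpa using ENNReal.toReal_mono ENNReal.one_ne_top (hQA_le_one ω A))
      have h2 : ∫ ω in S, (Q ω A).toReal ∂P = (∫⁻ ω in S, Q ω A ∂P).toReal :=
        integral_toReal (((hQmeas A hA).mono hG le_rfl).aemeasurable.restrict)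
          (Filter.Eventually.of_forall fun ω =>
            lt_of_le_of_lt (hQA_le_one ω A) ENNReal.one_lt_top)
      have hreal : (P (S ∩ X ⁻¹' A)).toReal
          = (1 - μpar) * (P (X ⁻¹' A)).toReal * (P S).toReal
            + μpar * (∫⁻ ω in S, Q ω A ∂P).toReal := by
        have h1 : ∫ ω in S, ((X ⁻¹' A).indicator fun _ => (1:ℝ)) ω ∂P
            = ∫ ω in S, ((1 - μpar) * (P (X ⁻¹' A)).toReal + μpar * (Q ω A).toReal) ∂P := by
          rw [← setIntegral_condExp hG hind hS]
          exact setIntegral_congr_ae hSF ((hQcond A hA).mono fun ω h _ => h)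
        rw [setIntegral_indicator hXA] at h1
        simp only [setIntegral_const, smul_eq_mul, mul_one] at h1
        rw [integral_add (integrable_const _) (hqint.restrict.const_mul μpar),
          integral_const, integral_const_mul, h2] at h1
        simp only [measureReal_def, Measure.restrict_apply_univ, smul_eq_mul] at h1
        rw [h1]; ring
      have hLle : ∫⁻ ω in S, Q ω A ∂P ≤ 1 := by
        calc ∫⁻ ω in S, Q ω A ∂P ≤ ∫⁻ _ in S, 1 ∂P :=
              lintegral_mono fun ω => hQA_le_one ω A
          _ = P S := by simp
          _ ≤ 1 := prob_le_one
      rw [Measure.map_apply hXmeas hA, Measure.restrict_apply hXA,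
        Measure.coe_add, Pi.add_apply, Measure.smul_apply, Measure.smul_apply,
        Measure.map_apply hXmeas hA, hν_apply A hA, smul_eq_mul, smul_eq_mul]
      have hfin2 : ENNReal.ofReal (1 - μpar) * P S * P (X ⁻¹' A) ≠ ⊤ :=
        ENNReal.mul_ne_top (ENNReal.mul_ne_top ENNReal.ofReal_ne_top (measure_ne_top _ _))
          (measure_ne_top _ _)
      have hfin3 : ENNReal.ofReal μpar * ∫⁻ ω in S, Q ω A ∂P ≠ ⊤ :=
        ENNReal.mul_ne_top ENNReal.ofReal_ne_top (ne_top_of_le_ne_top ENNReal.one_ne_top hLle)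
      refine (ENNReal.toReal_eq_toReal_iff' (measure_ne_top _ _)
        (ENNReal.add_ne_top.mpr ⟨hfin2, hfin3⟩)).mp ?_
      rw [ENNReal.toReal_add hfin2 hfin3, ENNReal.toReal_mul, ENNReal.toReal_mul,
        ENNReal.toReal_mul, ENNReal.toReal_ofReal (by linarith : (0:ℝ) ≤ 1 - μpar),
        ENNReal.toReal_ofReal hμ0, Set.inter_comm (X ⁻¹' A) S, hreal]
      ring
    -- integrate the identity map against both sides of hkey
    have hid : ∀ μ' : Measure (EuclideanSpace ℝ (Fin d)),
        AEStronglyMeasurable (fun x : EuclideanSpace ℝ (Fin d) => x) μ' := fun μ' =>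
      aestronglyMeasurable_id
    have hIdmapP : Integrable (fun x : EuclideanSpace ℝ (Fin d) => x) (P.map X) :=
      (integrable_map_measure (hid _) hXmeas.aemeasurable).mpr hXint
    have hIdmap1 : Integrable (fun x : EuclideanSpace ℝ (Fin d) => x) ((P.restrict S).map X) :=
      (integrable_map_measure (hid _) hXmeas.aemeasurable).mpr hXint.restrict
    have hballm : MeasurableSet ((Metric.closedBall (0 : EuclideanSpace ℝ (Fin d)) B)ᶜ) :=
      measurableSet_closedBall.compl
    have hsndae : ∀ᵐ p ∂ρ, ‖(p.2 : EuclideanSpace ℝ (Fin d))‖ ≤ B := by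
      rw [ae_iff]
      have hset : {p : Ω × EuclideanSpace ℝ (Fin d) | ¬ ‖p.2‖ ≤ B}
          = Prod.snd ⁻¹' (Metric.closedBall 0 B)ᶜ := by
        ext p; simp [Metric.mem_closedBall, dist_zero_right]
      rw [hset, hρ_def, Measure.compProd_apply (measurable_snd hballm)]
      simp only [Set.preimage_preimage]
      have hz : ∀ ω, (κF ω) ((Metric.closedBall (0 : EuclideanSpace ℝ (Fin d)) B)ᶜ) = 0 :=
        fun ω => hQball ω
      simp [hz]
    have hsndint : Integrable (fun p : Ω × EuclideanSpace ℝ (Fin d) => p.2) ρ :=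
      (integrable_const B).mono' measurable_snd.aestronglyMeasurable hsndae
    have hIdmap2 : Integrable (fun x : EuclideanSpace ℝ (Fin d) => x) ν := by
      rw [hν_def]
      exact (integrable_map_measure (hid _) measurable_snd.aemeasurable).mpr hsndint
    have hint1 : ∫ x, x ∂((P.restrict S).map X) = ∫ ω in S, X ω ∂P :=
      integral_map hXmeas.aemeasurable (hid _)
    have hintm : ∫ x, x ∂(P.map X) = m :=
      integral_map hXmeas.aemeasurable (hid _)
    have hintν : ∫ x, x ∂ν = ∫ ω in S, b ω ∂P := by
      rw [hν_def]
      exact (integral_map measurable_snd.aemeasurable (hid _)).trans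
        (Measure.integral_compProd hsndint)
    have hfinal := congrArg (fun μ' : Measure (EuclideanSpace ℝ (Fin d)) =>
      ∫ x, x ∂μ') hkey
    beta_reduce at hfinal
    rw [hint1, integral_add_measure
        (hIdmapP.smul_measure (ENNReal.mul_ne_top ENNReal.ofReal_ne_top (measure_ne_top _ _)))
        (hIdmap2.smul_measure ENNReal.ofReal_ne_top),
      integral_smul_measure, integral_smul_measure, hintm, hintν,
      ENNReal.toReal_mul, ENNReal.toReal_ofReal (by linarith : (0:ℝ) ≤ 1 - μpar),
      ENNReal.toReal_ofReal hμ0] at hfinal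
    have hYsplit : ∫ ω in S, Y ω ∂P
        = (P S).toReal • ((1 - μpar) • m) + μpar • ∫ ω in S, b ω ∂P := by
      have hμb : Integrable (fun ω => μpar • b ω) (P.restrict S) := (hbint.restrict).smul μpar
      simp only [hY_def]
      rw [integral_add (integrable_const _) hμb, integral_const, integral_smul]
      simp [Measure.restrict_apply_univ, measureReal_def]
    rw [hYsplit, hfinal, smul_smul, mul_comm ((P S).toReal) (1 - μpar)]
  have hYcond : Y =ᵐ[P] P[X|G] :=
    ae_eq_condExp_of_forall_setIntegral_eq hG hXint (fun s hs _ => hYint.restrict)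
      (fun s hs _ => hsetInt s hs) (hYSM.aestronglyMeasurable)
  have part1 : ∀ᵐ ω ∂P, ‖(P[X|G]) ω - m‖ ≤ 2 * B * μpar := by
    filter_upwards [hYcond] with ω hω
    rw [← hω]
    exact hYnorm ω
  -- coordinate tools
  have hcoord : ∀ (v : EuclideanSpace ℝ (Fin d)) (i : Fin d), |v i| ≤ ‖v‖ := by
    intro v i
    rw [EuclideanSpace.norm_eq, ← Real.sqrt_sq_eq_abs]
    apply Real.sqrt_le_sqrt
    have h := Finset.single_le_sum (f := fun j => ‖v j‖ ^ 2)
      (fun j _ => sq_nonneg _) (Finset.mem_univ i)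
    simpa [Real.norm_eq_abs, sq_abs] using h
  have hnormsq : ∀ v : EuclideanSpace ℝ (Fin d), ‖v‖ ^ 2 = ∑ i, (v i) ^ 2 := by
    intro v
    rw [EuclideanSpace.norm_eq, Real.sq_sqrt (Finset.sum_nonneg fun i _ => sq_nonneg _)]
    simp [Real.norm_eq_abs, sq_abs]
  have hXi_meas : ∀ i : Fin d, Measurable fun ω => X ω i := fun i =>
    ((EuclideanSpace.proj (𝕜 := ℝ) i).continuous.measurable).comp hXmeas
  have hXi_bdd : ∀ i : Fin d, ∀ᵐ ω ∂P, ‖X ω i‖ ≤ B := fun i =>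
    hXbdd.mono fun ω h => by
      rw [Real.norm_eq_abs]; exact le_trans (hcoord (X ω) i) h
  have hXi_int : ∀ i : Fin d, Integrable (fun ω => X ω i) P := fun i =>
    (integrable_const B).mono' (hXi_meas i).aestronglyMeasurable (hXi_bdd i)
  have hYi_SM : ∀ i : Fin d, StronglyMeasurable[G] fun ω => Y ω i := fun i =>
    (EuclideanSpace.proj (𝕜 := ℝ) i).continuous.comp_stronglyMeasurable hYSM
  have hYi_bdd : ∀ (i : Fin d) ω, ‖Y ω i‖ ≤ B := fun i ω => by
    rw [Real.norm_eq_abs]; exact le_trans (hcoord (Y ω) i) (hYb ω)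
  have hYi_int : ∀ i : Fin d, Integrable (fun ω => Y ω i) P := fun i =>
    (integrable_const B).mono' ((hYi_SM i).mono hG).aestronglyMeasurable
      (Filter.Eventually.of_forall (hYi_bdd i))
  have hproj_apply : ∀ (f : Ω → EuclideanSpace ℝ (Fin d)) (i : Fin d),
      (fun ω => (EuclideanSpace.proj (𝕜 := ℝ) i) (f ω)) = fun ω => f ω i := fun f i => rfl
  have hYi_cond : ∀ i : Fin d, (fun ω => Y ω i) =ᵐ[P] P[(fun ω => X ω i)|G] := by
    intro i
    refine ae_eq_condExp_of_forall_setIntegral_eq hG (hXi_int i)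
      (fun s hs _ => (hYi_int i).restrict) (fun s hs _ => ?_)
      ((hYi_SM i).aestronglyMeasurable)
    have h2 := congrArg (EuclideanSpace.proj (𝕜 := ℝ) i) (hsetInt s hs)
    rwa [← ContinuousLinearMap.integral_comp_comm _ hYint.restrict,
      ← ContinuousLinearMap.integral_comp_comm _ hXint.restrict,
      hproj_apply Y i, hproj_apply X i] at h2
  have hmi_bdd : ∀ i : Fin d, |m i| ≤ B := fun i => le_trans (hcoord m i) hmB
  -- cross term vanishes
  have hcross : ∀ i : Fin d, ∫ ω, (Y ω i - m i) * (X ω i - Y ω i) ∂P = 0 := by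
    intro i
    have hgSM : StronglyMeasurable[G] fun ω => Y ω i - m i :=
      (hYi_SM i).sub stronglyMeasurable_const
    have hhint : Integrable (fun ω => X ω i - Y ω i) P := (hXi_int i).sub (hYi_int i)
    have hghint : Integrable
        ((fun ω => Y ω i - m i) * fun ω => X ω i - Y ω i) P := by
      refine (integrable_const ((2 * B) * (2 * B))).mono'
        ((((hgSM.mono hG)).aestronglyMeasurable).mul hhint.1) ?_
      filter_upwards [hXi_bdd i] with ω hω
      have h1 : |Y ω i - m i| ≤ 2 * B := by
        have := hYi_bdd i ω; rw [Real.norm_eq_abs] at this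
        have := hmi_bdd i
        calc |Y ω i - m i| ≤ |Y ω i| + |m i| := abs_sub _ _
          _ ≤ 2 * B := by linarith [hYi_bdd i ω, (Real.norm_eq_abs (Y ω i)) ▸ hYi_bdd i ω]
      have h2 : |X ω i - Y ω i| ≤ 2 * B := by
        rw [Real.norm_eq_abs] at hω
        have h3 := hYi_bdd i ω; rw [Real.norm_eq_abs] at h3
        calc |X ω i - Y ω i| ≤ |X ω i| + |Y ω i| := abs_sub _ _
          _ ≤ 2 * B := by linarith
      rw [Pi.mul_apply, Real.norm_eq_abs, abs_mul]
      exact mul_le_mul h1 h2 (abs_nonneg _) (by linarith [hB.le])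
    have hmul := condExp_mul_of_stronglyMeasurable_left hgSM hghint hhint
    have hzero : (P[(fun ω => X ω i - Y ω i)|G]) =ᵐ[P] 0 := by
      have hsub := condExp_sub (m := G) (hXi_int i) (hYi_int i)
      have hYfix : (P[(fun ω => Y ω i)|G]) = fun ω => Y ω i :=
        condExp_of_stronglyMeasurable hG (hYi_SM i) (hYi_int i)
      calc (P[(fun ω => X ω i - Y ω i)|G])
          =ᵐ[P] P[(fun ω => X ω i)|G] - P[(fun ω => Y ω i)|G] := hsub
        _ =ᵐ[P] (fun ω => Y ω i) - fun ω => Y ω i := by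
            refine Filter.EventuallyEq.sub (hYi_cond i).symm ?_
            rw [hYfix]
        _ = 0 := by simp
    have hint0 : ∫ ω, ((fun ω => Y ω i - m i) * fun ω => X ω i - Y ω i) ω ∂P = 0 := by
      rw [← integral_condExp hG]
      rw [integral_congr_ae (hmul.trans ?_)]
      · exact integral_zero _ _
      · calc (fun ω => Y ω i - m i) * (P[(fun ω => X ω i - Y ω i)|G])
            =ᵐ[P] (fun ω => Y ω i - m i) * 0 :=
              Filter.EventuallyEq.mul Filter.EventuallyEq.rfl hzero
          _ = 0 := by simp
    simpa using hint0
  -- integrability of coordinate squares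
  have sq_int : ∀ (f : Ω → ℝ), AEStronglyMeasurable f P → (∀ᵐ ω ∂P, |f ω| ≤ 2 * B) →
      Integrable (fun ω => (f ω) ^ 2) P := by
    intro f hf hb
    have h : (fun ω => (f ω) ^ 2) = fun ω => f ω * f ω := funext fun ω => sq (f ω)
    rw [h]
    refine (integrable_const ((2 * B) * (2 * B))).mono' (hf.mul hf) ?_
    filter_upwards [hb] with ω hω
    rw [Real.norm_eq_abs, abs_mul]
    exact mul_le_mul hω hω (abs_nonneg _) (by linarith [hB.le])
  have hXm_sq_int : ∀ i : Fin d, Integrable (fun ω => (X ω i - m i) ^ 2) P := fun i =>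
    sq_int _ ((hXi_meas i).sub measurable_const).aestronglyMeasurable
      ((hXi_bdd i).mono fun ω h => by
        rw [Real.norm_eq_abs] at h
        calc |X ω i - m i| ≤ |X ω i| + |m i| := abs_sub _ _
          _ ≤ 2 * B := by linarith [hmi_bdd i])
  have hXY_sq_int : ∀ i : Fin d, Integrable (fun ω => (X ω i - Y ω i) ^ 2) P := fun i =>
    sq_int _ (((hXi_meas i).aestronglyMeasurable).sub
        ((hYi_SM i).mono hG).aestronglyMeasurable)
      ((hXi_bdd i).mono fun ω h => by
        rw [Real.norm_eq_abs] at h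
        have h3 := hYi_bdd i ω; rw [Real.norm_eq_abs] at h3
        calc |X ω i - Y ω i| ≤ |X ω i| + |Y ω i| := abs_sub _ _
          _ ≤ 2 * B := by linarith)
  have hYm_sq_int : ∀ i : Fin d, Integrable (fun ω => (Y ω i - m i) ^ 2) P := fun i =>
    sq_int _ (((hYi_SM i).mono hG).aestronglyMeasurable.sub aestronglyMeasurable_const)
      (Filter.Eventually.of_forall fun ω => by
        have h3 := hYi_bdd i ω; rw [Real.norm_eq_abs] at h3
        calc |Y ω i - m i| ≤ |Y ω i| + |m i| := abs_sub _ _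
          _ ≤ 2 * B := by linarith [hmi_bdd i])
  have hcross_int : ∀ i : Fin d,
      Integrable (fun ω => 2 * ((Y ω i - m i) * (X ω i - Y ω i))) P := by
    intro i
    refine (integrable_const (2 * ((2 * B) * (2 * B)))).mono'
      ((((((hYi_SM i).mono hG).aestronglyMeasurable.sub aestronglyMeasurable_const)).mul
        (((hXi_meas i).aestronglyMeasurable).sub
          ((hYi_SM i).mono hG).aestronglyMeasurable)).const_mul 2) ?_
    filter_upwards [hXi_bdd i] with ω hω
    rw [Real.norm_eq_abs] at hω
    have h3 := hYi_bdd i ω; rw [Real.norm_eq_abs] at h3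
    have h1 : |Y ω i - m i| ≤ 2 * B := by
      calc |Y ω i - m i| ≤ |Y ω i| + |m i| := abs_sub _ _
        _ ≤ 2 * B := by linarith [hmi_bdd i]
    have h2 : |X ω i - Y ω i| ≤ 2 * B := by
      calc |X ω i - Y ω i| ≤ |X ω i| + |Y ω i| := abs_sub _ _
        _ ≤ 2 * B := by linarith
    rw [Real.norm_eq_abs, abs_mul, abs_two]
    have : |(Y ω i - m i) * (X ω i - Y ω i)| ≤ (2 * B) * (2 * B) := by
      rw [abs_mul]; exact mul_le_mul h1 h2 (abs_nonneg _) (by linarith [hB.le])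
    linarith
  -- Pythagoras per coordinate
  have key2 : ∀ i : Fin d, ∫ ω, (X ω i - m i) ^ 2 ∂P
      = ∫ ω, (X ω i - Y ω i) ^ 2 ∂P + ∫ ω, (Y ω i - m i) ^ 2 ∂P := by
    intro i
    have hptw : (fun ω => (X ω i - m i) ^ 2)
        = fun ω => ((X ω i - Y ω i) ^ 2 + (Y ω i - m i) ^ 2)
            + 2 * ((Y ω i - m i) * (X ω i - Y ω i)) := funext fun ω => by ring
    have hA : Integrable (fun ω => (X ω i - Y ω i) ^ 2 + (Y ω i - m i) ^ 2) P :=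
      (hXY_sq_int i).add (hYm_sq_int i)
    rw [hptw, integral_add hA (hcross_int i), integral_add (hXY_sq_int i) (hYm_sq_int i)]
    have h2 : ∫ ω, 2 * ((Y ω i - m i) * (X ω i - Y ω i)) ∂P
        = 2 * ∫ ω, (Y ω i - m i) * (X ω i - Y ω i) ∂P := integral_const_mul 2 _
    rw [h2, hcross i]
    ring
  -- sum over coordinates
  have hsub_apply : ∀ (u v : EuclideanSpace ℝ (Fin d)) (i : Fin d), (u - v) i = u i - v i :=
    fun u v i => rfl
  have hXm_sum : ∫ ω, ‖X ω - m‖ ^ 2 ∂P = ∑ i, ∫ ω, (X ω i - m i) ^ 2 ∂P := by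
    rw [← integral_finset_sum _ fun i _ => hXm_sq_int i]
    refine integral_congr_ae (Filter.Eventually.of_forall fun ω => ?_)
    show ‖X ω - m‖ ^ 2 = ∑ i, (X ω i - m i) ^ 2
    rw [hnormsq (X ω - m)]
    exact Finset.sum_congr rfl fun i _ => by rw [hsub_apply]
  have hXY_sum : ∫ ω, ‖X ω - Y ω‖ ^ 2 ∂P = ∑ i, ∫ ω, (X ω i - Y ω i) ^ 2 ∂P := by
    rw [← integral_finset_sum _ fun i _ => hXY_sq_int i]
    refine integral_congr_ae (Filter.Eventually.of_forall fun ω => ?_)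
    show ‖X ω - Y ω‖ ^ 2 = ∑ i, (X ω i - Y ω i) ^ 2
    rw [hnormsq (X ω - Y ω)]
    exact Finset.sum_congr rfl fun i _ => by rw [hsub_apply]
  have hYm_sum : ∫ ω, ‖Y ω - m‖ ^ 2 ∂P = ∑ i, ∫ ω, (Y ω i - m i) ^ 2 ∂P := by
    rw [← integral_finset_sum _ fun i _ => hYm_sq_int i]
    refine integral_congr_ae (Filter.Eventually.of_forall fun ω => ?_)
    show ‖Y ω - m‖ ^ 2 = ∑ i, (Y ω i - m i) ^ 2
    rw [hnormsq (Y ω - m)]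
    exact Finset.sum_congr rfl fun i _ => by rw [hsub_apply]
  have hcondsq : ∫ ω, ‖X ω - (P[X|G]) ω‖ ^ 2 ∂P = ∫ ω, ‖X ω - Y ω‖ ^ 2 ∂P := by
    refine integral_congr_ae ?_
    filter_upwards [hYcond] with ω h
    rw [← h]
  have hdiff : (∫ ω, ‖X ω - m‖ ^ 2 ∂P) - (∫ ω, ‖X ω - (P[X|G]) ω‖ ^ 2 ∂P)
      = ∫ ω, ‖Y ω - m‖ ^ 2 ∂P := by
    rw [hcondsq, hXm_sum, hXY_sum, hYm_sum, ← Finset.sum_sub_distrib]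
    exact Finset.sum_congr rfl fun i _ => by rw [key2 i]; ring
  have hYmsq_int : Integrable (fun ω => ‖Y ω - m‖ ^ 2) P := by
    refine sq_int _ ((hYSMF.sub stronglyMeasurable_const).norm.aestronglyMeasurable) ?_
    refine Filter.Eventually.of_forall fun ω => ?_
    rw [abs_of_nonneg (norm_nonneg _)]
    calc ‖Y ω - m‖ ≤ ‖Y ω‖ + ‖m‖ := norm_sub_le _ _
      _ ≤ 2 * B := by linarith [hYb ω]
  refine ⟨part1, ?_, ?_⟩
  · rw [hdiff]
    exact integral_nonneg fun ω => sq_nonneg _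
  · rw [hdiff]
    have hb2 : ∀ ω, ‖Y ω - m‖ ^ 2 ≤ 4 * B ^ 2 * μpar ^ 2 := fun ω => by
      nlinarith [hYnorm ω, norm_nonneg (Y ω - m)]
    calc ∫ ω, ‖Y ω - m‖ ^ 2 ∂P ≤ ∫ _ω, 4 * B ^ 2 * μpar ^ 2 ∂P :=
          integral_mono hYmsq_int (integrable_const _) hb2
      _ = 4 * B ^ 2 * μpar ^ 2 := by simp
end

section
/- Let (Ω, F, P) be a probability space, G ⊆ F a sub-σ-algebra, B > 0 and μ ∈ [0,1], and let X : Ω → ℝ^d satisfy the noisy-encoder condition with parameters (μ, B) relative to G, with MMSE reconstruction X̃ := E[X | G]. Then for every G-measurable random vector X̂ : Ω → ℝ^d whose law equals the law of X, one has |E‖X − X̂‖² − 2·E‖X − X̃‖²| ≤ 12 B² μ. In particular, in the low-rate (noisy-encoder) regime, every zero-perception reconstruction measurable with respect to the encoder output — in particular any reconstruction satisfying the zero joint-distribution perception constraint — has distortion equal to twice the MMSE distortion up to an additive error of order μ. -/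
open MeasureTheory ProbabilityTheory
open scoped RealInnerProductSpace ENNReal

private lemma aux_norm_le_of_dense {d : ℕ} {D : Set (EuclideanSpace ℝ (Fin d))} (hD : Dense D)
    {y : EuclideanSpace ℝ (Fin d)} {r : ℝ} (hr : 0 ≤ r)
    (h : ∀ v ∈ D, ⟪v, y⟫ ≤ r * ‖v‖) : ‖y‖ ≤ r := by
  by_contra hlt
  push_neg at hlt
  have hy0 : 0 < ‖y‖ := lt_of_le_of_lt hr hlt
  have key : ‖y‖ * ‖y‖ ≤ r * ‖y‖ + 0 := by
    rw [add_zero]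
    refine le_of_forall_pos_le_add fun ε' hε' => ?_
    have hden : (0:ℝ) < ‖y‖ + r + 1 := by positivity
    set ε := ε' / (‖y‖ + r + 1) with hεdef
    have hεpos : 0 < ε := div_pos hε' hden
    obtain ⟨v, hvD, hvy⟩ := hD.exists_dist_lt y hεpos
    have hdist : ‖v - y‖ < ε := by rw [norm_sub_rev]; rwa [dist_eq_norm] at hvy
    have h1 : ⟪v, y⟫ = ‖y‖ * ‖y‖ + ⟪v - y, y⟫ := by
      rw [← real_inner_self_eq_norm_mul_norm]
      rw [inner_sub_left]; ring
    have h2 : -(ε * ‖y‖) ≤ ⟪v - y, y⟫ := by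
      have := abs_real_inner_le_norm (v - y) y
      have hb : ‖v - y‖ * ‖y‖ ≤ ε * ‖y‖ :=
        mul_le_mul_of_nonneg_right hdist.le (norm_nonneg _)
      nlinarith [abs_le.mp (this.trans hb)]
    have h3 : ‖v‖ ≤ ‖y‖ + ε := by
      calc ‖v‖ ≤ ‖y‖ + ‖v - y‖ := by
            have := norm_sub_norm_le v y; linarith [norm_sub_norm_le v y,
              norm_le_insert' v y]
        _ ≤ ‖y‖ + ε := by linarith
    have h4 := h v hvD
    have h5 : r * ‖v‖ ≤ r * (‖y‖ + ε) := mul_le_mul_of_nonneg_left h3 hr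
    have h6 : ε * (r + ‖y‖) ≤ ε' := by
      rw [hεdef, div_mul_eq_mul_div, div_le_iff₀ hden]
      have : 0 < r + ‖y‖ := by positivity
      nlinarith
    nlinarith
  have : ‖y‖ ≤ r := by
    have := (mul_le_mul_iff_left₀ hy0).mp (by linarith : ‖y‖ * ‖y‖ ≤ r * ‖y‖)
    exact this
  linarith

private lemma aux_ae_nonneg {Ω : Type*} {G F : MeasurableSpace Ω} (hG : G ≤ F)
    (P : Measure Ω) [IsFiniteMeasure P] {f : Ω → ℝ}
    (hmeas : StronglyMeasurable[G] f) (hint : Integrable f P)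
    (h : ∀ S : Set Ω, MeasurableSet[G] S → 0 ≤ ∫ ω in S, f ω ∂P) : 0 ≤ᵐ[P] f := by
  have hint' : Integrable f (P.trim hG) := hint.trim hG hmeas
  have h' : 0 ≤ᵐ[P.trim hG] f := by
    refine ae_nonneg_of_forall_setIntegral_nonneg hint' fun S hS _ => ?_
    rw [← setIntegral_trim hG hmeas hS]
    exact h S hS
  exact ae_le_of_ae_le_trim h'

private lemma aux_measure_eq {Ω : Type*} {G F : MeasurableSpace Ω} (hG : G ≤ F)
    (P : Measure Ω) [IsProbabilityMeasure P] {d : ℕ} {μpar : ℝ}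
    (hμ0 : 0 ≤ μpar) (hμ1 : μpar ≤ 1)
    {X : Ω → EuclideanSpace ℝ (Fin d)} (hXmeas : Measurable X)
    {Q : Ω → Measure (EuclideanSpace ℝ (Fin d))}
    (hQmeas : Measurable[F] Q)
    (hQprob : ∀ ω, IsProbabilityMeasure (Q ω))
    (hQcond : ∀ A : Set (EuclideanSpace ℝ (Fin d)), MeasurableSet A →
      (P[(X ⁻¹' A).indicator (fun _ => (1 : ℝ)) | G]) =ᵐ[P]
        (fun ω => (1 - μpar) * (P (X ⁻¹' A)).toReal + μpar * (Q ω A).toReal))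
    {S : Set Ω} (hS : MeasurableSet[G] S) :
    (P.restrict S).map X =
      (ENNReal.ofReal (1 - μpar) * P S) • P.map X +
        ENNReal.ofReal μpar • (P.restrict S).bind Q := by
  have hSF : MeasurableSet S := hG _ hS
  ext A hA
  have hQA : Measurable fun ω => Q ω A := (Measure.measurable_coe hA).comp hQmeas
  -- the bind term
  have hbind : ((P.restrict S).bind Q) A = ∫⁻ ω in S, Q ω A ∂P :=
    Measure.bind_apply hA hQmeas.aemeasurable
  set L : ℝ≥0∞ := ∫⁻ ω in S, Q ω A ∂P with hL
  have hLle : L ≤ P S := by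
    calc L ≤ ∫⁻ _ in S, 1 ∂P := lintegral_mono fun ω => prob_le_one
      _ = P S := by rw [setLIntegral_one]
  have hLfin : L ≠ ∞ := (hLle.trans_lt (measure_lt_top _ _)).ne
  -- integrate the conditional expectation identity over S
  have hind : Integrable ((X ⁻¹' A).indicator (fun _ => (1 : ℝ))) P :=
    (integrable_const (1 : ℝ)).indicator (hXmeas hA)
  have h1 : ∫ ω in S, (P[(X ⁻¹' A).indicator (fun _ => (1 : ℝ)) | G]) ω ∂P
      = (P (X ⁻¹' A ∩ S)).toReal := by
    rw [setIntegral_condExp hG hind hS]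
    rw [integral_indicator (hXmeas hA)]
    rw [Measure.restrict_restrict (hXmeas hA)]
    simp [measureReal_def, Measure.restrict_apply_univ]
  have h2 : ∫ ω in S, ((1 - μpar) * (P (X ⁻¹' A)).toReal + μpar * (Q ω A).toReal) ∂P
      = (1 - μpar) * (P (X ⁻¹' A)).toReal * (P S).toReal + μpar * L.toReal := by
    have hQint : Integrable (fun ω => (Q ω A).toReal) (P.restrict S) := by
      refine Integrable.mono' (integrable_const (1 : ℝ))
        (hQA.ennreal_toReal.aestronglyMeasurable) ?_
      refine Filter.Eventually.of_forall fun ω => ?_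
      rw [Real.norm_eq_abs, abs_of_nonneg ENNReal.toReal_nonneg]
      exact ENNReal.toReal_le_of_le_ofReal zero_le_one (by simpa using prob_le_one)
    rw [integral_add (integrable_const _) (hQint.const_mul _)]
    rw [integral_const, integral_const_mul]
    have h3 : ∫ ω in S, (Q ω A).toReal ∂P = L.toReal := by
      rw [hL]
      exact integral_toReal (hQA.aemeasurable.restrict)
        (Filter.Eventually.of_forall fun ω => measure_lt_top _ _)
    rw [h3]
    simp [measureReal_def, Measure.restrict_apply_univ]
    ring
  have hreal : (P (X ⁻¹' A ∩ S)).toReal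
      = (1 - μpar) * (P (X ⁻¹' A)).toReal * (P S).toReal + μpar * L.toReal := by
    rw [← h1, ← h2]
    exact integral_congr_ae (ae_restrict_of_ae (hQcond A hA))
  -- now lift to ℝ≥0∞
  have hmapA : (P.map X) A = P (X ⁻¹' A) := Measure.map_apply hXmeas hA
  have hLHS : ((P.restrict S).map X) A = P (X ⁻¹' A ∩ S) := by
    rw [Measure.map_apply hXmeas hA, Measure.restrict_apply (hXmeas hA)]
  rw [hLHS]
  rw [Measure.add_apply, Measure.smul_apply, Measure.smul_apply, smul_eq_mul, smul_eq_mul,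
    hbind, hmapA]
  have hfin1 : P (X ⁻¹' A ∩ S) ≠ ∞ := (measure_lt_top _ _).ne
  have hfin2 : ENNReal.ofReal (1 - μpar) * P S * P (X ⁻¹' A) + ENNReal.ofReal μpar * L ≠ ∞ := by
    refine ENNReal.add_ne_top.mpr ⟨?_, ?_⟩
    · exact ENNReal.mul_ne_top (ENNReal.mul_ne_top ENNReal.ofReal_ne_top (measure_ne_top _ _))
        (measure_ne_top _ _)
    · exact ENNReal.mul_ne_top ENNReal.ofReal_ne_top hLfin
  rw [← ENNReal.toReal_eq_toReal_iff' hfin1 hfin2]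
  rw [ENNReal.toReal_add (by
      exact ENNReal.mul_ne_top (ENNReal.mul_ne_top ENNReal.ofReal_ne_top (measure_ne_top _ _))
        (measure_ne_top _ _))
    (ENNReal.mul_ne_top ENNReal.ofReal_ne_top hLfin),
    ENNReal.toReal_mul, ENNReal.toReal_mul, ENNReal.toReal_mul,
    ENNReal.toReal_ofReal (by linarith), ENNReal.toReal_ofReal hμ0]
  rw [hreal]; ring

private lemma aux_setIntegral_inner_bound {Ω : Type*} {G F : MeasurableSpace Ω} (hG : G ≤ F)
    (P : Measure Ω) [IsProbabilityMeasure P] {d : ℕ} {μpar B : ℝ}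
    (hμ0 : 0 ≤ μpar) (hμ1 : μpar ≤ 1) (hB : 0 < B)
    {X : Ω → EuclideanSpace ℝ (Fin d)} (hXmeas : Measurable X)
    (hXbdd : ∀ᵐ ω ∂P, ‖X ω‖ ≤ B)
    {Q : Ω → Measure (EuclideanSpace ℝ (Fin d))}
    (hQmeas : Measurable[F] Q)
    (hQprob : ∀ ω, IsProbabilityMeasure (Q ω))
    (hQball : ∀ ω, Q ω (Metric.closedBall 0 B)ᶜ = 0)
    (hQcond : ∀ A : Set (EuclideanSpace ℝ (Fin d)), MeasurableSet A →
      (P[(X ⁻¹' A).indicator (fun _ => (1 : ℝ)) | G]) =ᵐ[P]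
        (fun ω => (1 - μpar) * (P (X ⁻¹' A)).toReal + μpar * (Q ω A).toReal))
    (v : EuclideanSpace ℝ (Fin d))
    {S : Set Ω} (hS : MeasurableSet[G] S) :
    |(∫ ω in S, ⟪v, X ω⟫ ∂P) - (1 - μpar) * ⟪v, ∫ ω, X ω ∂P⟫ * (P S).toReal|
      ≤ μpar * (B * ‖v‖) * (P S).toReal := by
  have hXint : Integrable X P :=
    Integrable.mono' (integrable_const B) hXmeas.aestronglyMeasurable hXbdd
  set κ : Measure (EuclideanSpace ℝ (Fin d)) := (P.restrict S).bind Q with hκ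
  have hκuniv : κ Set.univ = P S := by
    rw [hκ, Measure.bind_apply MeasurableSet.univ hQmeas.aemeasurable]
    calc ∫⁻ ω in S, Q ω Set.univ ∂P = ∫⁻ _ in S, 1 ∂P := by
          refine lintegral_congr fun ω => ?_
          haveI := hQprob ω; exact measure_univ
      _ = P S := setLIntegral_one _
  haveI hκfin : IsFiniteMeasure κ := ⟨by rw [hκuniv]; exact measure_lt_top _ _⟩
  have hballmeas : MeasurableSet (Metric.closedBall (0 : EuclideanSpace ℝ (Fin d)) B) :=
    Metric.isClosed_closedBall.measurableSet
  have hκball : κ (Metric.closedBall 0 B)ᶜ = 0 := by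
    rw [hκ, Measure.bind_apply hballmeas.compl hQmeas.aemeasurable]
    simp [hQball]
  have hκae : ∀ᵐ x ∂κ, ‖x‖ ≤ B := by
    rw [ae_iff]
    convert hκball using 2
    ext x
    simp [Metric.mem_closedBall, dist_zero_right]
  have hcont : Continuous fun x : EuclideanSpace ℝ (Fin d) => ⟪v, x⟫ :=
    (innerSL ℝ v).continuous
  have hgκint : Integrable (fun x => ⟪v, x⟫) κ := by
    refine Integrable.mono' (integrable_const (‖v‖ * B)) hcont.aestronglyMeasurable ?_
    filter_upwards [hκae] with x hx
    rw [Real.norm_eq_abs]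
    exact (abs_real_inner_le_norm v x).trans
      (mul_le_mul_of_nonneg_left hx (norm_nonneg _))
  have hgκbd : |∫ x, ⟪v, x⟫ ∂κ| ≤ ‖v‖ * B * (P S).toReal := by
    have h := norm_integral_le_of_norm_le_const (μ := κ)
      (f := fun x => ⟪v, x⟫) (C := ‖v‖ * B) ?_
    · rw [Real.norm_eq_abs] at h
      rwa [measureReal_def, hκuniv] at h
    · filter_upwards [hκae] with x hx
      rw [Real.norm_eq_abs]
      exact (abs_real_inner_le_norm v x).trans
        (mul_le_mul_of_nonneg_left hx (norm_nonneg _))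
  have hmapae : ∀ᵐ x ∂(P.map X), ‖x‖ ≤ B := by
    rw [MeasureTheory.ae_map_iff hXmeas.aemeasurable]
    · exact hXbdd
    · exact measurableSet_le (measurable_norm) measurable_const
  have hgmapint : Integrable (fun x => ⟪v, x⟫) (P.map X) := by
    refine Integrable.mono' (integrable_const (‖v‖ * B)) hcont.aestronglyMeasurable ?_
    filter_upwards [hmapae] with x hx
    rw [Real.norm_eq_abs]
    exact (abs_real_inner_le_norm v x).trans
      (mul_le_mul_of_nonneg_left hx (norm_nonneg _))
  have hintmap : ∫ x, ⟪v, x⟫ ∂(P.map X) = ⟪v, ∫ ω, X ω ∂P⟫ := by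
    rw [integral_map hXmeas.aemeasurable hcont.aestronglyMeasurable]
    have := (innerSL ℝ v).integral_comp_comm hXint
    simpa using this
  have hkey : ∫ ω in S, ⟪v, X ω⟫ ∂P
      = (1 - μpar) * (P S).toReal * ⟪v, ∫ ω, X ω ∂P⟫ + μpar * ∫ x, ⟪v, x⟫ ∂κ := by
    have h0 : ∫ ω in S, ⟪v, X ω⟫ ∂P = ∫ x, ⟪v, x⟫ ∂((P.restrict S).map X) := by
      rw [integral_map hXmeas.aemeasurable.restrict hcont.aestronglyMeasurable]
    rw [h0, aux_measure_eq hG P hμ0 hμ1 hXmeas hQmeas hQprob hQcond hS]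
    rw [integral_add_measure
      (hgmapint.smul_measure (ENNReal.mul_ne_top ENNReal.ofReal_ne_top (measure_ne_top _ _)))
      (hgκint.smul_measure ENNReal.ofReal_ne_top)]
    rw [integral_smul_measure, integral_smul_measure, hintmap]
    rw [ENNReal.toReal_mul, ENNReal.toReal_ofReal (by linarith), ENNReal.toReal_ofReal hμ0]
    simp [smul_eq_mul]
  rw [hkey]
  have habs : |(1 - μpar) * (P S).toReal * ⟪v, ∫ ω, X ω ∂P⟫ + μpar * ∫ x, ⟪v, x⟫ ∂κ
      - (1 - μpar) * ⟪v, ∫ ω, X ω ∂P⟫ * (P S).toReal| = μpar * |∫ x, ⟪v, x⟫ ∂κ| := by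
    rw [show (1 - μpar) * (P S).toReal * ⟪v, ∫ ω, X ω ∂P⟫ + μpar * ∫ x, ⟪v, x⟫ ∂κ
      - (1 - μpar) * ⟪v, ∫ ω, X ω ∂P⟫ * (P S).toReal = μpar * ∫ x, ⟪v, x⟫ ∂κ by ring]
    rw [abs_mul, abs_of_nonneg hμ0]
  rw [habs]
  calc μpar * |∫ x, ⟪v, x⟫ ∂κ| ≤ μpar * (‖v‖ * B * (P S).toReal) :=
        mul_le_mul_of_nonneg_left hgκbd hμ0
    _ = μpar * (B * ‖v‖) * (P S).toReal := by ring

private lemma aux_nearconst {Ω : Type*} {G F : MeasurableSpace Ω} (hG : G ≤ F)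
    (P : Measure Ω) [IsProbabilityMeasure P] {d : ℕ} {μpar B : ℝ}
    (hμ0 : 0 ≤ μpar) (hμ1 : μpar ≤ 1) (hB : 0 < B)
    {X : Ω → EuclideanSpace ℝ (Fin d)} (hXmeas : Measurable X)
    (hXbdd : ∀ᵐ ω ∂P, ‖X ω‖ ≤ B)
    {Q : Ω → Measure (EuclideanSpace ℝ (Fin d))}
    (hQmeas : Measurable[F] Q)
    (hQprob : ∀ ω, IsProbabilityMeasure (Q ω))
    (hQball : ∀ ω, Q ω (Metric.closedBall 0 B)ᶜ = 0)
    (hQcond : ∀ A : Set (EuclideanSpace ℝ (Fin d)), MeasurableSet A →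
      (P[(X ⁻¹' A).indicator (fun _ => (1 : ℝ)) | G]) =ᵐ[P]
        (fun ω => (1 - μpar) * (P (X ⁻¹' A)).toReal + μpar * (Q ω A).toReal)) :
    ∀ᵐ ω ∂P, ‖(P[X|G]) ω - (1 - μpar) • (∫ ω', X ω' ∂P)‖ ≤ μpar * B := by
  have hXint : Integrable X P :=
    Integrable.mono' (integrable_const B) hXmeas.aestronglyMeasurable hXbdd
  obtain ⟨D, hDc, hDd⟩ :=
    TopologicalSpace.exists_countable_dense (EuclideanSpace ℝ (Fin d))
  have hdir : ∀ v : EuclideanSpace ℝ (Fin d), ∀ᵐ ω ∂P,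
      ⟪v, (P[X|G]) ω⟫ - (1 - μpar) * ⟪v, ∫ ω', X ω' ∂P⟫ ≤ μpar * (B * ‖v‖) := by
    intro v
    set c : ℝ := μpar * (B * ‖v‖) + (1 - μpar) * ⟪v, ∫ ω', X ω' ∂P⟫ with hc
    have hcont : Continuous fun x : EuclideanSpace ℝ (Fin d) => ⟪v, x⟫ :=
      (innerSL ℝ v).continuous
    have hfmeas : StronglyMeasurable[G]
        (fun ω => c - ⟪v, (P[X|G]) ω⟫) :=
      stronglyMeasurable_const.sub
        (hcont.comp_stronglyMeasurable stronglyMeasurable_condExp)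
    have hfint : Integrable (fun ω => c - ⟪v, (P[X|G]) ω⟫) P := by
      refine (integrable_const c).sub ?_
      exact (innerSL ℝ v).integrable_comp integrable_condExp
    have h0 : 0 ≤ᵐ[P] fun ω => c - ⟪v, (P[X|G]) ω⟫ := by
      refine aux_ae_nonneg hG P hfmeas hfint fun S hS => ?_
      have hSint : ∫ ω in S, ⟪v, (P[X|G]) ω⟫ ∂P = ∫ ω in S, ⟪v, X ω⟫ ∂P := by
        have h1 := (innerSL ℝ v).integral_comp_comm
          (integrable_condExp (f := X) (m := G)).integrableOn (μ := P.restrict S)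
        have h2 := (innerSL ℝ v).integral_comp_comm hXint.integrableOn (μ := P.restrict S)
        simp only [innerSL_apply_apply] at h1 h2
        rw [h1, h2, setIntegral_condExp hG hXint hS]
      have hii : Integrable (fun ω => ⟪v, (P[X|G]) ω⟫) P := by
        have := (innerSL ℝ v).integrable_comp (integrable_condExp (f := X) (m := G) (μ := P))
        simpa using this
      rw [integral_sub (integrable_const c).integrableOn hii.integrableOn, hSint]
      rw [integral_const]
      have hb := aux_setIntegral_inner_bound hG P hμ0 hμ1 hB hXmeas hXbdd hQmeas hQprob
        hQball hQcond v hS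
      have hb' := (abs_le.mp hb).2
      simp only [smul_eq_mul, measureReal_def, Measure.restrict_apply_univ]
      rw [hc]
      nlinarith [hb']
    filter_upwards [h0] with ω hω
    simp only [Pi.zero_apply] at hω
    rw [hc] at hω
    linarith
  have hall : ∀ᵐ ω ∂P, ∀ v ∈ D,
      ⟪v, (P[X|G]) ω⟫ - (1 - μpar) * ⟪v, ∫ ω', X ω' ∂P⟫ ≤ μpar * (B * ‖v‖) :=
    (ae_ball_iff hDc).2 fun v _ => hdir v
  filter_upwards [hall] with ω hω
  refine aux_norm_le_of_dense hDd (mul_nonneg hμ0 hB.le) fun v hv => ?_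
  rw [inner_sub_right, real_inner_smul_right]
  have := hω v hv
  nlinarith [this]

private lemma aux_coord_le {d : ℕ} (y : EuclideanSpace ℝ (Fin d)) (i : Fin d) :
    |y i| ≤ ‖y‖ := by
  have h1 : ⟪EuclideanSpace.single i (1 : ℝ), y⟫ = y i := by
    simp [EuclideanSpace.inner_single_left]
  have h2 := abs_real_inner_le_norm (EuclideanSpace.single i (1 : ℝ)) y
  rwa [h1, EuclideanSpace.norm_single, norm_one, one_mul] at h2

private lemma aux_coord_condexp {Ω : Type*} {G F : MeasurableSpace Ω} (hG : G ≤ F)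
    (P : Measure Ω) [IsProbabilityMeasure P] {d : ℕ}
    {X : Ω → EuclideanSpace ℝ (Fin d)} (hXint : Integrable X P) (i : Fin d) :
    (fun ω => (P[X|G]) ω i) =ᵐ[P] (P[fun ω => X ω i|G]) := by
  have hXi : Integrable (fun ω => X ω i) P := by
    have := (EuclideanSpace.proj (𝕜 := ℝ) i).integrable_comp hXint
    simpa using this
  refine ae_eq_condExp_of_forall_setIntegral_eq hG hXi ?_ ?_ ?_
  · intro s _ _
    have := ((EuclideanSpace.proj (𝕜 := ℝ) i).integrable_comp
      (integrable_condExp (f := X) (m := G) (μ := P))).integrableOn (s := s)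
    simpa using this
  · intro s hs _
    have h1 := (EuclideanSpace.proj (𝕜 := ℝ) i).integral_comp_comm
      ((integrable_condExp (f := X) (m := G) (μ := P)).integrableOn (s := s))
    have h2 := (EuclideanSpace.proj (𝕜 := ℝ) i).integral_comp_comm
      (hXint.integrableOn (s := s))
    calc ∫ x in s, (P[X|G]) x i ∂P = (∫ x in s, (P[X|G]) x ∂P) i := h1
      _ = (∫ x in s, X x ∂P) i := by rw [setIntegral_condExp hG hXint hs]
      _ = ∫ x in s, X x i ∂P := h2.symm
  · exact StronglyMeasurable.aestronglyMeasurable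
      ((EuclideanSpace.proj (𝕜 := ℝ) i).continuous.comp_stronglyMeasurable
        stronglyMeasurable_condExp)

private lemma aux_pullout {Ω : Type*} {G F : MeasurableSpace Ω} (hG : G ≤ F)
    (P : Measure Ω) [IsProbabilityMeasure P] {d : ℕ} {B C : ℝ}
    {X : Ω → EuclideanSpace ℝ (Fin d)} (hXmeas : Measurable X)
    (hXbdd : ∀ᵐ ω ∂P, ‖X ω‖ ≤ B)
    {Y : Ω → EuclideanSpace ℝ (Fin d)} (hY : StronglyMeasurable[G] Y)
    (hYbdd : ∀ᵐ ω ∂P, ‖Y ω‖ ≤ C) :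
    ∫ ω, ⟪Y ω, X ω⟫ ∂P = ∫ ω, ⟪Y ω, (P[X|G]) ω⟫ ∂P := by
  have hXint : Integrable X P :=
    Integrable.mono' (integrable_const B) hXmeas.aestronglyMeasurable hXbdd
  have hYi : ∀ i : Fin d, StronglyMeasurable[G] (fun ω => Y ω i) := fun i =>
    (EuclideanSpace.proj (𝕜 := ℝ) i).continuous.comp_stronglyMeasurable hY
  have hYib : ∀ i : Fin d, ∀ᵐ ω ∂P, ‖Y ω i‖ ≤ C := fun i => by
    filter_upwards [hYbdd] with ω hω
    exact (aux_coord_le (Y ω) i).trans hω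
  have hXi : ∀ i : Fin d, Integrable (fun ω => X ω i) P := fun i => by
    have := (EuclideanSpace.proj (𝕜 := ℝ) i).integrable_comp hXint
    simpa using this
  have hXti : ∀ i : Fin d, Integrable (fun ω => (P[X|G]) ω i) P := fun i => by
    have := (EuclideanSpace.proj (𝕜 := ℝ) i).integrable_comp
      (integrable_condExp (f := X) (m := G) (μ := P))
    simpa using this
  have hYXi : ∀ i : Fin d, Integrable (fun ω => Y ω i * X ω i) P := fun i =>
    (hXi i).bdd_mul ((hYi i).mono hG).aestronglyMeasurable (hYib i)
  have hYXti : ∀ i : Fin d, Integrable (fun ω => Y ω i * (P[X|G]) ω i) P := fun i =>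
    (hXti i).bdd_mul ((hYi i).mono hG).aestronglyMeasurable (hYib i)
  have hinner : ∀ (a b : EuclideanSpace ℝ (Fin d)), ⟪a, b⟫ = ∑ i, a i * b i := by
    intro a b
    simp [PiLp.inner_apply, RCLike.inner_apply, conj_trivial, mul_comm]
  have hstep : ∀ i : Fin d,
      ∫ ω, Y ω i * X ω i ∂P = ∫ ω, Y ω i * (P[X|G]) ω i ∂P := by
    intro i
    have hpull := condExp_stronglyMeasurable_mul_of_bound hG (hYi i) (hXi i) C (hYib i)
    calc ∫ ω, Y ω i * X ω i ∂P
        = ∫ ω, (P[fun ω' => Y ω' i * X ω' i|G]) ω ∂P := (integral_condExp hG).symm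
      _ = ∫ ω, Y ω i * (P[fun ω' => X ω' i|G]) ω ∂P := integral_congr_ae hpull
      _ = ∫ ω, Y ω i * (P[X|G]) ω i ∂P := by
          refine integral_congr_ae ?_
          filter_upwards [aux_coord_condexp hG P hXint i] with ω hω
          rw [← hω]
  calc ∫ ω, ⟪Y ω, X ω⟫ ∂P = ∫ ω, ∑ i, Y ω i * X ω i ∂P := by simp_rw [hinner]
    _ = ∑ i, ∫ ω, Y ω i * X ω i ∂P := integral_finset_sum _ fun i _ => hYXi i
    _ = ∑ i, ∫ ω, Y ω i * (P[X|G]) ω i ∂P := Finset.sum_congr rfl fun i _ => hstep i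
    _ = ∫ ω, ∑ i, Y ω i * (P[X|G]) ω i ∂P := (integral_finset_sum _ fun i _ => hYXti i).symm
    _ = ∫ ω, ⟪Y ω, (P[X|G]) ω⟫ ∂P := by simp_rw [hinner]

/-- In the low-rate (noisy-encoder) regime, every `G`-measurable reconstruction `X̂` whose
law equals the law of the source `X` (zero perception loss) has distortion equal to twice
the MMSE distortion, up to an additive error of order `μ`:
`|E‖X − X̂‖² − 2·E‖X − X̃‖²| ≤ 12B²μ` where `X̃ = E[X|G]`. -/
theorem statement6 {Ω : Type*} {G F : MeasurableSpace Ω} (hG : G ≤ F)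
    (P : Measure Ω) [IsProbabilityMeasure P] {d : ℕ}
    (B μpar : ℝ) (hB : 0 < B) (hμ : μpar ∈ Set.Icc (0 : ℝ) 1)
    (X : Ω → EuclideanSpace ℝ (Fin d)) (hXmeas : Measurable X)
    (hXbdd : ∀ᵐ ω ∂P, ‖X ω‖ ≤ B)
    (hne : NoisyEncoder (G := G) P X μpar B)
    (Xhat : Ω → EuclideanSpace ℝ (Fin d)) (hXhat_meas : Measurable[G] Xhat)
    (hlaw : P.map Xhat = P.map X) :
    |(∫ ω, ‖X ω - Xhat ω‖ ^ 2 ∂P) - 2 * ∫ ω, ‖X ω - (P[X|G]) ω‖ ^ 2 ∂P|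
      ≤ 12 * B ^ 2 * μpar := by
  obtain ⟨hμ0, hμ1⟩ := hμ
  obtain ⟨Q, hQmeasG, hQprob, hQball, hQcond⟩ := hne
  have hQmeas : Measurable[F] Q :=
    Measure.measurable_of_measurable_coe Q fun s hs => (hQmeasG s hs).mono hG le_rfl
  set Xt : Ω → EuclideanSpace ℝ (Fin d) := P[X|G] with hXt
  set c : EuclideanSpace ℝ (Fin d) := (1 - μpar) • (∫ ω', X ω' ∂P) with hcdef
  have hXint : Integrable X P :=
    Integrable.mono' (integrable_const B) hXmeas.aestronglyMeasurable hXbdd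
  have hnear : ∀ᵐ ω ∂P, ‖Xt ω - c‖ ≤ μpar * B :=
    aux_nearconst hG P hμ0 hμ1 hB hXmeas hXbdd hQmeas hQprob hQball hQcond
  have hIntXnorm : ‖∫ ω, X ω ∂P‖ ≤ B := by
    have := norm_integral_le_of_norm_le_const (μ := P) (f := X) (C := B) hXbdd
    simpa using this
  have hcnorm : ‖c‖ ≤ (1 - μpar) * B := by
    rw [hcdef, norm_smul, Real.norm_eq_abs, abs_of_nonneg (by linarith)]
    exact mul_le_mul_of_nonneg_left hIntXnorm (by linarith)
  have hXt_bd : ∀ᵐ ω ∂P, ‖Xt ω‖ ≤ B := by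
    filter_upwards [hnear] with ω hω
    calc ‖Xt ω‖ ≤ ‖Xt ω - c‖ + ‖c‖ := by
          have := norm_sub_norm_le (Xt ω) c; have h := norm_add_le (Xt ω - c) c
          simpa using h
      _ ≤ μpar * B + (1 - μpar) * B := add_le_add hω hcnorm
      _ = B := by ring
  have hXhatF : Measurable Xhat := hXhat_meas.mono hG le_rfl
  have hXhatStrong : StronglyMeasurable[G] Xhat := hXhat_meas.stronglyMeasurable
  have hXhat_bd : ∀ᵐ ω ∂P, ‖Xhat ω‖ ≤ B := by
    have hmap : ∀ᵐ x ∂(P.map X), ‖x‖ ≤ B := by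
      rw [MeasureTheory.ae_map_iff hXmeas.aemeasurable]
      · exact hXbdd
      · exact measurableSet_le measurable_norm measurable_const
    rw [← hlaw] at hmap
    rw [MeasureTheory.ae_map_iff hXhatF.aemeasurable] at hmap
    · exact hmap
    · exact measurableSet_le measurable_norm measurable_const
  have hXhat_int : Integrable Xhat P :=
    Integrable.mono' (integrable_const B) hXhatF.aestronglyMeasurable hXhat_bd
  have hXtF : Measurable Xt := (stronglyMeasurable_condExp.mono hG).measurable
  have hXt_int : Integrable Xt P := integrable_condExp
  have hEXhat : ∫ ω, Xhat ω ∂P = ∫ ω, X ω ∂P := by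
    have h1 : ∫ ω, Xhat ω ∂P = ∫ x, x ∂(P.map Xhat) :=
      (integral_map hXhatF.aemeasurable aestronglyMeasurable_id).symm
    have h2 : ∫ ω, X ω ∂P = ∫ x, x ∂(P.map X) :=
      (integral_map hXmeas.aemeasurable aestronglyMeasurable_id).symm
    rw [h1, h2, hlaw]
  have hEXt : ∫ ω, Xt ω ∂P = ∫ ω, X ω ∂P := integral_condExp hG
  have hNormSq : ∫ ω, ‖Xhat ω‖ ^ 2 ∂P = ∫ ω, ‖X ω‖ ^ 2 ∂P := by
    have hcont : Continuous fun x : EuclideanSpace ℝ (Fin d) => ‖x‖ ^ 2 :=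
      (continuous_norm).pow 2
    have h1 : ∫ ω, ‖Xhat ω‖ ^ 2 ∂P = ∫ x, ‖x‖ ^ 2 ∂(P.map Xhat) :=
      (integral_map hXhatF.aemeasurable hcont.aestronglyMeasurable).symm
    have h2 : ∫ ω, ‖X ω‖ ^ 2 ∂P = ∫ x, ‖x‖ ^ 2 ∂(P.map X) :=
      (integral_map hXmeas.aemeasurable hcont.aestronglyMeasurable).symm
    rw [h1, h2, hlaw]
  -- integrability of all scalar quantities
  have hnormsq_int : ∀ {Z : Ω → EuclideanSpace ℝ (Fin d)}, Measurable Z →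
      (∀ᵐ ω ∂P, ‖Z ω‖ ≤ B) → Integrable (fun ω => ‖Z ω‖ ^ 2) P := by
    intro Z hZ hZb
    refine Integrable.mono' (integrable_const (B ^ 2))
      ((hZ.norm.pow_const 2).aestronglyMeasurable) ?_
    filter_upwards [hZb] with ω hω
    rw [Real.norm_eq_abs, abs_of_nonneg (by positivity)]
    exact pow_le_pow_left₀ (norm_nonneg _) hω 2
  have hinner_int : ∀ {Z W : Ω → EuclideanSpace ℝ (Fin d)}, Measurable Z → Measurable W →
      (∀ᵐ ω ∂P, ‖Z ω‖ ≤ B) → (∀ᵐ ω ∂P, ‖W ω‖ ≤ B) →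
      Integrable (fun ω => ⟪Z ω, W ω⟫) P := by
    intro Z W hZ hW hZb hWb
    refine Integrable.mono' (integrable_const (B * B))
      (hZ.inner hW).aestronglyMeasurable ?_
    filter_upwards [hZb, hWb] with ω h1 h2
    rw [Real.norm_eq_abs]
    exact (abs_real_inner_le_norm _ _).trans (mul_le_mul h1 h2 (norm_nonneg _) hB.le)
  have hI_normX := hnormsq_int hXmeas hXbdd
  have hI_normXhat := hnormsq_int hXhatF hXhat_bd
  have hI_normXt := hnormsq_int hXtF hXt_bd
  have hI_XXhat := hinner_int hXmeas hXhatF hXbdd hXhat_bd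
  have hI_XXt := hinner_int hXmeas hXtF hXbdd hXt_bd
  have hI_XtXhat := hinner_int hXtF hXhatF hXt_bd hXhat_bd
  have hI_XtXt := hinner_int hXtF hXtF hXt_bd hXt_bd
  set a : ℝ := ∫ ω, ‖X ω‖ ^ 2 ∂P with ha
  set t : ℝ := ∫ ω, ‖Xt ω‖ ^ 2 ∂P with ht
  set u : ℝ := ∫ ω, ⟪Xt ω, Xhat ω⟫ ∂P with hu
  -- pull-out results
  have hpull1 : ∫ ω, ⟪Xhat ω, X ω⟫ ∂P = ∫ ω, ⟪Xhat ω, Xt ω⟫ ∂P :=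
    aux_pullout hG P hXmeas hXbdd hXhatStrong hXhat_bd
  have hpull2 : ∫ ω, ⟪Xt ω, X ω⟫ ∂P = ∫ ω, ⟪Xt ω, Xt ω⟫ ∂P :=
    aux_pullout hG P hXmeas hXbdd stronglyMeasurable_condExp hXt_bd
  have hXtXt : ∫ ω, ⟪Xt ω, Xt ω⟫ ∂P = t := by
    rw [ht]; exact integral_congr_ae (Filter.Eventually.of_forall fun ω =>
      real_inner_self_eq_norm_sq (Xt ω))
  -- E1
  have E1 : ∫ ω, ‖X ω - Xhat ω‖ ^ 2 ∂P = 2 * a - 2 * u := by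
    have hpt : (fun ω => ‖X ω - Xhat ω‖ ^ 2)
        = fun ω => ‖X ω‖ ^ 2 - 2 * ⟪X ω, Xhat ω⟫ + ‖Xhat ω‖ ^ 2 := by
      funext ω; exact norm_sub_sq_real _ _
    have hIsub1 : Integrable (fun ω => ‖X ω‖ ^ 2 - 2 * ⟪X ω, Xhat ω⟫) P := by
      exact hI_normX.sub (hI_XXhat.const_mul 2)
    have hIm1 : Integrable (fun ω => 2 * ⟪X ω, Xhat ω⟫) P := hI_XXhat.const_mul 2
    rw [hpt, integral_add hIsub1 hI_normXhat,
      integral_sub hI_normX hIm1, integral_const_mul, hNormSq, ← ha]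
    have hco : ∫ ω, ⟪X ω, Xhat ω⟫ ∂P = u := by
      rw [hu]
      have h1 : ∫ ω, ⟪X ω, Xhat ω⟫ ∂P = ∫ ω, ⟪Xhat ω, X ω⟫ ∂P :=
        integral_congr_ae (Filter.Eventually.of_forall fun ω => real_inner_comm _ _)
      have h2 : ∫ ω, ⟪Xhat ω, Xt ω⟫ ∂P = ∫ ω, ⟪Xt ω, Xhat ω⟫ ∂P :=
        integral_congr_ae (Filter.Eventually.of_forall fun ω => real_inner_comm _ _)
      rw [h1, hpull1, h2]
    rw [hco]; ring
  -- E2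
  have E2 : ∫ ω, ‖X ω - Xt ω‖ ^ 2 ∂P = a - t := by
    have hpt : (fun ω => ‖X ω - Xt ω‖ ^ 2)
        = fun ω => ‖X ω‖ ^ 2 - 2 * ⟪X ω, Xt ω⟫ + ‖Xt ω‖ ^ 2 := by
      funext ω; exact norm_sub_sq_real _ _
    have hIsub1 : Integrable (fun ω => ‖X ω‖ ^ 2 - 2 * ⟪X ω, Xt ω⟫) P := by
      exact hI_normX.sub (hI_XXt.const_mul 2)
    have hIm1 : Integrable (fun ω => 2 * ⟪X ω, Xt ω⟫) P := hI_XXt.const_mul 2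
    rw [hpt, integral_add hIsub1 hI_normXt,
      integral_sub hI_normX hIm1, integral_const_mul, ← ha, ← ht]
    have hco : ∫ ω, ⟪X ω, Xt ω⟫ ∂P = t := by
      have h1 : ∫ ω, ⟪X ω, Xt ω⟫ ∂P = ∫ ω, ⟪Xt ω, X ω⟫ ∂P :=
        integral_congr_ae (Filter.Eventually.of_forall fun ω => real_inner_comm _ _)
      rw [h1, hpull2, hXtXt]
    rw [hco]; ring
  -- E4
  have hczero : ∫ ω, ⟪c, Xt ω - Xhat ω⟫ ∂P = 0 := by
    have hsubint : Integrable (fun ω => Xt ω - Xhat ω) P := by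
      exact hXt_int.sub hXhat_int
    have h1 : ∫ ω, ⟪c, Xt ω - Xhat ω⟫ ∂P = ⟪c, ∫ ω, (Xt ω - Xhat ω) ∂P⟫ := by
      have := (innerSL ℝ c).integral_comp_comm hsubint
      simpa using this
    rw [h1, integral_sub hXt_int hXhat_int, hEXt, hEXhat, sub_self, inner_zero_right]
  have E4 : ∫ ω, ⟪Xt ω - c, Xt ω - Xhat ω⟫ ∂P = t - u := by
    have hpt : (fun ω => ⟪Xt ω - c, Xt ω - Xhat ω⟫)
        = fun ω => (⟪Xt ω, Xt ω⟫ - ⟪Xt ω, Xhat ω⟫) - ⟪c, Xt ω - Xhat ω⟫ := by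
      funext ω
      rw [inner_sub_left, inner_sub_right]
    have hIc : Integrable (fun ω => ⟪c, Xt ω - Xhat ω⟫) P := by
      have := (innerSL ℝ c).integrable_comp (hXt_int.sub hXhat_int)
      simpa using this
    have hIsub2 : Integrable (fun ω => ⟪Xt ω, Xt ω⟫ - ⟪Xt ω, Xhat ω⟫) P := by
      exact hI_XtXt.sub hI_XtXhat
    rw [hpt, integral_sub hIsub2 hIc,
      integral_sub hI_XtXt hI_XtXhat, hXtXt, hczero, ← hu]
    ring
  -- final bound
  have hbd : |∫ ω, ⟪Xt ω - c, Xt ω - Xhat ω⟫ ∂P| ≤ μpar * B * (2 * B) := by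
    have h := norm_integral_le_of_norm_le_const (μ := P)
      (f := fun ω => ⟪Xt ω - c, Xt ω - Xhat ω⟫) (C := μpar * B * (2 * B)) ?_
    · rw [Real.norm_eq_abs] at h; simpa using h
    · filter_upwards [hnear, hXt_bd, hXhat_bd] with ω h1 h2 h3
      rw [Real.norm_eq_abs]
      calc |⟪Xt ω - c, Xt ω - Xhat ω⟫| ≤ ‖Xt ω - c‖ * ‖Xt ω - Xhat ω‖ :=
            abs_real_inner_le_norm _ _
        _ ≤ (μpar * B) * (2 * B) := by
            refine mul_le_mul h1 ?_ (norm_nonneg _) (mul_nonneg hμ0 hB.le)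
            calc ‖Xt ω - Xhat ω‖ ≤ ‖Xt ω‖ + ‖Xhat ω‖ := norm_sub_le _ _
              _ ≤ 2 * B := by linarith
  have hfinal : (∫ ω, ‖X ω - Xhat ω‖ ^ 2 ∂P) - 2 * ∫ ω, ‖X ω - Xt ω‖ ^ 2 ∂P
      = 2 * ∫ ω, ⟪Xt ω - c, Xt ω - Xhat ω⟫ ∂P := by
    rw [E1, E2, E4]; ring
  rw [hfinal, abs_mul, abs_of_nonneg (by norm_num : (0:ℝ) ≤ 2)]
  calc 2 * |∫ ω, ⟪Xt ω - c, Xt ω - Xhat ω⟫ ∂P| ≤ 2 * (μpar * B * (2 * B)) := by linarith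
    _ ≤ 12 * B ^ 2 * μpar := by nlinarith
end

section
/- For all real σ₁, σ₂ ≥ 0, the squared Wasserstein-2 distance between the centered one-dimensional Gaussian measures with variances σ₁² and σ₂² equals (σ₁ − σ₂)²; that is, the infimum over all probability measures π on ℝ × ℝ whose first marginal is the Gaussian N(0, σ₁²) and whose second marginal is the Gaussian N(0, σ₂²) of ∫ (x − y)² dπ(x, y) equals (σ₁ − σ₂)². -/
open MeasureTheory ProbabilityTheory

section Aux
open Real Set Filter
open scoped NNReal ENNReal

open MeasureTheory Real Set Filter
open scoped NNReal ENNReal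

lemma integrable_sq_mul_exp {b : ℝ} (hb : 0 < b) :
    Integrable (fun x : ℝ => x ^ 2 * Real.exp (-b * x ^ 2)) := by
  have h := integrable_rpow_mul_exp_neg_mul_sq hb (s := 2) (by norm_num)
  have : ∀ x : ℝ, x ^ (2:ℝ) = x ^ (2:ℕ) := fun x => Real.rpow_natCast x 2
  simpa [this] using h

lemma integral_sq_mul_exp {b : ℝ} (hb : 0 < b) :
    ∫ x : ℝ, x ^ 2 * Real.exp (-b * x ^ 2) = (2 * b)⁻¹ * Real.sqrt (π / b) := by
  have hexp : Integrable (fun x : ℝ => Real.exp (-b * x ^ 2)) := integrable_exp_neg_mul_sq hb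
  have hsq := integrable_sq_mul_exp hb
  set g : ℝ → ℝ := fun x => x ^ 2 * Real.exp (-b * x ^ 2) - (2*b)⁻¹ * Real.exp (-b * x ^ 2)
    with hgdef
  have hgint : Integrable g := hsq.sub (hexp.const_mul _)
  have hderiv : ∀ x : ℝ, HasDerivAt (fun y => -(2*b)⁻¹ * (y * Real.exp (-b * y ^ 2))) (g x) x := by
    intro x
    have h1 : HasDerivAt (fun y : ℝ => y * Real.exp (-b * y ^ 2))
        (1 * Real.exp (-b * x ^ 2) + x * (Real.exp (-b * x ^ 2) * (-b * (2 * x ^ 1)))) x :=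
      (hasDerivAt_id x).mul (((hasDerivAt_pow 2 x).const_mul (-b)).exp)
    have := h1.const_mul (-(2*b)⁻¹)
    refine this.congr_deriv ?_
    simp only [hgdef]
    field_simp
    ring
  have htend : Tendsto (fun x : ℝ => -(2*b)⁻¹ * (x * Real.exp (-b * x ^ 2))) atTop (nhds 0) := by
    have h0 : Tendsto (fun x : ℝ => x * Real.exp (-b * x ^ 2)) atTop (nhds 0) := by
      have h := rpow_mul_exp_neg_mul_sq_isLittleO_exp_neg hb 1
      have h2 : Tendsto (fun x : ℝ => Real.exp (-(1/2) * x)) atTop (nhds 0) := by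
        simpa using Real.tendsto_exp_comp_nhds_zero.mpr
          (by exact (tendsto_const_nhds.neg_mul_atTop (by norm_num) tendsto_id) : Tendsto (fun x : ℝ => -(1/2) * x) atTop atBot)
      have := h.trans_tendsto h2
      simpa [Real.rpow_one] using this
    simpa using h0.const_mul (-(2*b)⁻¹)
  have hIoi : ∫ x in Set.Ioi (0:ℝ), g x = 0 := by
    have := integral_Ioi_of_hasDerivAt_of_tendsto' (a := 0) (fun x _ => hderiv x)
      hgint.integrableOn htend
    simpa using this
  have hIic : ∫ x in Set.Iic (0:ℝ), g x = ∫ x in Set.Ioi (0:ℝ), g x := by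
    rw [show ∫ x in Set.Ioi (0:ℝ), g x = ∫ x in Set.Ioi (0:ℝ), g (-x) by
      congr 1; ext x; simp [hgdef]]
    rw [integral_comp_neg_Ioi]
    norm_num
  have htot : ∫ x, g x = 0 := by
    rw [← intervalIntegral.integral_Iic_add_Ioi hgint.integrableOn hgint.integrableOn, hIic, hIoi]
    ring
  have hsub : ∫ x, g x = (∫ x : ℝ, x ^ 2 * Real.exp (-b * x ^ 2))
      - (2*b)⁻¹ * ∫ x : ℝ, Real.exp (-b * x ^ 2) := by
    rw [hgdef, integral_sub hsq (hexp.const_mul _), integral_const_mul]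
  rw [hsub, integral_gaussian] at htot
  linarith

open ProbabilityTheory in
lemma gaussPdf_smul_eq (v : ℝ≥0) (hv : v ≠ 0) (g : ℝ → ℝ) (x : ℝ) :
    (Real.toNNReal (gaussianPDFReal 0 v x)) • g x
      = (Real.sqrt (2 * π * v))⁻¹ * (g x * Real.exp (-(2 * (v:ℝ))⁻¹ * x ^ 2)) := by
  rw [NNReal.smul_def, smul_eq_mul, Real.coe_toNNReal _ (gaussianPDFReal_nonneg _ _ _)]
  rw [gaussianPDFReal]
  have : -(x - 0) ^ 2 / (2 * (v:ℝ)) = -(2 * (v:ℝ))⁻¹ * x ^ 2 := by ring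
  rw [this]
  ring

open ProbabilityTheory in
lemma integrable_sq_gaussianReal (v : ℝ≥0) :
    Integrable (fun x : ℝ => x ^ 2) (gaussianReal 0 v) := by
  by_cases hv : v = 0
  · rw [hv, gaussianReal_zero_var]
    refine (integrable_const (0:ℝ)).congr ?_
    rw [Filter.EventuallyEq, ae_dirac_eq]
    simp
  have hvpos : (0:ℝ) < v := lt_of_le_of_ne v.2 (by exact_mod_cast (Ne.symm hv))
  rw [gaussianReal_of_var_ne_zero _ hv]
  have hmeas : Measurable fun x : ℝ => Real.toNNReal (gaussianPDFReal 0 v x) :=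
    (measurable_gaussianPDFReal 0 v).real_toNNReal
  rw [show gaussianPDF 0 v = fun x => ((Real.toNNReal (gaussianPDFReal 0 v x) : ℝ≥0) : ℝ≥0∞)
      from rfl]
  rw [integrable_withDensity_iff_integrable_smul hmeas]
  have : (fun x : ℝ => (Real.toNNReal (gaussianPDFReal 0 v x)) • (x ^ 2))
      = fun x => (Real.sqrt (2 * π * v))⁻¹ * (x ^ 2 * Real.exp (-(2 * (v:ℝ))⁻¹ * x ^ 2)) := by
    ext x; exact gaussPdf_smul_eq v hv _ x
  rw [this]
  exact (integrable_sq_mul_exp (by positivity)).const_mul _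

open ProbabilityTheory in
lemma integral_sq_gaussianReal (v : ℝ≥0) :
    ∫ x, x ^ 2 ∂(gaussianReal 0 v) = v := by
  by_cases hv : v = 0
  · simp [hv, gaussianReal_zero_var]
  have hvpos : (0:ℝ) < v := lt_of_le_of_ne v.2 (by exact_mod_cast (Ne.symm hv))
  rw [gaussianReal_of_var_ne_zero _ hv]
  have hmeas : Measurable fun x : ℝ => Real.toNNReal (gaussianPDFReal 0 v x) :=
    (measurable_gaussianPDFReal 0 v).real_toNNReal
  rw [show gaussianPDF 0 v = fun x => ((Real.toNNReal (gaussianPDFReal 0 v x) : ℝ≥0) : ℝ≥0∞)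
      from rfl]
  rw [integral_withDensity_eq_integral_smul hmeas]
  have : (fun x : ℝ => (Real.toNNReal (gaussianPDFReal 0 v x)) • (x ^ 2))
      = fun x => (Real.sqrt (2 * π * v))⁻¹ * (x ^ 2 * Real.exp (-(2 * (v:ℝ))⁻¹ * x ^ 2)) := by
    ext x; exact gaussPdf_smul_eq v hv _ x
  rw [this, integral_const_mul, integral_sq_mul_exp (by positivity)]
  have h1 : (2 * ((2 * (v:ℝ))⁻¹))⁻¹ = 2 * (v:ℝ) / 2 := by field_simp
  have h2 : π / (2 * (v:ℝ))⁻¹ = 2 * π * v := by field_simp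
  rw [h1, h2]
  have h3 : Real.sqrt (2 * π * v) ≠ 0 := by positivity
  field_simp

lemma coupling_lower (σ₁ σ₂ : ℝ) (h₁ : 0 ≤ σ₁) (h₂ : 0 ≤ σ₂) (κ : Measure (ℝ × ℝ))
    (hp : IsProbabilityMeasure κ)
    (hfst : κ.map Prod.fst = gaussianReal 0 (⟨σ₁ ^ 2, sq_nonneg σ₁⟩ : NNReal))
    (hsnd : κ.map Prod.snd = gaussianReal 0 (⟨σ₂ ^ 2, sq_nonneg σ₂⟩ : NNReal)) :
    (σ₁ - σ₂) ^ 2 ≤ ∫ p, (p.1 - p.2) ^ 2 ∂κ := by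
  have hmf : AEMeasurable (Prod.fst : ℝ × ℝ → ℝ) κ := measurable_fst.aemeasurable
  have hms : AEMeasurable (Prod.snd : ℝ × ℝ → ℝ) κ := measurable_snd.aemeasurable
  have hasm1 : AEStronglyMeasurable (fun x : ℝ => x ^ 2) (κ.map Prod.fst) := by fun_prop
  have hasm2 : AEStronglyMeasurable (fun x : ℝ => x ^ 2) (κ.map Prod.snd) := by fun_prop
  have hi1 : Integrable (fun p : ℝ × ℝ => p.1 ^ 2) κ := by
    have h := integrable_sq_gaussianReal (⟨σ₁ ^ 2, sq_nonneg σ₁⟩ : NNReal)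
    rw [← hfst] at h
    exact (integrable_map_measure hasm1 hmf).mp h
  have hi2 : Integrable (fun p : ℝ × ℝ => p.2 ^ 2) κ := by
    have h := integrable_sq_gaussianReal (⟨σ₂ ^ 2, sq_nonneg σ₂⟩ : NNReal)
    rw [← hsnd] at h
    exact (integrable_map_measure hasm2 hms).mp h
  have m1 : ∫ p, p.1 ^ 2 ∂κ = σ₁ ^ 2 := by
    have h := integral_sq_gaussianReal (⟨σ₁ ^ 2, sq_nonneg σ₁⟩ : NNReal)
    rw [← hfst, integral_map hmf hasm1] at h
    exact h
  have m2 : ∫ p, p.2 ^ 2 ∂κ = σ₂ ^ 2 := by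
    have h := integral_sq_gaussianReal (⟨σ₂ ^ 2, sq_nonneg σ₂⟩ : NNReal)
    rw [← hsnd, integral_map hms hasm2] at h
    exact h
  have hiprod : Integrable (fun p : ℝ × ℝ => p.1 * p.2) κ := by
    refine Integrable.mono' ((hi1.add hi2).div_const 2) (by fun_prop) ?_
    filter_upwards with p
    simp only [Pi.add_apply, Real.norm_eq_abs, abs_mul]
    nlinarith [sq_nonneg (|p.1| - |p.2|), sq_abs p.1, sq_abs p.2,
      abs_nonneg p.1, abs_nonneg p.2]
  have key : ∫ p, p.1 * p.2 ∂κ ≤ σ₁ * σ₂ := by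
    rcases eq_or_lt_of_le h₁ with h₁' | h₁'
    · have hz : (fun p : ℝ × ℝ => p.1 ^ 2) =ᵐ[κ] 0 := by
        refine (integral_eq_zero_iff_of_nonneg (fun p => sq_nonneg _) hi1).mp ?_
        rw [m1, ← h₁']; ring
      have hz' : (fun p : ℝ × ℝ => p.1 * p.2) =ᵐ[κ] 0 := by
        filter_upwards [hz] with p hp0
        have : p.1 ^ 2 = 0 := hp0
        have : p.1 = 0 := by nlinarith [sq_nonneg p.1]
        simp [this]
      rw [integral_congr_ae hz']
      simpa using mul_nonneg h₁ h₂
    rcases eq_or_lt_of_le h₂ with h₂' | h₂'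
    · have hz : (fun p : ℝ × ℝ => p.2 ^ 2) =ᵐ[κ] 0 := by
        refine (integral_eq_zero_iff_of_nonneg (fun p => sq_nonneg _) hi2).mp ?_
        rw [m2, ← h₂']; ring
      have hz' : (fun p : ℝ × ℝ => p.1 * p.2) =ᵐ[κ] 0 := by
        filter_upwards [hz] with p hp0
        have : p.2 ^ 2 = 0 := hp0
        have : p.2 = 0 := by nlinarith [sq_nonneg p.2]
        simp [this]
      rw [integral_congr_ae hz']
      simpa using mul_nonneg h₁ h₂
    · have hmono : ∫ p, (σ₁ * σ₂ * 2) * (p.1 * p.2) ∂κ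
          ≤ ∫ p, (σ₂ ^ 2 * p.1 ^ 2 + σ₁ ^ 2 * p.2 ^ 2) ∂κ := by
        refine integral_mono (hiprod.const_mul _) ((hi1.const_mul _).add (hi2.const_mul _)) ?_
        intro p
        dsimp only
        nlinarith [sq_nonneg (σ₂ * p.1 - σ₁ * p.2)]
      rw [integral_const_mul, integral_add (hi1.const_mul _) (hi2.const_mul _),
        integral_const_mul, integral_const_mul, m1, m2] at hmono
      nlinarith [mul_pos h₁' h₂']
  have hsplit : ∫ p, (p.1 - p.2) ^ 2 ∂κ
      = (∫ p, p.1 ^ 2 ∂κ) - 2 * (∫ p, p.1 * p.2 ∂κ) + ∫ p, p.2 ^ 2 ∂κ := by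
    have heq : (fun p : ℝ × ℝ => (p.1 - p.2) ^ 2)
        = fun p : ℝ × ℝ => (p.1 ^ 2 - 2 * (p.1 * p.2)) + p.2 ^ 2 := by
      ext p; ring
    have hsub : Integrable (fun p : ℝ × ℝ => p.1 ^ 2 - 2 * (p.1 * p.2)) κ :=
      hi1.sub (hiprod.const_mul 2)
    rw [heq, integral_add hsub hi2, integral_sub hi1 (hiprod.const_mul 2), integral_const_mul]
  rw [hsplit, m1, m2]
  nlinarith [key]

open Real in
open scoped NNReal in
lemma coupling_upper (σ₁ σ₂ : ℝ) :
    ∫ p, (p.1 - p.2) ^ 2 ∂((gaussianReal 0 1).map (fun x : ℝ => (σ₁ * x, σ₂ * x)))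
      = (σ₁ - σ₂) ^ 2 := by
  have hm : Measurable (fun x : ℝ => (σ₁ * x, σ₂ * x)) := by fun_prop
  rw [integral_map hm.aemeasurable (f := fun p : ℝ × ℝ => (p.1 - p.2) ^ 2)
    ((measurable_fst.sub measurable_snd).pow_const 2).aestronglyMeasurable]
  have heq : (fun x : ℝ => ((σ₁ * x, σ₂ * x).1 - (σ₁ * x, σ₂ * x).2) ^ 2)
      = fun x : ℝ => (σ₁ - σ₂) ^ 2 * x ^ 2 := by
    ext x; ring
  rw [heq, integral_const_mul, integral_sq_gaussianReal 1]
  norm_num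

open scoped NNReal in
lemma coupling_marg_fst (σ : ℝ) (τ : ℝ) :
    (((gaussianReal 0 1).map (fun x : ℝ => (σ * x, τ * x))).map Prod.fst)
      = gaussianReal 0 (⟨σ ^ 2, sq_nonneg σ⟩ : ℝ≥0) := by
  have hm : Measurable (fun x : ℝ => (σ * x, τ * x)) := by fun_prop
  rw [Measure.map_map measurable_fst hm]
  have : (Prod.fst ∘ fun x : ℝ => (σ * x, τ * x)) = fun x : ℝ => σ * x := rfl
  rw [this]
  have h := gaussianReal_map_const_mul (μ := 0) (v := 1) σ
  rw [show ((σ * ·) : ℝ → ℝ) = fun x : ℝ => σ * x from rfl] at h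
  rw [h]
  norm_num
  rfl

open scoped NNReal in
lemma coupling_marg_snd (σ : ℝ) (τ : ℝ) :
    (((gaussianReal 0 1).map (fun x : ℝ => (σ * x, τ * x))).map Prod.snd)
      = gaussianReal 0 (⟨τ ^ 2, sq_nonneg τ⟩ : ℝ≥0) := by
  have hm : Measurable (fun x : ℝ => (σ * x, τ * x)) := by fun_prop
  rw [Measure.map_map measurable_snd hm]
  have : (Prod.snd ∘ fun x : ℝ => (σ * x, τ * x)) = fun x : ℝ => τ * x := rfl
  rw [this]
  have h := gaussianReal_map_const_mul (μ := 0) (v := 1) τ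
  rw [show ((τ * ·) : ℝ → ℝ) = fun x : ℝ => τ * x from rfl] at h
  rw [h]
  norm_num
  rfl

end Aux

/-- The squared Wasserstein-2 distance between the centered Gaussians `N(0, σ₁²)` and
`N(0, σ₂²)` on `ℝ` equals `(σ₁ − σ₂)²`: the infimum over all couplings `π` of
`∫ (x − y)² dπ(x, y)` is `(σ₁ − σ₂)²`. -/
theorem statement7 (σ₁ σ₂ : ℝ) (h₁ : 0 ≤ σ₁) (h₂ : 0 ≤ σ₂) :
    sInf { c : ℝ | ∃ π : Measure (ℝ × ℝ), IsProbabilityMeasure π ∧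
        π.map Prod.fst = gaussianReal 0 (⟨σ₁ ^ 2, sq_nonneg σ₁⟩ : NNReal) ∧
        π.map Prod.snd = gaussianReal 0 (⟨σ₂ ^ 2, sq_nonneg σ₂⟩ : NNReal) ∧
        c = ∫ p, (p.1 - p.2) ^ 2 ∂π } = (σ₁ - σ₂) ^ 2 := by
  have hm : Measurable (fun x : ℝ => (σ₁ * x, σ₂ * x)) := by fun_prop
  have hmem : (σ₁ - σ₂) ^ 2 ∈ { c : ℝ | ∃ π : Measure (ℝ × ℝ), IsProbabilityMeasure π ∧
      π.map Prod.fst = gaussianReal 0 (⟨σ₁ ^ 2, sq_nonneg σ₁⟩ : NNReal) ∧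
      π.map Prod.snd = gaussianReal 0 (⟨σ₂ ^ 2, sq_nonneg σ₂⟩ : NNReal) ∧
      c = ∫ p, (p.1 - p.2) ^ 2 ∂π } := by
    refine ⟨(gaussianReal 0 1).map (fun x : ℝ => (σ₁ * x, σ₂ * x)),
      Measure.isProbabilityMeasure_map hm.aemeasurable,
      coupling_marg_fst σ₁ σ₂, coupling_marg_snd σ₁ σ₂, (coupling_upper σ₁ σ₂).symm⟩
  have hlb : ∀ c ∈ { c : ℝ | ∃ π : Measure (ℝ × ℝ), IsProbabilityMeasure π ∧
      π.map Prod.fst = gaussianReal 0 (⟨σ₁ ^ 2, sq_nonneg σ₁⟩ : NNReal) ∧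
      π.map Prod.snd = gaussianReal 0 (⟨σ₂ ^ 2, sq_nonneg σ₂⟩ : NNReal) ∧
      c = ∫ p, (p.1 - p.2) ^ 2 ∂π }, (σ₁ - σ₂) ^ 2 ≤ c := by
    rintro c ⟨κ, hκp, hκ1, hκ2, rfl⟩
    exact coupling_lower σ₁ σ₂ h₁ h₂ κ hκp hκ1 hκ2
  exact le_antisymm (csInf_le ⟨(σ₁ - σ₂) ^ 2, hlb⟩ hmem) (le_csInf ⟨_, hmem⟩ hlb)
end

section
/- Let σ > 0, ρ ∈ [−1, 1], R₁ > 0 and R₂ > 0, and set c₁ := 1 − 2^{−2R₁} and d₂ := 2^{−2R₂}. Define V as the infimum, over all triples (ω₁, ω₂, s) ∈ ℝ × ℝ × [0, ∞) satisfying ω₂² σ² (1 − ρ² d₂ c₁) ≤ (s − ω₁² σ² c₁ − 2 ω₁ ω₂ ρ σ² c₁)(1 − d₂), of the objective σ² + s − 2 ω₁ ρ σ² c₁ − 2 ω₂ σ². Then V = σ² 2^{−2R₂} (1 − ρ² + ρ² 2^{−2R₁}). (This is the minimum second-frame distortion, without any perception constraint, for the symmetric two-frame Gauss–Markov source with per-frame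 variance σ² and correlation ρ, compressed at rates R₁ and R₂.) -/
open MeasureTheory

/-- Minimum second-frame distortion (no perception constraint) for the symmetric
two-frame Gauss–Markov source with per-frame variance `σ²` and correlation `ρ`,
compressed at rates `R₁` and `R₂`.  With `c₁ = 1 − 2^{−2R₁}` and `d₂ = 2^{−2R₂}`, the
infimum over all `(ω₁, ω₂, s)` with `s ≥ 0` satisfying the rate constraint
`ω₂²σ²(1 − ρ²d₂c₁) ≤ (s − ω₁²σ²c₁ − 2ω₁ω₂ρσ²c₁)(1 − d₂)` of the distortion
`σ² + s − 2ω₁ρσ²c₁ − 2ω₂σ²` equals `σ²·2^{−2R₂}·(1 − ρ² + ρ²·2^{−2R₁})`. -/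
theorem statement8 (σ ρ R₁ R₂ : ℝ) (hσ : 0 < σ) (hρ : ρ ∈ Set.Icc (-1 : ℝ) 1)
    (hR₁ : 0 < R₁) (hR₂ : 0 < R₂) :
    sInf { v : ℝ | ∃ ω₁ ω₂ s : ℝ, 0 ≤ s ∧
        ω₂ ^ 2 * σ ^ 2 * (1 - ρ ^ 2 * (2 : ℝ) ^ (-(2 * R₂)) * (1 - (2 : ℝ) ^ (-(2 * R₁)))) ≤
          (s - ω₁ ^ 2 * σ ^ 2 * (1 - (2 : ℝ) ^ (-(2 * R₁)))
              - 2 * ω₁ * ω₂ * ρ * σ ^ 2 * (1 - (2 : ℝ) ^ (-(2 * R₁))))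
            * (1 - (2 : ℝ) ^ (-(2 * R₂))) ∧
        v = σ ^ 2 + s - 2 * ω₁ * ρ * σ ^ 2 * (1 - (2 : ℝ) ^ (-(2 * R₁))) - 2 * ω₂ * σ ^ 2 }
      = σ ^ 2 * (2 : ℝ) ^ (-(2 * R₂)) * (1 - ρ ^ 2 + ρ ^ 2 * (2 : ℝ) ^ (-(2 * R₁))) := by
  set d₁ : ℝ := (2 : ℝ) ^ (-(2 * R₁)) with hd₁def
  set d₂ : ℝ := (2 : ℝ) ^ (-(2 * R₂)) with hd₂def
  have hd₁0 : 0 < d₁ := Real.rpow_pos_of_pos (by norm_num) _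
  have hd₂0 : 0 < d₂ := Real.rpow_pos_of_pos (by norm_num) _
  have hd₁1 : d₁ < 1 := Real.rpow_lt_one_of_one_lt_of_neg (by norm_num) (by linarith)
  have hd₂1 : d₂ < 1 := Real.rpow_lt_one_of_one_lt_of_neg (by norm_num) (by linarith)
  have hσ2 : (0:ℝ) < σ ^ 2 := by positivity
  have hρ2 : ρ ^ 2 ≤ 1 := by
    obtain ⟨h1, h2⟩ := hρ
    nlinarith
  have hρc : 0 ≤ 1 - ρ ^ 2 * (1 - d₁) := by nlinarith
  have hmem : σ ^ 2 * d₂ * (1 - ρ ^ 2 + ρ ^ 2 * d₁) ∈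
      { v : ℝ | ∃ ω₁ ω₂ s : ℝ, 0 ≤ s ∧
        ω₂ ^ 2 * σ ^ 2 * (1 - ρ ^ 2 * d₂ * (1 - d₁)) ≤
          (s - ω₁ ^ 2 * σ ^ 2 * (1 - d₁) - 2 * ω₁ * ω₂ * ρ * σ ^ 2 * (1 - d₁)) * (1 - d₂) ∧
        v = σ ^ 2 + s - 2 * ω₁ * ρ * σ ^ 2 * (1 - d₁) - 2 * ω₂ * σ ^ 2 } := by
    refine ⟨ρ * d₂, 1 - d₂, σ ^ 2 * (1 - d₂ + ρ ^ 2 * (1 - d₁) * d₂), ?_, le_of_eq ?_, by ring⟩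
    · have h1 : 0 ≤ ρ ^ 2 * (1 - d₁) * d₂ := mul_nonneg (mul_nonneg (sq_nonneg ρ) (by linarith)) hd₂0.le
      nlinarith
    · ring
  have hlb : ∀ v ∈ { v : ℝ | ∃ ω₁ ω₂ s : ℝ, 0 ≤ s ∧
        ω₂ ^ 2 * σ ^ 2 * (1 - ρ ^ 2 * d₂ * (1 - d₁)) ≤
          (s - ω₁ ^ 2 * σ ^ 2 * (1 - d₁) - 2 * ω₁ * ω₂ * ρ * σ ^ 2 * (1 - d₁)) * (1 - d₂) ∧
        v = σ ^ 2 + s - 2 * ω₁ * ρ * σ ^ 2 * (1 - d₁) - 2 * ω₂ * σ ^ 2 },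
      σ ^ 2 * d₂ * (1 - ρ ^ 2 + ρ ^ 2 * d₁) ≤ v := by
    rintro v ⟨ω₁, ω₂, s, hs, hcon, rfl⟩
    have key : (σ ^ 2 + s - 2 * ω₁ * ρ * σ ^ 2 * (1 - d₁) - 2 * ω₂ * σ ^ 2
          - σ ^ 2 * d₂ * (1 - ρ ^ 2 + ρ ^ 2 * d₁)) * (1 - d₂)
        = ((s - ω₁ ^ 2 * σ ^ 2 * (1 - d₁) - 2 * ω₁ * ω₂ * ρ * σ ^ 2 * (1 - d₁)) * (1 - d₂)
            - ω₂ ^ 2 * σ ^ 2 * (1 - ρ ^ 2 * d₂ * (1 - d₁)))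
          + σ ^ 2 * ((1 - d₂) * (1 - d₁)) * (ω₁ + ρ * (ω₂ - 1)) ^ 2
          + σ ^ 2 * (1 - ρ ^ 2 * (1 - d₁)) * (ω₂ - (1 - d₂)) ^ 2 := by ring
    have t1 : 0 ≤ σ ^ 2 * ((1 - d₂) * (1 - d₁)) * (ω₁ + ρ * (ω₂ - 1)) ^ 2 := by
      apply mul_nonneg
      apply mul_nonneg hσ2.le
      · nlinarith
      · exact sq_nonneg _
    have t2 : 0 ≤ σ ^ 2 * (1 - ρ ^ 2 * (1 - d₁)) * (ω₂ - (1 - d₂)) ^ 2 :=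
      mul_nonneg (mul_nonneg hσ2.le hρc) (sq_nonneg _)
    have hnn : 0 ≤ (σ ^ 2 + s - 2 * ω₁ * ρ * σ ^ 2 * (1 - d₁) - 2 * ω₂ * σ ^ 2
          - σ ^ 2 * d₂ * (1 - ρ ^ 2 + ρ ^ 2 * d₁)) * (1 - d₂) := by
      rw [key]; linarith
    have hpos : (0:ℝ) < 1 - d₂ := by linarith
    nlinarith [hnn, hpos]
  apply le_antisymm
  · exact csInf_le ⟨_, hlb⟩ hmem
  · exact le_csInf ⟨_, hmem⟩ hlb
end

section
/- Let σ > 0 and ρ ∈ (0, 1]. For ε > 0 set c := 1 − 2^{−2ε} and define V(ε) := inf { 2σ² − 2 ω₁ ρ σ² √c − 2 ω₂ σ² : (ω₁, ω₂) ∈ ℝ², ω₂² (1 − ρ² (1 − c) c) ≤ (1 − ω₁² − 2 ω₁ ω₂ ρ √c) · c }. Then there exist constants C > 0 and ε₀ > 0 such that for all ε ∈ (0, ε₀), |V(ε) − 2σ²(1 − √((1 + ρ²) · 2 ε · ln 2))| ≤ C ε. (V(ε) is the minimum second-frame distortion under zero framewise-marginal perception loss for the symmetric two-frame Gauss–Markov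 source at per-frame rate R₁ = R₂ = ε.) -/
open MeasureTheory

/-- `cRate ε = 1 − 2^{−2ε}`, the quantity `c` associated with rate `ε`. -/
noncomputable def cRate (ε : ℝ) : ℝ := 1 - (2 : ℝ) ^ (-(2 * ε))


private lemma aux_bound (ρ s ω₁ ω₂ : ℝ) (hρ0 : 0 < ρ) (hρ1 : ρ ≤ 1)
    (hs0 : 0 < s) (hs4 : s ^ 2 ≤ 1/4)
    (hcon : ω₂ ^ 2 * (1 - ρ ^ 2 * (1 - s ^ 2) * s ^ 2) ≤
      (1 - ω₁ ^ 2 - 2 * ω₁ * ω₂ * ρ * s) * s ^ 2) :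
    (ρ * s * ω₁ + ω₂) ^ 2 ≤ (1 + ρ ^ 2) * (1 + 5 * s ^ 2) * s ^ 2 := by
  have hQ : s^2*ω₁^2 + 2*ρ*s^3*ω₁*ω₂ + (1 - ρ^2*(1-s^2)*s^2)*ω₂^2 ≤ s^2 := by
    nlinarith [hcon]
  have hA : (0:ℝ) < s^2*(1+5*(1+ρ^2)*s^2) := by positivity
  have hDd : (0:ℝ) ≤ (1+ρ^2)*(1+5*s^2)*s^4*(5+6*ρ^2 - s^2*(5*ρ^2+6*ρ^4)) := by
    have hρ2 : ρ^2 ≤ 1 := by nlinarith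
    have hρ4 : ρ^4 ≤ 1 := by nlinarith
    have h1 : s^2*(5*ρ^2+6*ρ^4) ≤ 11/4 := by
      nlinarith [mul_le_mul_of_nonneg_right hs4 (by positivity : (0:ℝ) ≤ 5*ρ^2+6*ρ^4)]
    have h2 : (0:ℝ) ≤ 5+6*ρ^2 - s^2*(5*ρ^2+6*ρ^4) := by nlinarith
    positivity
  have hid : s^2*(1+5*(1+ρ^2)*s^2) *
      ((1+ρ^2)*(1+5*s^2)*(s^2*ω₁^2 + 2*ρ*s^3*ω₁*ω₂ + (1 - ρ^2*(1-s^2)*s^2)*ω₂^2)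
        - (ρ*s*ω₁+ω₂)^2)
      = (s^2*(1+5*(1+ρ^2)*s^2)*ω₁ + ρ*s*((1+ρ^2)*(1+5*s^2)*s^2-1)*ω₂)^2
        + (1+ρ^2)*(1+5*s^2)*s^4*(5+6*ρ^2 - s^2*(5*ρ^2+6*ρ^4))*ω₂^2 := by ring
  have hX : (0:ℝ) ≤ (1+ρ^2)*(1+5*s^2)*(s^2*ω₁^2 + 2*ρ*s^3*ω₁*ω₂
      + (1 - ρ^2*(1-s^2)*s^2)*ω₂^2) - (ρ*s*ω₁+ω₂)^2 := by
    have hprod : (0:ℝ) ≤ s^2*(1+5*(1+ρ^2)*s^2) *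
        ((1+ρ^2)*(1+5*s^2)*(s^2*ω₁^2 + 2*ρ*s^3*ω₁*ω₂ + (1 - ρ^2*(1-s^2)*s^2)*ω₂^2)
          - (ρ*s*ω₁+ω₂)^2) := by
      rw [hid]
      exact add_nonneg
        (sq_nonneg (s^2*(1+5*(1+ρ^2)*s^2)*ω₁ + ρ*s*((1+ρ^2)*(1+5*s^2)*s^2-1)*ω₂))
        (mul_nonneg hDd (sq_nonneg ω₂))
    have h5 := div_nonneg hprod hA.le
    rwa [mul_div_cancel_left₀ _ hA.ne'] at h5
  have hlam : (0:ℝ) ≤ (1+ρ^2)*(1+5*s^2) := by positivity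
  linarith [mul_le_mul_of_nonneg_left hQ hlam, hX]


private lemma aux_feas (ρ c t : ℝ) (hc0 : 0 < c) (hc1 : c ≤ 1) (hρ0 : 0 ≤ ρ) (hρ1 : ρ ≤ 1)
    (ht2 : t ^ 2 * (1 + ρ ^ 2) = (1 - c) ^ 2) (htle : t ^ 2 ≤ (1 - c) ^ 2) :
    (c * t ^ 2) * (1 - ρ ^ 2 * (1 - c) * c) ≤ (1 - ρ ^ 2 * t ^ 2 - 2 * ρ ^ 2 * c * t ^ 2) * c := by
  have hρ2 : ρ ^ 2 ≤ 1 := by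
    nlinarith [mul_nonneg (by linarith : (0:ℝ) ≤ 1 - ρ) (by linarith : (0:ℝ) ≤ 1 + ρ)]
  have h1 : t ^ 2 * ρ ^ 2 ≤ (1 - c) ^ 2 := by
    nlinarith [mul_nonneg (sq_nonneg t) (by linarith : (0:ℝ) ≤ 1 - ρ ^ 2)]
  have h2 : t ^ 2 * (ρ ^ 2 * (c * (1 + c))) ≤ (1 - c) ^ 2 * (c * (1 + c)) := by
    have h2' := mul_le_mul_of_nonneg_right h1 (show (0:ℝ) ≤ c * (1 + c) by positivity)
    linarith [h2']
  have h3 : (1 - c) ^ 2 * (1 + c * (1 + c)) ≤ 1 := by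
    nlinarith [mul_nonneg (mul_nonneg (mul_nonneg hc0.le hc0.le) hc0.le)
      (by linarith : (0:ℝ) ≤ 1 - c), hc0.le]
  have hmain : t ^ 2 * (1 + ρ ^ 2) + t ^ 2 * (ρ ^ 2 * (c * (1 + c))) ≤ 1 := by linarith
  linarith [mul_le_mul_of_nonneg_left hmain hc0.le]

set_option maxHeartbeats 1000000 in
/-- Low-rate asymptotics of the minimum second-frame distortion under zero
framewise-marginal perception loss (0-PLF-FMD) for the symmetric two-frame Gauss–Markov
source at per-frame rate `R₁ = R₂ = ε`: with `c := 1 − 2^{−2ε}`, the optimal value `V(ε)`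
of the displayed program satisfies `V(ε) = 2σ²(1 − √((1 + ρ²)·2ε·ln 2)) + O(ε)`. -/
theorem statement9 (σ ρ : ℝ) (hσ : 0 < σ) (hρ : ρ ∈ Set.Ioc (0 : ℝ) 1) :
    ∃ C : ℝ, 0 < C ∧ ∃ ε₀ : ℝ, 0 < ε₀ ∧ ∀ ε ∈ Set.Ioo (0 : ℝ) ε₀,
      |sInf { v : ℝ | ∃ ω₁ ω₂ : ℝ,
            ω₂ ^ 2 * (1 - ρ ^ 2 * (1 - cRate ε) * cRate ε) ≤
              (1 - ω₁ ^ 2 - 2 * ω₁ * ω₂ * ρ * Real.sqrt (cRate ε)) * cRate ε ∧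
            v = 2 * σ ^ 2 - 2 * ω₁ * ρ * σ ^ 2 * Real.sqrt (cRate ε) - 2 * ω₂ * σ ^ 2 }
          - 2 * σ ^ 2 * (1 - Real.sqrt ((1 + ρ ^ 2) * (2 * ε * Real.log 2)))|
        ≤ C * ε := by
  obtain ⟨hρ0, hρ1⟩ := hρ
  refine ⟨40 * σ ^ 2, by positivity, 1/8, by norm_num, ?_⟩
  rintro ε ⟨hε0, hε8⟩
  have hlog : 0 < Real.log 2 := Real.log_pos (by norm_num)
  have hlog1 : Real.log 2 < 1 := by
    have := Real.log_lt_sub_one_of_pos (by norm_num : (0:ℝ) < 2) (by norm_num)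
    linarith
  set x : ℝ := 2 * ε * Real.log 2 with hxdef
  clear_value x
  have hx0 : 0 < x := by rw [hxdef]; positivity
  have hx2e : x ≤ 2 * ε := by
    rw [hxdef]; nlinarith
  have hx4 : x ≤ 1/4 := by
    rw [hxdef]; nlinarith
  -- basic facts about c
  have hcexp : cRate ε = 1 - Real.exp (-x) := by
    unfold cRate
    rw [Real.rpow_def_of_pos (by norm_num : (0:ℝ) < 2)]
    congr 2
    rw [hxdef]; ring
  set c := cRate ε with hcdd
  clear_value c
  have hcx : c ≤ x := by
    have := Real.add_one_le_exp (-x)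
    rw [hcexp]; linarith
  have hc0 : 0 < c := by
    rw [hcexp]
    have : Real.exp (-x) < 1 := by
      rw [Real.exp_lt_one_iff]; linarith
    linarith
  have hcge : x - x^2 ≤ c := by
    have h1 : -x + 1 ≤ Real.exp (-x) := Real.add_one_le_exp (-x)
    have h1' : x + 1 ≤ Real.exp x := Real.add_one_le_exp x
    have h2 : Real.exp (-x) * Real.exp x = 1 := by
      rw [← Real.exp_add]; simp
    have h3 : Real.exp (-x) ≤ 1 - x + x^2 := by
      nlinarith [Real.exp_pos (-x), Real.exp_pos x, pow_pos hx0 3]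
    rw [hcexp]; linarith
  have hc4 : c ≤ 1/4 := le_trans hcx hx4
  set s := Real.sqrt c with hsd
  clear_value s
  have hs2 : s ^ 2 = c := by rw [hsd]; exact Real.sq_sqrt hc0.le
  have hs0 : 0 < s := by rw [hsd]; exact Real.sqrt_pos.mpr hc0
  have hs1 : s ≤ 1 := by nlinarith
  set r := Real.sqrt (1 + ρ ^ 2) with hrd
  clear_value r
  have hr2 : r ^ 2 = 1 + ρ ^ 2 := by rw [hrd]; exact Real.sq_sqrt (by positivity)
  have hr0 : 0 < r := by rw [hrd]; exact Real.sqrt_pos.mpr (by positivity)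
  have hrle : r ≤ 2 := by nlinarith
  set sx := Real.sqrt x with hsxd
  clear_value sx
  have hsx2 : sx ^ 2 = x := by rw [hsxd]; exact Real.sq_sqrt hx0.le
  have hsx0 : 0 < sx := by rw [hsxd]; exact Real.sqrt_pos.mpr hx0
  have hsx1 : sx ≤ 1 := by nlinarith
  have hsqmul : Real.sqrt ((1 + ρ ^ 2) * x) = r * sx := by
    rw [hrd, hsxd]; exact Real.sqrt_mul (by positivity) x
  set S := { v : ℝ | ∃ ω₁ ω₂ : ℝ,
            ω₂ ^ 2 * (1 - ρ ^ 2 * (1 - c) * c) ≤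
              (1 - ω₁ ^ 2 - 2 * ω₁ * ω₂ * ρ * s) * c ∧
            v = 2 * σ ^ 2 - 2 * ω₁ * ρ * σ ^ 2 * s - 2 * ω₂ * σ ^ 2 } with hSd
  clear_value S
  -- lower bound on every element of S
  have hlb : ∀ v ∈ S, 2 * σ ^ 2 - 2 * σ ^ 2 * (r * sx) - 40 * σ ^ 2 * ε ≤ v := by
    rintro v hv
    rw [hSd] at hv
    obtain ⟨ω₁, ω₂, hcon, rfl⟩ := hv
    rw [← hs2] at hcon
    have hs4 : s ^ 2 ≤ 1/4 := by rw [hs2]; exact hc4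
    have hf2 : (ρ*s*ω₁+ω₂)^2 ≤ (1+ρ^2)*(1+5*s^2)*s^2 :=
      aux_bound ρ s ω₁ ω₂ hρ0 hρ1 hs0 hs4 hcon
    clear hcon
    have hM : (0:ℝ) ≤ r*sx + 20*ε := by positivity
    have hrx : (r*sx)^2 = (1+ρ^2)*x := by rw [mul_pow, hr2, hsx2]
    have hf2' : (ρ*s*ω₁+ω₂)^2 ≤ (r*sx + 20*ε)^2 := by
      have hs2x : s^2 ≤ x := by rw [hs2]; exact hcx
      have hρ2 : ρ^2 ≤ 1 := by nlinarith [sq_nonneg (1-ρ), sq_nonneg (1+ρ)]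
      have e1 : (1+ρ^2)*(1+5*s^2)*s^2 ≤ (1+ρ^2)*x + 10*x^2 := by
        clear * - hs2x hρ2 hx0 hs0
        nlinarith [mul_le_mul_of_nonneg_left hs2x (by positivity : (0:ℝ) ≤ 1+ρ^2),
          mul_le_mul hs2x hs2x (sq_nonneg s) hx0.le, sq_nonneg s,
          mul_nonneg (mul_nonneg (sq_nonneg s) (sq_nonneg s)) (by linarith : (0:ℝ) ≤ 1-ρ^2)]
      have e2 : 10*x^2 ≤ 40*ε^2 := by
        clear * - hx2e hx0
        nlinarith [mul_nonneg hx0.le hx0.le]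
      have e3 : (ρ*s*ω₁+ω₂)^2 ≤ (1+ρ^2)*x + 40*ε^2 := by linarith
      have e4 : (0:ℝ) ≤ ε*(r*sx) := mul_nonneg hε0.le (mul_nonneg hr0.le hsx0.le)
      clear * - e3 e4 hrx
      nlinarith [e3, e4, hrx]
    have hfle : ρ*s*ω₁+ω₂ ≤ r*sx + 20*ε := by
      calc ρ*s*ω₁+ω₂ ≤ |ρ*s*ω₁+ω₂| := le_abs_self _
        _ = Real.sqrt ((ρ*s*ω₁+ω₂)^2) := (Real.sqrt_sq_eq_abs _).symm
        _ ≤ Real.sqrt ((r*sx + 20*ε)^2) := Real.sqrt_le_sqrt hf2'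
        _ = r*sx + 20*ε := Real.sqrt_sq hM
    linarith only [mul_le_mul_of_nonneg_left hfle (by positivity : (0:ℝ) ≤ 2*σ^2)]
  have hne : S.Nonempty := by
    refine ⟨2*σ^2, ?_⟩
    rw [hSd]
    refine ⟨0, 0, ?_, by ring⟩
    simpa using hc0.le
  have hbdd : BddBelow S := ⟨2 * σ ^ 2 - 2 * σ ^ 2 * (r * sx) - 40 * σ ^ 2 * ε, fun v hv => hlb v hv⟩
  have hlow : 2 * σ ^ 2 - 2 * σ ^ 2 * (r * sx) - 40 * σ ^ 2 * ε ≤ sInf S := le_csInf hne hlb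
  -- upper bound: explicit feasible point
  set t : ℝ := (1 - c) / r with htd
  clear_value t
  have ht0 : 0 ≤ t := by
    rw [htd]; exact div_nonneg (show (0:ℝ) ≤ 1 - c by linarith) hr0.le
  have ht2 : t ^ 2 * (1 + ρ ^ 2) = (1 - c) ^ 2 := by
    rw [htd, div_pow, hr2]
    field_simp
  have htle : t ^ 2 ≤ (1 - c) ^ 2 := by nlinarith [sq_nonneg t, sq_nonneg ρ]
  have hmem : 2*σ^2 - 2*σ^2*(s*(1-c)*r) ∈ S := by
    rw [hSd]
    refine ⟨ρ*t, s*t, ?_, ?_⟩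
    · -- feasibility
      have e1 : (s*t)^2*(1-ρ^2*(1-c)*c) = (c*t^2)*(1-ρ^2*(1-c)*c) := by
        linear_combination (t^2*(1-ρ^2*(1-c)*c)) * hs2
      have e2 : (1-(ρ*t)^2-2*(ρ*t)*(s*t)*ρ*s)*c = (1-ρ^2*t^2-2*ρ^2*c*t^2)*c := by
        linear_combination (-2*ρ^2*t^2*c) * hs2
      calc (s*t)^2*(1-ρ^2*(1-c)*c) = (c*t^2)*(1-ρ^2*(1-c)*c) := e1
        _ ≤ (1-ρ^2*t^2-2*ρ^2*c*t^2)*c :=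
            aux_feas ρ c t hc0 (by linarith) hρ0.le hρ1 ht2 htle
        _ = (1-(ρ*t)^2-2*(ρ*t)*(s*t)*ρ*s)*c := e2.symm
    · -- value
      have hval : t * (1 + ρ^2) = (1-c) * r := by
        rw [htd, ← hr2]; field_simp
      linear_combination (2*σ^2*s) * hval
  have hup : sInf S ≤ 2*σ^2 - 2*σ^2*(s*(1-c)*r) := csInf_le hbdd hmem
  -- sx - s(1-c) is small
  have hss : sx*(1-x) ≤ s := by
    have h1 : x*(1-x) ≤ c := by nlinarith [hcge]
    have h2 : Real.sqrt (x*(1-x)) ≤ s := by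
      rw [hsd]; exact Real.sqrt_le_sqrt h1
    have h3 : Real.sqrt (x*(1-x)) = sx * Real.sqrt (1-x) := by
      rw [hsxd]; exact Real.sqrt_mul hx0.le _
    have h4 : 1-x ≤ Real.sqrt (1-x) := by
      have hy2 : Real.sqrt (1-x) ^ 2 = 1-x := Real.sq_sqrt (by linarith)
      have hy0 : (0:ℝ) ≤ Real.sqrt (1-x) := Real.sqrt_nonneg _
      clear * - hy2 hy0 hx0 hx4
      have hy1 : Real.sqrt (1-x) ≤ 1 := by nlinarith [sq_nonneg (Real.sqrt (1-x) - 1)]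
      nlinarith [mul_nonneg hy0 (by linarith : (0:ℝ) ≤ 1 - Real.sqrt (1-x))]
    calc sx*(1-x) ≤ sx * Real.sqrt (1-x) := by
          apply mul_le_mul_of_nonneg_left h4 hsx0.le
      _ = Real.sqrt (x*(1-x)) := h3.symm
      _ ≤ s := h2
  have hkey : r*sx - s*(1-c)*r ≤ 20*ε := by
    have hd : sx - s*(1-c) ≤ 4*ε := by
      clear * - hss hsx1 hs1 hcx hx2e hc0 hx0
      nlinarith [hss, mul_nonneg (by linarith : (0:ℝ) ≤ 1 - sx) hx0.le,
        mul_nonneg (by linarith : (0:ℝ) ≤ 1 - s) hc0.le]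
    have hd2 := mul_le_mul_of_nonneg_left hd hr0.le
    clear * - hd2 hrle hε0 hr0
    nlinarith [hd2, mul_nonneg (by linarith : (0:ℝ) ≤ 2 - r) (by linarith : (0:ℝ) ≤ 4*ε)]
  rw [abs_le]
  constructor
  · rw [hsqmul]; linarith only [hlow]
  · rw [hsqmul]
    have : 2*σ^2 - 2*σ^2*(s*(1-c)*r) - 2*σ^2*(1 - r*sx) ≤ 40*σ^2*ε := by
      linarith only [mul_le_mul_of_nonneg_left hkey (by positivity : (0:ℝ) ≤ 2*σ^2)]
    linarith only [hup, this]
end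

section
/- Let σ > 0 and ρ ∈ (0, 1]. For ε > 0 set c := 1 − 2^{−2ε} and define V(ε) := inf { 2σ² − 2 ω₁ ρ σ² √c − 2 ω₂ σ² : (ω₁, ω₂) ∈ ℝ², ω₂² (1 − ρ² (1 − c) c) ≤ (1 − ω₁² − 2 ω₁ ω₂ ρ √c) · c, and ω₁ + √c · ρ · ω₂ = ρ }. Then there exist constants C > 0 and ε₀ > 0 such that for all ε ∈ (0, ε₀), |V(ε) − 2σ²(1 − (ρ² + √(1 − ρ²)) √(2 ε ln 2))| ≤ C ε. In particular for ρ = 1 the value satisfies V(ε) = 2σ²(1 − √(2 ε ln 2)) + O(ε), equal to the first-frame distortion — the permanence-of-error phenomenon of the joint-distribution perception loss. (V(ε) is the minimum second-frame distortion under zero joint-distribution perception loss at per-frame rate R₁ = R₂ = ε.) -/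
open MeasureTheory

set_option maxHeartbeats 1000000

private lemma aux_inf (σ ρ c r B : ℝ) (hσ : 0 < σ)
    (hr2 : r ^ 2 = c) (hD0' : (0:ℝ) < 1 - ρ ^ 2 * c) (hB0 : 0 ≤ B)
    (hBsq' : B ^ 2 * (1 - ρ ^ 2 * c) = c * (1 - ρ ^ 2)) :
    sInf { v : ℝ | ∃ ω₁ ω₂ : ℝ,
            ω₂ ^ 2 * (1 - ρ ^ 2 * (1 - c) * c) ≤
              (1 - ω₁ ^ 2 - 2 * ω₁ * ω₂ * ρ * r) * c ∧
            ω₁ + r * ρ * ω₂ = ρ ∧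
            v = 2 * σ ^ 2 - 2 * ω₁ * ρ * σ ^ 2 * r - 2 * ω₂ * σ ^ 2 }
      = 2 * σ ^ 2 - 2 * (ρ - r * ρ * B) * ρ * σ ^ 2 * r - 2 * B * σ ^ 2 := by
  have hmem : 2 * σ ^ 2 - 2 * (ρ - r * ρ * B) * ρ * σ ^ 2 * r - 2 * B * σ ^ 2 ∈
      { v : ℝ | ∃ ω₁ ω₂ : ℝ,
            ω₂ ^ 2 * (1 - ρ ^ 2 * (1 - c) * c) ≤
              (1 - ω₁ ^ 2 - 2 * ω₁ * ω₂ * ρ * r) * c ∧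
            ω₁ + r * ρ * ω₂ = ρ ∧
            v = 2 * σ ^ 2 - 2 * ω₁ * ρ * σ ^ 2 * r - 2 * ω₂ * σ ^ 2 } := by
    refine ⟨ρ - r * ρ * B, B, le_of_eq ?_, by ring, rfl⟩
    linear_combination hBsq' - (c * ρ ^ 2 * B ^ 2) * hr2
  have hlb : ∀ v ∈ { v : ℝ | ∃ ω₁ ω₂ : ℝ,
            ω₂ ^ 2 * (1 - ρ ^ 2 * (1 - c) * c) ≤
              (1 - ω₁ ^ 2 - 2 * ω₁ * ω₂ * ρ * r) * c ∧
            ω₁ + r * ρ * ω₂ = ρ ∧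
            v = 2 * σ ^ 2 - 2 * ω₁ * ρ * σ ^ 2 * r - 2 * ω₂ * σ ^ 2 },
      2 * σ ^ 2 - 2 * (ρ - r * ρ * B) * ρ * σ ^ 2 * r - 2 * B * σ ^ 2 ≤ v := by
    rintro v ⟨ω₁, ω₂, hineq, heq, hv⟩
    have hω₁ : ω₁ = ρ - r * ρ * ω₂ := by linarith
    subst hω₁
    have key : (1 - (ρ - r * ρ * ω₂) ^ 2 - 2 * (ρ - r * ρ * ω₂) * ω₂ * ρ * r) * c
        - ω₂ ^ 2 * (1 - ρ ^ 2 * (1 - c) * c)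
        = c * (1 - ρ ^ 2) - ω₂ ^ 2 * (1 - ρ ^ 2 * c) := by
      linear_combination (c * ρ ^ 2 * ω₂ ^ 2) * hr2
    have h2 : ω₂ ^ 2 * (1 - ρ ^ 2 * c) ≤ B ^ 2 * (1 - ρ ^ 2 * c) := by
      rw [hBsq']; linarith
    have h2' : ω₂ ^ 2 ≤ B ^ 2 := le_of_mul_le_mul_right h2 hD0'
    have h3 : ω₂ ≤ B := by
      have h := Real.sqrt_le_sqrt h2'
      rw [Real.sqrt_sq_eq_abs, Real.sqrt_sq hB0] at h
      exact le_trans (le_abs_self ω₂) h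
    have h4 : v - (2 * σ ^ 2 - 2 * (ρ - r * ρ * B) * ρ * σ ^ 2 * r - 2 * B * σ ^ 2)
        = 2 * σ ^ 2 * (B - ω₂) * (1 - ρ ^ 2 * c) := by
      rw [hv]; linear_combination (2 * ρ ^ 2 * σ ^ 2 * (ω₂ - B)) * hr2
    have h5 : 0 ≤ (2 * σ ^ 2 * (B - ω₂)) * (1 - ρ ^ 2 * c) :=
      mul_nonneg (mul_nonneg (by positivity) (by linarith)) hD0'.le
    linarith [h4, h5]
  exact le_antisymm (csInf_le ⟨_, hlb⟩ hmem) (le_csInf ⟨_, hmem⟩ hlb)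

private lemma aux_bound_s10 (σ ρ ε q st r sD : ℝ) (hσ : 0 < σ)
    (hρsq : ρ ^ 2 ≤ 1) (hq0 : 0 ≤ q) (hq1 : q ≤ 1)
    (h1 : 0 ≤ st - r) (h2 : st - r ≤ 2 * ε)
    (h3 : 0 ≤ st - r * sD) (h4 : st - r * sD ≤ 4 * ε) :
    |(2 * σ ^ 2 - 2 * ρ ^ 2 * σ ^ 2 * r - 2 * σ ^ 2 * (r * q * sD))
      - 2 * σ ^ 2 * (1 - (ρ ^ 2 + q) * st)| ≤ 12 * σ ^ 2 * ε := by
  have hnn : 0 ≤ 2 * σ ^ 2 * (ρ ^ 2 * (st - r) + q * (st - r * sD)) :=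
    mul_nonneg (by positivity)
      (add_nonneg (mul_nonneg (sq_nonneg ρ) h1) (mul_nonneg hq0 h3))
  rw [abs_of_nonneg (by linarith [hnn])]
  have e1 : ρ ^ 2 * (st - r) ≤ st - r := mul_le_of_le_one_left h1 hρsq
  have e2 : q * (st - r * sD) ≤ st - r * sD := mul_le_of_le_one_left h3 hq1
  have h11 : ρ ^ 2 * (st - r) + q * (st - r * sD) ≤ 6 * ε := by linarith
  have h12 : 2 * σ ^ 2 * (ρ ^ 2 * (st - r) + q * (st - r * sD)) ≤ 2 * σ ^ 2 * (6 * ε) :=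
    mul_le_mul_of_nonneg_left h11 (by positivity)
  linarith [h12]

/-- Low-rate asymptotics of the minimum second-frame distortion under zero
joint-distribution perception loss (0-PLF-JD) for the symmetric two-frame Gauss–Markov
source at per-frame rate `R₁ = R₂ = ε`: with `c := 1 − 2^{−2ε}` and the additional
cross-correlation constraint `ω₁ + √c·ρ·ω₂ = ρ`, the optimal value `V(ε)` satisfies
`V(ε) = 2σ²(1 − (ρ² + √(1 − ρ²))·√(2ε·ln 2)) + O(ε)`; for `ρ = 1` this equals the
first-frame distortion (permanence of error). -/
theorem statement10 (σ ρ : ℝ) (hσ : 0 < σ) (hρ : ρ ∈ Set.Ioc (0 : ℝ) 1) :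
    ∃ C : ℝ, 0 < C ∧ ∃ ε₀ : ℝ, 0 < ε₀ ∧ ∀ ε ∈ Set.Ioo (0 : ℝ) ε₀,
      |sInf { v : ℝ | ∃ ω₁ ω₂ : ℝ,
            ω₂ ^ 2 * (1 - ρ ^ 2 * (1 - cRate ε) * cRate ε) ≤
              (1 - ω₁ ^ 2 - 2 * ω₁ * ω₂ * ρ * Real.sqrt (cRate ε)) * cRate ε ∧
            ω₁ + Real.sqrt (cRate ε) * ρ * ω₂ = ρ ∧
            v = 2 * σ ^ 2 - 2 * ω₁ * ρ * σ ^ 2 * Real.sqrt (cRate ε) - 2 * ω₂ * σ ^ 2 }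
          - 2 * σ ^ 2 * (1 - (ρ ^ 2 + Real.sqrt (1 - ρ ^ 2)) * Real.sqrt (2 * ε * Real.log 2))|
        ≤ C * ε := by
  obtain ⟨hρ0, hρ1⟩ := hρ
  refine ⟨12 * σ ^ 2, by positivity, 1/2, by norm_num, ?_⟩
  rintro ε ⟨hε0, hε1⟩
  have hlog2 : 0 < Real.log 2 := Real.log_pos (by norm_num)
  have hlog2' : Real.log 2 < 1 := by have := Real.log_two_lt_d9; linarith
  set t : ℝ := 2 * ε * Real.log 2 with htdef
  have ht0 : 0 < t := by positivity
  have ht2ε : t ≤ 2 * ε := by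
    have h := mul_nonneg hε0.le (by linarith : (0:ℝ) ≤ 1 - Real.log 2)
    rw [htdef]; nlinarith
  have ht1 : t < 1 := by linarith
  have hc_def : cRate ε = 1 - Real.exp (-t) := by
    unfold cRate
    rw [Real.rpow_def_of_pos (by norm_num : (0:ℝ) < 2)]
    ring_nf
    rw [htdef]; ring_nf
  set c : ℝ := cRate ε with hcdef
  have hc0 : 0 < c := by
    rw [hc_def]
    have : Real.exp (-t) < 1 := by rw [Real.exp_lt_one_iff]; linarith
    linarith
  have hct : c ≤ t := by
    have := Real.add_one_le_exp (-t); rw [hc_def]; linarith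
  have htc : t - c ≤ t ^ 2 := by
    have h1 : t + 1 ≤ Real.exp t := Real.add_one_le_exp t
    have h2 : Real.exp (-t) = (Real.exp t)⁻¹ := Real.exp_neg t
    have h3 : (Real.exp t)⁻¹ ≤ (1 + t)⁻¹ := by
      apply inv_anti₀ (by linarith) (by linarith)
    have h4 : (1 + t)⁻¹ ≤ 1 - t + t ^ 2 := by
      rw [inv_le_iff_one_le_mul₀ (by linarith)]; nlinarith
    rw [hc_def]; linarith
  have hc1 : c < 1 := lt_of_le_of_lt hct ht1
  have hρsq : ρ ^ 2 ≤ 1 := by nlinarith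
  have hρsq' : (0:ℝ) ≤ 1 - ρ ^ 2 := by linarith
  set r : ℝ := Real.sqrt c with hrdef
  obtain ⟨q, hqdef⟩ : ∃ q : ℝ, q = Real.sqrt (1 - ρ ^ 2) := ⟨_, rfl⟩
  obtain ⟨st, hstdef⟩ : ∃ st : ℝ, st = Real.sqrt t := ⟨_, rfl⟩
  obtain ⟨D, hDdef⟩ : ∃ D : ℝ, D = 1 - ρ ^ 2 * c := ⟨_, rfl⟩
  have hD0 : 0 < D := by rw [hDdef]; nlinarith
  have hD1 : D ≤ 1 := by rw [hDdef]; nlinarith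
  have hr2 : r ^ 2 = c := Real.sq_sqrt hc0.le
  have hr0 : 0 ≤ r := Real.sqrt_nonneg c
  have hq0 : 0 ≤ q := hqdef ▸ Real.sqrt_nonneg _
  have hq1 : q ≤ 1 := by rw [hqdef]; exact Real.sqrt_le_one.mpr (by nlinarith [sq_nonneg ρ])
  have hst0 : 0 < st := by rw [hstdef]; exact Real.sqrt_pos.mpr ht0
  have hst1 : st ≤ 1 := by rw [hstdef]; exact Real.sqrt_le_one.mpr ht1.le
  have hst2 : st ^ 2 = t := by rw [hstdef]; exact Real.sq_sqrt ht0.le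
  obtain ⟨sD, hsDdef⟩ : ∃ sD : ℝ, sD = Real.sqrt D := ⟨_, rfl⟩
  have hsD1 : sD ≤ 1 := by rw [hsDdef]; exact Real.sqrt_le_one.mpr hD1
  have hsD0 : 0 ≤ sD := hsDdef ▸ Real.sqrt_nonneg _
  have hsD2 : sD ^ 2 = D := by rw [hsDdef]; exact Real.sq_sqrt hD0.le
  -- scalar asymptotic bounds
  have hrst : r ≤ st := by rw [hstdef, hrdef]; exact Real.sqrt_le_sqrt hct
  have hsr0 : 0 ≤ st - r := by linarith
  have hstr : st - r ≤ 2 * ε := by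
    have key : st ^ 2 - r ^ 2 = t - c := by rw [hst2, hr2]
    have hp : 0 ≤ (st - r) * r := mul_nonneg hsr0 hr0
    have h5 : (st - r) * st ≤ t ^ 2 := by nlinarith [key, htc, hp]
    have h6 : t ≤ st := by nlinarith [hst2, mul_nonneg hst0.le (by linarith : (0:ℝ) ≤ 1 - st)]
    have h7 : t ^ 2 ≤ t * st := by nlinarith [mul_le_mul_of_nonneg_left h6 ht0.le]
    have h8 : st - r ≤ t := le_of_mul_le_mul_right (by nlinarith [h5, h7]) hst0
    linarith
  have hDsD : D ≤ sD := by
    nlinarith [hsD2, mul_nonneg hsD0 (by linarith : (0:ℝ) ≤ 1 - sD)]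
  have hsDlow : 1 - sD ≤ 2 * ε := by
    have h9 : 1 - D ≤ 2 * ε := by
      rw [hDdef]
      have h10 : 0 ≤ c * (1 - ρ ^ 2) := mul_nonneg hc0.le hρsq'
      nlinarith [h10]
    linarith
  have hr1 : r ≤ 1 := le_trans hrst hst1
  have hbr2 : 0 ≤ st - r * sD := by
    have : r * sD ≤ st * 1 := mul_le_mul hrst hsD1 hsD0 hst0.le
    linarith
  have hb1 : st - r * sD ≤ 4 * ε := by
    have h10 : r * (1 - sD) ≤ 1 * (1 - sD) :=
      mul_le_mul_of_nonneg_right hr1 (by linarith)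
    nlinarith [h10, hstr, hsDlow]
  -- B and the infimum
  obtain ⟨B, hBdef⟩ : ∃ B : ℝ, B = Real.sqrt (c * (1 - ρ ^ 2) * D) / D := ⟨_, rfl⟩
  have hB0 : 0 ≤ B := by rw [hBdef]; exact div_nonneg (Real.sqrt_nonneg _) hD0.le
  have hX0 : 0 ≤ c * (1 - ρ ^ 2) * D := mul_nonneg (mul_nonneg hc0.le hρsq') hD0.le
  have hBsq : B ^ 2 * D = c * (1 - ρ ^ 2) := by
    rw [hBdef, div_pow, Real.sq_sqrt hX0]
    field_simp
  have hBD : B * D = r * q * sD := by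
    rw [hBdef, div_mul_cancel₀ _ hD0.ne', hrdef, hqdef, hsDdef,
      show c * (1 - ρ ^ 2) * D = c * ((1 - ρ ^ 2) * D) by ring,
      Real.sqrt_mul hc0.le, Real.sqrt_mul hρsq']
    ring
  have hBsq' : B ^ 2 * (1 - ρ ^ 2 * c) = c * (1 - ρ ^ 2) := by rw [← hDdef]; exact hBsq
  have hD0' : (0:ℝ) < 1 - ρ ^ 2 * c := by rw [← hDdef]; exact hD0
  rw [← hqdef, ← hstdef, aux_inf σ ρ c r B hσ hr2 hD0' hB0 hBsq']
  have hexpr : 2 * σ ^ 2 - 2 * (ρ - r * ρ * B) * ρ * σ ^ 2 * r - 2 * B * σ ^ 2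
      = 2 * σ ^ 2 - 2 * ρ ^ 2 * σ ^ 2 * r - 2 * σ ^ 2 * (r * q * sD) := by
    have hbd : B * (1 - ρ ^ 2 * c) = r * q * sD := by rw [← hDdef]; exact hBD
    linear_combination (-2 * σ ^ 2) * hbd + (2 * σ ^ 2 * ρ ^ 2 * B) * hr2
  rw [hexpr]
  exact aux_bound_s10 σ ρ ε q st r sD hσ hρsq hq0 hq1 hsr0 hstr hbr2 hb1
end

section
/- Let σ > 0 and ρ ∈ (0, 1]. For ε > 0 set c := 1 − 2^{−2ε} and define V(ε) := inf { 2σ² − 2 ω₁ ρ σ² − 2 ω₂ σ² : (ω₁, ω₂) ∈ ℝ², ω₂² (1 − ρ² (1 − c)) ≤ (1 − ω₁² − 2 ω₁ ω₂ ρ) · c }. Then there exist constants C > 0 and ε₀ > 0 such that for all ε ∈ (0, ε₀), |V(ε) − (2(1 − ρ)σ² − ((1 − ρ²)/ρ) · (2 ln 2) · ε · σ²)| ≤ C ε². (V(ε) is the minimum second-frame distortion under zero framewise-marginal perception loss when the first frame is available losslessly, R₁ = ∞, and the second frame is compressed at low rate R₂ = ε; the optimal reconstruction essentially copies the first frame.)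 -/
open MeasureTheory

set_option maxHeartbeats 1000000 in
/-- Asymptotics of the minimum second-frame distortion under zero framewise-marginal
perception loss (0-PLF-FMD) when the first frame is available losslessly (`R₁ = ∞`) and
the second frame is compressed at low rate `R₂ = ε`: with `c := 1 − 2^{−2ε}`, the optimal
value `V(ε)` of the displayed program satisfies
`V(ε) = 2(1 − ρ)σ² − ((1 − ρ²)/ρ)·(2 ln 2)·ε·σ² + O(ε²)`. -/
theorem statement11 (σ ρ : ℝ) (hσ : 0 < σ) (hρ : ρ ∈ Set.Ioc (0 : ℝ) 1) :
    ∃ C : ℝ, 0 < C ∧ ∃ ε₀ : ℝ, 0 < ε₀ ∧ ∀ ε ∈ Set.Ioo (0 : ℝ) ε₀,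
      |sInf { v : ℝ | ∃ ω₁ ω₂ : ℝ,
            ω₂ ^ 2 * (1 - ρ ^ 2 * (1 - cRate ε)) ≤
              (1 - ω₁ ^ 2 - 2 * ω₁ * ω₂ * ρ) * cRate ε ∧
            v = 2 * σ ^ 2 - 2 * ω₁ * ρ * σ ^ 2 - 2 * ω₂ * σ ^ 2 }
          - (2 * (1 - ρ) * σ ^ 2 - ((1 - ρ ^ 2) / ρ) * (2 * Real.log 2) * ε * σ ^ 2)|
        ≤ C * ε ^ 2 := by
  obtain ⟨hρ0, hρ1⟩ := hρ
  have hρ3 : (0:ℝ) < ρ ^ 3 := by positivity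
  refine ⟨32 * σ ^ 2 / ρ ^ 3, by positivity, 1/2, by norm_num, ?_⟩
  rintro ε ⟨hε0, hε1⟩
  have hlog0 : 0 < Real.log 2 := Real.log_pos (by norm_num)
  have hlog1 : Real.log 2 < 0.6931471808 := Real.log_two_lt_d9
  set c : ℝ := cRate ε with hcdef
  have hcexp : c = 1 - Real.exp (Real.log 2 * (-(2 * ε))) := by
    rw [hcdef, cRate, Real.rpow_def_of_pos (by norm_num)]
  have hx1 : |Real.log 2 * (-(2 * ε))| ≤ 1 := by
    rw [abs_of_nonpos (by nlinarith)]; nlinarith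
  have hxb := Real.abs_exp_sub_one_sub_id_le hx1
  have hct : |c - 2 * Real.log 2 * ε| ≤ 4 * ε ^ 2 := by
    have h : c - 2 * Real.log 2 * ε
        = -(Real.exp (Real.log 2 * (-(2 * ε))) - 1 - Real.log 2 * (-(2 * ε))) := by
      rw [hcexp]; ring
    rw [h, abs_neg]
    calc |Real.exp (Real.log 2 * (-(2 * ε))) - 1 - Real.log 2 * (-(2 * ε))|
        ≤ (Real.log 2 * (-(2 * ε))) ^ 2 := hxb
      _ ≤ 4 * ε ^ 2 := by
          have hl2 : Real.log 2 ^ 2 ≤ 1 := by nlinarith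
          nlinarith [mul_le_mul_of_nonneg_left hl2 (show (0:ℝ) ≤ 4 * ε ^ 2 by positivity)]
  obtain ⟨hct1, hct2⟩ := abs_le.mp hct
  have hc0 : 0 < c := by
    rw [hcexp]
    have : Real.exp (Real.log 2 * (-(2 * ε))) < 1 := by
      rw [Real.exp_lt_one_iff]; nlinarith
    linarith
  have hc1 : c < 1 := by
    rw [hcexp]; have := Real.exp_pos (Real.log 2 * (-(2 * ε))); linarith
  have hc4 : c ≤ 4 * ε := by nlinarith
  clear_value c
  -- the optimum value
  set K : ℝ := ρ ^ 2 + c * (1 - ρ ^ 2) with hKdef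
  have hKρ : ρ ^ 2 ≤ K := by
    rw [hKdef]
    nlinarith [mul_nonneg hc0.le (show (0:ℝ) ≤ 1 - ρ ^ 2 by nlinarith)]
  have hK0 : 0 < K := by nlinarith [pow_pos hρ0 2]
  clear_value K
  set s : ℝ := Real.sqrt K with hsdef
  have hs2 : s ^ 2 = K := Real.sq_sqrt hK0.le
  have hs2' : s ^ 2 = ρ ^ 2 + c * (1 - ρ ^ 2) := by rw [hs2, hKdef]
  have hs0 : 0 < s := Real.sqrt_pos.mpr hK0
  clear_value s
  have hsρ : ρ ≤ s := by nlinarith [hs2, hs0, hKρ]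
  set S : Set ℝ := { v : ℝ | ∃ ω₁ ω₂ : ℝ,
      ω₂ ^ 2 * (1 - ρ ^ 2 * (1 - c)) ≤ (1 - ω₁ ^ 2 - 2 * ω₁ * ω₂ * ρ) * c ∧
      v = 2 * σ ^ 2 - 2 * ω₁ * ρ * σ ^ 2 - 2 * ω₂ * σ ^ 2 } with hSdef
  clear_value S
  have hlb : ∀ v ∈ S, 2 * σ ^ 2 - 2 * σ ^ 2 * s ≤ v := by
    intro v hv
    rw [hSdef] at hv
    obtain ⟨ω₁, ω₂, hcon, rfl⟩ := hv
    have hQ : 0 ≤ (1 - ω₁ ^ 2 - 2 * ω₁ * ω₂ * ρ) * c - ω₂ ^ 2 * (1 - ρ ^ 2 * (1 - c)) :=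
      sub_nonneg.mpr hcon
    have hkey : (ρ * ω₁ + ω₂) ^ 2 ≤ K := by
      rw [hKdef]
      nlinarith [mul_nonneg (show (0:ℝ) ≤ ρ ^ 2 + c * (1 - ρ ^ 2) by rw [← hKdef]; exact hK0.le) hQ,
        mul_nonneg (show (0:ℝ) ≤ 1 - ρ ^ 2 by nlinarith)
          (sq_nonneg (c * ω₁ - ρ * (1 - c) * ω₂)), hc0]
    have h2 : ρ * ω₁ + ω₂ ≤ s := by nlinarith [hs2, hs0]
    nlinarith [mul_nonneg (sq_nonneg σ) (sub_nonneg.mpr h2)]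
  have hmem : 2 * σ ^ 2 - 2 * σ ^ 2 * s ∈ S := by
    rw [hSdef]
    refine ⟨ρ * (1 - c) / s, c / s, le_of_eq ?_, ?_⟩
    · field_simp
      linear_combination (-1) * hs2'
    · field_simp
      linear_combination (-1) * hs2'
  have hInf : sInf S = 2 * σ ^ 2 - 2 * σ ^ 2 * s :=
    le_antisymm (csInf_le ⟨2 * σ ^ 2 - 2 * σ ^ 2 * s, hlb⟩ hmem)
      (le_csInf ⟨_, hmem⟩ hlb)
  rw [hInf]
  clear hlb hmem hInf hSdef hxb hx1 hcexp hcdef hsdef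
  clear S
  -- asymptotic bounds
  have h1' : 2 * ρ * s ≤ 2 * ρ ^ 2 + c * (1 - ρ ^ 2) := by
    nlinarith [hs2', hs0, sq_nonneg (c * (1 - ρ ^ 2)), hsρ]
  have h2' : 4 * ρ ^ 2 * (2 * ρ ^ 2 + c * (1 - ρ ^ 2) - 2 * ρ * s) ≤ c ^ 2 := by
    nlinarith [hs2', hsρ, sq_nonneg (c * ρ),
      mul_nonneg (sub_nonneg.mpr h1')
        (show (0:ℝ) ≤ c * (1 - ρ ^ 2) + 2 * ρ * (s - ρ) by nlinarith),
      mul_nonneg (sq_nonneg (c * ρ)) (show (0:ℝ) ≤ 2 - ρ ^ 2 by nlinarith)]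
  set G : ℝ := 2 * σ ^ 2 - 2 * σ ^ 2 * s
      - (2 * (1 - ρ) * σ ^ 2 - (1 - ρ ^ 2) / ρ * (2 * Real.log 2) * ε * σ ^ 2) with hGdef
  have hGeq : ρ * G = σ ^ 2 * ((2 * ρ ^ 2 + c * (1 - ρ ^ 2) - 2 * ρ * s)
      + (1 - ρ ^ 2) * (2 * Real.log 2 * ε - c)) := by
    rw [hGdef]; field_simp; ring
  clear_value G
  clear hGdef hct
  have hρsq : (0:ℝ) ≤ 1 - ρ ^ 2 := by nlinarith
  have hx4 : 2 * Real.log 2 * ε - c ≤ 4 * ε ^ 2 := by linarith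
  have hx5 : -(4 * ε ^ 2) ≤ 2 * Real.log 2 * ε - c := by linarith
  have hw1 : (1 - ρ ^ 2) * (2 * Real.log 2 * ε - c) ≤ 4 * ε ^ 2 := by
    linarith [mul_nonneg hρsq (sub_nonneg.mpr hx4), sq_nonneg (ρ * ε)]
  have hw2 : -(4 * ε ^ 2) ≤ (1 - ρ ^ 2) * (2 * Real.log 2 * ε - c) := by
    linarith [mul_nonneg hρsq (sub_nonneg.mpr hx5), sq_nonneg (ρ * ε)]
  have hsplit : 4 * ρ ^ 3 * G = 4 * ρ ^ 2 * (ρ * G) := by ring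
  have hσ2 : (0:ℝ) < σ ^ 2 := by positivity
  have hcc : c ^ 2 ≤ 16 * ε ^ 2 := by nlinarith [hc0, hc4, hε0]
  have hA : 4 * ρ ^ 2 * σ ^ 2 * (2 * ρ ^ 2 + c * (1 - ρ ^ 2) - 2 * ρ * s) ≤ 16 * σ ^ 2 * ε ^ 2 := by
    linarith [mul_le_mul_of_nonneg_left h2' hσ2.le,
      mul_nonneg hσ2.le (sub_nonneg.mpr hcc)]
  have hA' : 0 ≤ 4 * ρ ^ 2 * σ ^ 2 * (2 * ρ ^ 2 + c * (1 - ρ ^ 2) - 2 * ρ * s) := by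
    linarith [mul_nonneg (mul_nonneg (show (0:ℝ) ≤ 4 * ρ ^ 2 by positivity) hσ2.le)
      (sub_nonneg.mpr h1')]
  have hB : 4 * ρ ^ 2 * σ ^ 2 * ((1 - ρ ^ 2) * (2 * Real.log 2 * ε - c)) ≤ 16 * σ ^ 2 * ε ^ 2 := by
    linarith [mul_nonneg (mul_nonneg (sq_nonneg ρ) hσ2.le) (sub_nonneg.mpr hw1),
      mul_nonneg (mul_nonneg hρsq hσ2.le) (sq_nonneg ε)]
  have hB' : -(16 * σ ^ 2 * ε ^ 2) ≤ 4 * ρ ^ 2 * σ ^ 2 * ((1 - ρ ^ 2) * (2 * Real.log 2 * ε - c)) := by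
    linarith [mul_nonneg (mul_nonneg (sq_nonneg ρ) hσ2.le) (sub_nonneg.mpr hw2),
      mul_nonneg (mul_nonneg hρsq hσ2.le) (sq_nonneg ε)]
  have hup : 4 * ρ ^ 3 * G ≤ 32 * σ ^ 2 * ε ^ 2 := by
    rw [hsplit, hGeq]; linarith [hA, hB]
  have hlo : -(32 * σ ^ 2 * ε ^ 2) ≤ 4 * ρ ^ 3 * G := by
    rw [hsplit, hGeq]; linarith [hA', hB']
  have hgoal : |G| * ρ ^ 3 ≤ 32 * σ ^ 2 * ε ^ 2 := by
    rw [← abs_of_pos hρ3, ← abs_mul, abs_le]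
    constructor <;> linarith [hup, hlo, mul_nonneg hσ2.le (sq_nonneg ε)]
  calc |G| = |G| * ρ ^ 3 / ρ ^ 3 := by field_simp
    _ ≤ 32 * σ ^ 2 * ε ^ 2 / ρ ^ 3 := by
        gcongr
    _ = 32 * σ ^ 2 / ρ ^ 3 * ε ^ 2 := by ring
end

section
/- Let σ > 0 and ρ ∈ (0, 1). For ε > 0 set c := 1 − 2^{−2ε} and define V(ε) := inf { 2σ² − 2 ω₁ ρ σ² − 2 ω₂ σ² : (ω₁, ω₂) ∈ ℝ², ω₂² (1 − ρ² (1 − c)) ≤ (1 − ω₁² − 2 ω₁ ω₂ ρ) · c, and ω₁ + ρ ω₂ = ρ }. Then there exist constants C > 0 and ε₀ > 0 such that for all ε ∈ (0, ε₀), |V(ε) − 2σ²(1 − ρ²)(1 − √(2 ε ln 2))| ≤ C ε. (V(ε) is the minimum second-frame distortion under zero joint-distribution perception loss when the first frame is available losslessly, R₁ = ∞, and the second frame is compressed at low rate R₂ = ε; the joint-distribution constraint prevents the decoder from simply copying the first frame.) -/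
set_option maxHeartbeats 1000000


open MeasureTheory

/-- Asymptotics of the minimum second-frame distortion under zero joint-distribution
perception loss (0-PLF-JD) when the first frame is available losslessly (`R₁ = ∞`) and
the second frame is compressed at low rate `R₂ = ε`: with `c := 1 − 2^{−2ε}` and the
cross-correlation constraint `ω₁ + ρω₂ = ρ`, the optimal value `V(ε)` satisfies
`V(ε) = 2σ²(1 − ρ²)(1 − √(2ε·ln 2)) + O(ε)`. -/
theorem statement12 (σ ρ : ℝ) (hσ : 0 < σ) (hρ : ρ ∈ Set.Ioo (0 : ℝ) 1) :
    ∃ C : ℝ, 0 < C ∧ ∃ ε₀ : ℝ, 0 < ε₀ ∧ ∀ ε ∈ Set.Ioo (0 : ℝ) ε₀,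
      |sInf { v : ℝ | ∃ ω₁ ω₂ : ℝ,
            ω₂ ^ 2 * (1 - ρ ^ 2 * (1 - cRate ε)) ≤
              (1 - ω₁ ^ 2 - 2 * ω₁ * ω₂ * ρ) * cRate ε ∧
            ω₁ + ρ * ω₂ = ρ ∧
            v = 2 * σ ^ 2 - 2 * ω₁ * ρ * σ ^ 2 - 2 * ω₂ * σ ^ 2 }
          - 2 * σ ^ 2 * (1 - ρ ^ 2) * (1 - Real.sqrt (2 * ε * Real.log 2))|
        ≤ C * ε := by
  obtain ⟨hρ0, hρ1⟩ := hρ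
  have hlog2 : 0 < Real.log 2 := Real.log_pos (by norm_num)
  have h1ρ : 0 < 1 - ρ ^ 2 := by nlinarith
  have hA : 0 < 2 * σ ^ 2 * (1 - ρ ^ 2) := by positivity
  refine ⟨4 * σ ^ 2 * Real.log 2, by positivity, 1, one_pos, ?_⟩
  rintro ε ⟨hε0, hε1⟩
  set t : ℝ := 2 * ε * Real.log 2 with ht
  have ht0 : 0 < t := by positivity
  clear_value t
  set c : ℝ := cRate ε with hcdef
  clear_value c
  have hcexp : c = 1 - Real.exp (-t) := by
    rw [hcdef, cRate, Real.rpow_def_of_pos (by norm_num : (0:ℝ) < 2), ht,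
      show Real.log 2 * -(2 * ε) = -(2 * ε * Real.log 2) by ring]
  have hc_le_t : c ≤ t := by
    have := Real.add_one_le_exp (-t)
    rw [hcexp]; linarith
  have hc0 : 0 ≤ c := by
    rw [hcexp]
    have h : Real.exp (-t) ≤ Real.exp 0 := Real.exp_le_exp.mpr (by linarith)
    rw [Real.exp_zero] at h
    linarith
  have hc_ge : t - t ^ 2 ≤ c := by
    rw [hcexp]
    have hprod : Real.exp (-t) * Real.exp t = 1 := by
      rw [← Real.exp_add]; simp
    have h1 : 1 + t ≤ Real.exp t := by linarith [Real.add_one_le_exp t]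
    have h2 : Real.exp (-t) * (1 + t) ≤ 1 := by
      calc Real.exp (-t) * (1 + t) ≤ Real.exp (-t) * Real.exp t :=
            mul_le_mul_of_nonneg_left h1 (Real.exp_pos (-t)).le
        _ = 1 := hprod
    nlinarith [Real.exp_pos (-t), pow_pos ht0 3, sq_nonneg t]
  set s : ℝ := Real.sqrt c with hs
  have hssq : s ^ 2 = c := Real.sq_sqrt hc0
  clear_value s
  have hs0 : 0 ≤ s := by rw [hs]; exact Real.sqrt_nonneg c
  set m : ℝ := 2 * σ ^ 2 * (1 - ρ ^ 2) * (1 - s) with hm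
  clear_value m
  set S : Set ℝ := { v : ℝ | ∃ ω₁ ω₂ : ℝ,
      ω₂ ^ 2 * (1 - ρ ^ 2 * (1 - c)) ≤ (1 - ω₁ ^ 2 - 2 * ω₁ * ω₂ * ρ) * c ∧
      ω₁ + ρ * ω₂ = ρ ∧
      v = 2 * σ ^ 2 - 2 * ω₁ * ρ * σ ^ 2 - 2 * ω₂ * σ ^ 2 } with hS
  have hmem : m ∈ S := by
    refine ⟨ρ * (1 - s), s, ?_, by ring, by rw [hm]; ring⟩
    have heq : s ^ 2 * (1 - ρ ^ 2 * (1 - c)) =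
        (1 - (ρ * (1 - s)) ^ 2 - 2 * (ρ * (1 - s)) * s * ρ) * c := by
      linear_combination (1 - ρ ^ 2) * hssq
    exact heq.le
  have hlb : ∀ v ∈ S, m ≤ v := by
    rintro v ⟨ω₁, ω₂, hcon, hlin, hv⟩
    have hω1 : ω₁ = ρ - ρ * ω₂ := by linarith
    subst hω1 hv
    have h1 : (1 - ρ ^ 2) * ω₂ ^ 2 ≤ (1 - ρ ^ 2) * c := by nlinarith [hcon]
    have hω2sq : ω₂ ^ 2 ≤ c := (mul_le_mul_iff_right₀ h1ρ).mp h1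
    have hω2 : ω₂ ≤ s := by
      calc ω₂ ≤ |ω₂| := le_abs_self _
        _ = Real.sqrt (ω₂ ^ 2) := (Real.sqrt_sq_eq_abs ω₂).symm
        _ ≤ s := by rw [hs]; exact Real.sqrt_le_sqrt hω2sq
    rw [hm]; nlinarith [hω2, hA]
  have hinf : sInf S = m :=
    le_antisymm (csInf_le ⟨m, fun v hv => hlb v hv⟩ hmem) (le_csInf ⟨m, hmem⟩ hlb)
  clear_value S
  rw [hinf]
  clear hS hinf hmem hlb
  set u : ℝ := Real.sqrt t with hu
  have husq : u ^ 2 = t := Real.sq_sqrt ht0.le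
  have hsu : s ≤ u := by rw [hs, hu]; exact Real.sqrt_le_sqrt hc_le_t
  have hu0 : 0 ≤ u := by rw [hu]; exact Real.sqrt_nonneg t
  clear_value u
  have hdiff : u - s ≤ t := by
    have h1 : u ≤ s + Real.sqrt (t - c) := by
      rw [hu]
      apply Real.sqrt_le_iff.mpr
      refine ⟨by have := Real.sqrt_nonneg (t - c); linarith, ?_⟩
      nlinarith [Real.sq_sqrt (by linarith : (0:ℝ) ≤ t - c), Real.sqrt_nonneg (t - c),
        hs0, hssq]
    have h2 : Real.sqrt (t - c) ≤ t := by
      calc Real.sqrt (t - c) ≤ Real.sqrt (t ^ 2) := Real.sqrt_le_sqrt (by nlinarith)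
        _ = t := Real.sqrt_sq ht0.le
    linarith
  have hnn : 0 ≤ m - 2 * σ ^ 2 * (1 - ρ ^ 2) * (1 - u) := by
    rw [hm]; nlinarith [hsu, hA]
  rw [abs_of_nonneg hnn, hm]
  have hbound : 2 * σ ^ 2 * (1 - ρ ^ 2) * (u - s) ≤ 2 * σ ^ 2 * t := by
    have h1 : 0 ≤ u - s := by linarith
    have h2 : 2 * σ ^ 2 * (1 - ρ ^ 2) ≤ 2 * σ ^ 2 := by nlinarith [sq_nonneg ρ, sq_nonneg σ]
    nlinarith [hdiff, h1, hA]
  calc 2 * σ ^ 2 * (1 - ρ ^ 2) * (1 - s) - 2 * σ ^ 2 * (1 - ρ ^ 2) * (1 - u)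
      = 2 * σ ^ 2 * (1 - ρ ^ 2) * (u - s) := by ring
    _ ≤ 2 * σ ^ 2 * t := hbound
    _ = 4 * σ ^ 2 * Real.log 2 * ε := by rw [ht]; ring
end
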